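/- arXiv:2006.11898 — 10 statements merged into one kernel-verified Lean document; each statement's English description precedes it below -/
import Mathlib

section
/- A subset S of BS(1,q) is recognizable if and only if there exists an integer k ≥ 1 such that S is k-periodic: for every integer q ≥ 2 and every subset S of GL (Fin 2) ℚ with S ⊆ BS(1,q), S is recognizable if and only if there is k ≥ 1 such that for every g ∈ BS(1,q) one has (g ∈ S ↔ g * t^k ∈ S) and, for every ℓ : ℤ, (g ∈ S ↔ g * u k ℓ ∈ S). -/
open Matrix

/-- The element `a` of `BS(1,q)`, with matrix `!![1, 1; 0, 1]`. -/
noncomputable def aElem : GL (Fin 2) ℚ :=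
  Matrix.GeneralLinearGroup.mkOfDetNeZero !![1, 1; 0, 1] (by norm_num [Matrix.det_fin_two_of])

/-- The element `t` of `BS(1,q)`, with matrix `!![(q : ℚ), 0; 0, 1]`. -/
noncomputable def tElem (q : ℕ) (hq : 2 ≤ q) : GL (Fin 2) ℚ :=
  Matrix.GeneralLinearGroup.mkOfDetNeZero !![(q : ℚ), 0; 0, 1]
    (by
      have hq0 : (q : ℚ) ≠ 0 := by
        simpa using (Nat.cast_ne_zero (R := ℚ)).2 (by omega)
      simp [Matrix.det_fin_two_of, hq0])

/-- `BS(1,q)` as the subgroup of `GL (Fin 2) ℚ` generated by `a` and `t`. -/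
noncomputable def BS (q : ℕ) (hq : 2 ≤ q) : Subgroup (GL (Fin 2) ℚ) :=
  Subgroup.closure {aElem, tElem q hq}

/-- The element `u k ℓ` with matrix `!![1, q^ℓ - q^(ℓ+k); 0, 1]`. -/
noncomputable def uElem (q : ℕ) (k ℓ : ℤ) : GL (Fin 2) ℚ :=
  Matrix.GeneralLinearGroup.mkOfDetNeZero !![1, (q : ℚ) ^ ℓ - (q : ℚ) ^ (ℓ + k); 0, 1]
    (by norm_num [Matrix.det_fin_two_of])

/-- A subset `S ⊆ BS(1,q)` is recognizable if it is recognized (as a subset of the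
subgroup `BS(1,q)`) by a group morphism onto a finite group. -/
def IsRecognizable (q : ℕ) (hq : 2 ≤ q) (S : Set (GL (Fin 2) ℚ)) : Prop :=
  ∃ (K : Type) (_ : Group K) (_ : Finite K) (φ : (BS q hq) →* K),
    ∀ x y : (BS q hq), φ x = φ y →
      ((x : GL (Fin 2) ℚ) ∈ S ↔ (y : GL (Fin 2) ℚ) ∈ S)


/-- unipotent upper triangular unit -/
noncomputable def Uu (b : ℚ) : GL (Fin 2) ℚ :=
  Matrix.GeneralLinearGroup.mkOfDetNeZero !![1, b; 0, 1] (by norm_num [Matrix.det_fin_two_of])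

@[simp] lemma Uu_val (b : ℚ) : (Uu b : Matrix (Fin 2) (Fin 2) ℚ) = !![1, b; 0, 1] := rfl

lemma Uu_mul (b c : ℚ) : Uu b * Uu c = Uu (b + c) := by
  ext i j
  show (!![1, b; 0, 1] * !![1, c; 0, 1]) i j = _
  rw [Matrix.mul_fin_two]
  fin_cases i <;> fin_cases j <;> simp [add_comm]

@[simp] lemma Uu_zero : Uu 0 = 1 := by
  ext i j; show (!![1, (0:ℚ); 0, 1]) i j = (1 : Matrix (Fin 2) (Fin 2) ℚ) i j
  fin_cases i <;> fin_cases j <;> simp [Matrix.one_apply]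

/-- Uu as a hom from `Multiplicative ℚ`. -/
noncomputable def Uhom : Multiplicative ℚ →* GL (Fin 2) ℚ where
  toFun b := Uu (Multiplicative.toAdd b)
  map_one' := Uu_zero
  map_mul' b c := by simp [Uu_mul, add_comm]

lemma Uu_zpow (b : ℚ) (w : ℤ) : (Uu b) ^ w = Uu (w * b) := by
  have := map_zpow Uhom (Multiplicative.ofAdd b) w
  simpa [Uhom, ← ofAdd_zsmul, smul_eq_mul] using this.symm

/-- diagonal units -/
noncomputable def Dd (c : ℚˣ) : GL (Fin 2) ℚ :=
  Matrix.GeneralLinearGroup.mkOfDetNeZero !![(c : ℚ), 0; 0, 1]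
    (by simp [Matrix.det_fin_two_of, c.ne_zero])

@[simp] lemma Dd_val (c : ℚˣ) : (Dd c : Matrix (Fin 2) (Fin 2) ℚ) = !![(c : ℚ), 0; 0, 1] := rfl

noncomputable def Dhom : ℚˣ →* GL (Fin 2) ℚ where
  toFun := Dd
  map_one' := by
    ext i j; show (!![(1:ℚ), 0; 0, 1]) i j = (1 : Matrix (Fin 2) (Fin 2) ℚ) i j
    fin_cases i <;> fin_cases j <;> simp [Matrix.one_apply]
  map_mul' c d := by
    ext i j
    show (!![((c*d : ℚˣ) : ℚ), 0; 0, 1]) i j = (!![(c:ℚ), 0; 0, 1] * !![(d:ℚ), 0; 0, 1]) i j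
    rw [Matrix.mul_fin_two]
    fin_cases i <;> fin_cases j <;> simp

section
variable {q : ℕ} (hq : 2 ≤ q)

lemma one_lt_q (hq : 2 ≤ q) : (1:ℚ) < q := by
  exact_mod_cast lt_of_lt_of_le one_lt_two (by exact_mod_cast hq)

lemma q_ne_zero (hq : 2 ≤ q) : (q:ℚ) ≠ 0 := by linarith [one_lt_q hq]

/-- `q` as a unit of `ℚ`. -/
noncomputable def qU (hq : 2 ≤ q) : ℚˣ :=
  Units.mk0 (q:ℚ) (q_ne_zero hq)

lemma tElem_eq : tElem q hq = Dd (qU hq) := rfl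

lemma tElem_zpow (m : ℤ) :
    ((tElem q hq ^ m : GL (Fin 2) ℚ) : Matrix (Fin 2) (Fin 2) ℚ)
      = !![(q:ℚ) ^ m, 0; 0, 1] := by
  have : tElem q hq ^ m = Dhom (qU hq ^ m) := by
    rw [map_zpow]; rfl
  rw [this]
  show (!![((qU hq ^ m : ℚˣ) : ℚ), 0; 0, 1]) = _
  norm_num [Units.val_zpow_eq_zpow_val, qU]

lemma Dd_conj (c : ℚˣ) (b : ℚ) : Dd c * Uu b * (Dd c)⁻¹ = Uu (c * b) := by
  rw [mul_inv_eq_iff_eq_mul]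
  ext i j
  show (!![(c:ℚ), 0; 0, 1] * !![1, b; 0, 1]) i j = (!![1, (c:ℚ) * b; 0, 1] * !![(c:ℚ), 0; 0, 1]) i j
  rw [Matrix.mul_fin_two, Matrix.mul_fin_two]
  fin_cases i <;> fin_cases j <;> simp

lemma aElem_eq : aElem = Uu 1 := rfl

lemma t_conj_a (ℓ : ℤ) :
    tElem q hq ^ ℓ * aElem * (tElem q hq ^ ℓ)⁻¹ = Uu ((q:ℚ) ^ ℓ) := by
  have h1 : tElem q hq ^ ℓ = Dd (qU hq ^ ℓ) := by
    rw [tElem_eq]; exact (map_zpow Dhom (qU hq) ℓ).symm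
  rw [h1, aElem_eq, Dd_conj]
  congr 1
  simp [Units.val_zpow_eq_zpow_val, qU]

lemma uElem_eq (k ℓ : ℤ) : uElem q k ℓ = Uu ((q:ℚ) ^ ℓ - (q:ℚ) ^ (ℓ + k)) := rfl

lemma uElem_decomp (k ℓ : ℤ) :
    uElem q k ℓ = Uu ((q:ℚ) ^ ℓ) * (Uu ((q:ℚ) ^ (ℓ + k)))⁻¹ := by
  rw [uElem_eq, eq_comm, mul_inv_eq_iff_eq_mul, Uu_mul]
  congr 1
  ring

lemma aElem_mem : aElem ∈ BS q hq := Subgroup.subset_closure (by simp)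
lemma tElem_mem : tElem q hq ∈ BS q hq := Subgroup.subset_closure (by simp)

lemma Uu_qpow_mem (ℓ : ℤ) : Uu ((q:ℚ) ^ ℓ) ∈ BS q hq := by
  rw [← t_conj_a hq ℓ]
  exact mul_mem (mul_mem (zpow_mem (tElem_mem hq) ℓ) (aElem_mem hq)) (inv_mem (zpow_mem (tElem_mem hq) ℓ))

lemma uElem_mem (k ℓ : ℤ) : uElem q k ℓ ∈ BS q hq := by
  rw [uElem_decomp]
  exact mul_mem (Uu_qpow_mem hq ℓ) (inv_mem (Uu_qpow_mem hq (ℓ + k)))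

end

section Forward
variable {q : ℕ} {hq : 2 ≤ q} {S : Set (GL (Fin 2) ℚ)}

lemma forward (h : IsRecognizable q hq S) :
    ∃ k : ℤ, 1 ≤ k ∧ ∀ g ∈ BS q hq,
      (g ∈ S ↔ g * (tElem q hq) ^ k ∈ S) ∧
      (∀ ℓ : ℤ, (g ∈ S ↔ g * uElem q k ℓ ∈ S)) := by
  obtain ⟨K, _, _, φ, hφ⟩ := h
  refine ⟨(Nat.card K : ℤ), by exact_mod_cast Nat.one_le_iff_ne_zero.2 Nat.card_pos.ne', ?_⟩
  set k : ℤ := (Nat.card K : ℤ) with hk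
  set τ : BS q hq := ⟨tElem q hq, tElem_mem hq⟩ with hτ
  have hτk : φ τ ^ k = 1 := by
    rw [hk, zpow_natCast]
    exact pow_card_eq_one'
  intro g hg
  set x : BS q hq := ⟨g, hg⟩ with hx
  constructor
  · have := hφ x (x * τ ^ k) (by rw [_root_.map_mul, _root_.map_zpow, hτk, mul_one])
    simpa using this
  · intro ℓ
    set υ : BS q hq := ⟨uElem q k ℓ, uElem_mem hq k ℓ⟩ with hυ
    have hdecomp : υ = τ ^ ℓ * ⟨aElem, aElem_mem hq⟩ * (τ ^ ℓ)⁻¹ *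
        (τ ^ (ℓ + k) * ⟨aElem, aElem_mem hq⟩⁻¹ * (τ ^ (ℓ + k))⁻¹) := by
      apply Subtype.ext
      rw [hυ, hτ]
      push_cast
      rw [uElem_decomp]
      have h1 := t_conj_a (q := q) hq ℓ
      have h2 := t_conj_a (q := q) hq (ℓ + k)
      rw [← h1]
      congr 1
      rw [← h2]
      group
    have hφυ : φ υ = 1 := by
      rw [hdecomp]
      simp only [_root_.map_mul, _root_.map_zpow, _root_.map_inv]
      have hc : φ τ ^ (ℓ + k) = φ τ ^ ℓ := by
        rw [_root_.zpow_add, hτk, mul_one]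
      rw [hc]
      group
    have := hφ x (x * υ) (by rw [_root_.map_mul, hφυ, mul_one])
    simpa using this

end Forward

section Backward

variable (q : ℕ) (hq : 2 ≤ q) (k : ℤ) (hk : 1 ≤ k)

/-- `k` as a natural number. -/
def κfun : ℕ := k.toNat

/-- The modulus `q^κ - 1`. -/
def Nmod : ℕ := q ^ κfun k - 1

lemma κ_pos (hk : 1 ≤ k) : 1 ≤ κfun k := by unfold κfun; omega

lemma Nmod_pos (hq : 2 ≤ q) (hk : 1 ≤ k) : 1 ≤ Nmod q k := by
  have : 2 ^ κfun k ≤ q ^ κfun k := Nat.pow_le_pow_left hq _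
  have : 2 ≤ q ^ κfun k := le_trans (by have := κ_pos k hk; calc 2 = 2^1 := rfl
    _ ≤ 2 ^ κfun k := Nat.pow_le_pow_right (by norm_num) this) this
  unfold Nmod; omega

/-- inverse of `q` in `ZMod (Nmod q k)` -/
def rInv : ZMod (Nmod q k) := (q : ZMod (Nmod q k)) ^ (κfun k - 1)

lemma q_mul_rInv (hq : 2 ≤ q) (hk : 1 ≤ k) : (q : ZMod (Nmod q k)) * rInv q k = 1 := by
  unfold rInv
  rw [← pow_succ']
  have h1 : κfun k - 1 + 1 = κfun k := by have := κ_pos k hk; omega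
  rw [h1]
  have h2 : (q : ℕ) ^ κfun k = Nmod q k + 1 := by
    have := Nmod_pos q k hq hk
    unfold Nmod at *
    omega
  calc (q : ZMod (Nmod q k)) ^ κfun k = ((q ^ κfun k : ℕ) : ZMod (Nmod q k)) := by push_cast; ring
    _ = ((Nmod q k + 1 : ℕ) : ZMod (Nmod q k)) := by rw [h2]
    _ = 1 := by push_cast [ZMod.natCast_self]; ring

lemma pow_mul_rInv (hq : 2 ≤ q) (hk : 1 ≤ k) (j : ℕ) :
    (q : ZMod (Nmod q k)) ^ j * rInv q k ^ j = 1 := by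
  rw [← mul_pow, q_mul_rInv q k hq hk, one_pow]

open Classical in
/-- The reduction map `ℤ[1/q] → ZMod (q^κ - 1)` (junk elsewhere). -/
noncomputable def ψred : ℚ → ZMod (Nmod q k) := fun b =>
  if h : ∃ p : ℤ × ℕ, b = (p.1 : ℚ) / (q:ℚ) ^ p.2 then
    (h.choose.1 : ZMod (Nmod q k)) * rInv q k ^ h.choose.2
  else 0

lemma ψred_wd (hq : 2 ≤ q) (hk : 1 ≤ k) {z z' : ℤ} {n n' : ℕ}
    (h : (z : ℚ) / (q:ℚ) ^ n = (z' : ℚ) / (q:ℚ) ^ n') :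
    (z : ZMod (Nmod q k)) * rInv q k ^ n = (z' : ZMod (Nmod q k)) * rInv q k ^ n' := by
  have hq0 : (q:ℚ) ≠ 0 := q_ne_zero hq
  have hZ : z * (q:ℤ) ^ n' = z' * (q:ℤ) ^ n := by
    have : (z : ℚ) * (q:ℚ) ^ n' = (z' : ℚ) * (q:ℚ) ^ n := by
      field_simp at h
      linarith [h]
    exact_mod_cast this
  have E : (z : ZMod (Nmod q k)) * (q : ZMod (Nmod q k)) ^ n'
      = (z' : ZMod (Nmod q k)) * (q : ZMod (Nmod q k)) ^ n := by
    exact_mod_cast congrArg (Int.cast : ℤ → ZMod (Nmod q k)) hZ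
  have E2 : (z : ZMod (Nmod q k)) * ((q : ZMod (Nmod q k)) ^ n' * rInv q k ^ n') * rInv q k ^ n
      = (z' : ZMod (Nmod q k)) * ((q : ZMod (Nmod q k)) ^ n * rInv q k ^ n) * rInv q k ^ n' := by
    linear_combination (rInv q k ^ n * rInv q k ^ n') * E
  rwa [pow_mul_rInv q k hq hk, pow_mul_rInv q k hq hk, mul_one, mul_one] at E2

lemma ψred_rep (hq : 2 ≤ q) (hk : 1 ≤ k) (z : ℤ) (n : ℕ) :
    ψred q k ((z : ℚ) / (q:ℚ) ^ n) = (z : ZMod (Nmod q k)) * rInv q k ^ n := by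
  unfold ψred
  have hex : ∃ p : ℤ × ℕ, (z : ℚ) / (q:ℚ) ^ n = (p.1 : ℚ) / (q:ℚ) ^ p.2 := ⟨((z, n) : ℤ × ℕ), rfl⟩
  rw [dif_pos hex]
  exact ψred_wd q k hq hk (Exists.choose_spec hex).symm

/-- representable elements (elements of `ℤ[1/q]`) -/
def Rp (q : ℕ) (b : ℚ) : Prop := ∃ n : ℕ, ∃ z : ℤ, b = (z : ℚ) / (q:ℚ) ^ n

lemma Rp_zero : Rp q 0 := ⟨0, 0, by norm_num⟩
lemma Rp_one : Rp q 1 := ⟨0, 1, by norm_num⟩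

lemma Rp_zpow (hq : 2 ≤ q) (m : ℤ) : Rp q ((q:ℚ) ^ m) := by
  have hq0 : (q:ℚ) ≠ 0 := q_ne_zero hq
  rcases le_or_gt 0 m with h | h
  · lift m to ℕ using h with m0
    exact ⟨0, (q:ℤ) ^ m0, by push_cast; norm_num⟩
  · refine ⟨(-m).toNat, 1, ?_⟩
    rw [eq_div_iff (by positivity), ← zpow_natCast (q:ℚ) (-m).toNat,
      Int.toNat_of_nonneg (by omega), ← zpow_add₀ hq0]
    norm_num
lemma Rp_neg {b : ℚ} (hb : Rp q b) : Rp q (-b) := by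
  obtain ⟨n, z, rfl⟩ := hb
  exact ⟨n, -z, by push_cast; ring⟩

lemma Rp_add (hq : 2 ≤ q) {b c : ℚ} (hb : Rp q b) (hc : Rp q c) : Rp q (b + c) := by
  obtain ⟨n, z, rfl⟩ := hb; obtain ⟨n', z', rfl⟩ := hc
  have hq0 : (q:ℚ) ≠ 0 := q_ne_zero hq
  exact ⟨n + n', z * (q:ℤ) ^ n' + z' * (q:ℤ) ^ n, by field_simp; try push_cast; try ring; try exact Or.inl trivial⟩

lemma Rp_mul (hq : 2 ≤ q) {b c : ℚ} (hb : Rp q b) (hc : Rp q c) : Rp q (b * c) := by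
  obtain ⟨n, z, rfl⟩ := hb; obtain ⟨n', z', rfl⟩ := hc
  have hq0 : (q:ℚ) ≠ 0 := q_ne_zero hq
  exact ⟨n + n', z * z', by field_simp; try push_cast; try ring; try exact Or.inl trivial⟩

lemma ψred_zero (hq : 2 ≤ q) (hk : 1 ≤ k) : ψred q k 0 = 0 := by
  have := ψred_rep q k hq hk 0 0
  simpa using this

lemma ψred_one (hq : 2 ≤ q) (hk : 1 ≤ k) : ψred q k 1 = 1 := by
  have := ψred_rep q k hq hk 1 0
  simpa using this

lemma ψred_add (hq : 2 ≤ q) (hk : 1 ≤ k) {b c : ℚ} (hb : Rp q b) (hc : Rp q c) :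
    ψred q k (b + c) = ψred q k b + ψred q k c := by
  obtain ⟨n, z, rfl⟩ := hb; obtain ⟨n', z', rfl⟩ := hc
  have hq0 : (q:ℚ) ≠ 0 := q_ne_zero hq
  have hsum : (z : ℚ) / (q:ℚ) ^ n + (z' : ℚ) / (q:ℚ) ^ n'
      = ((z * (q:ℤ) ^ n' + z' * (q:ℤ) ^ n : ℤ) : ℚ) / (q:ℚ) ^ (n + n') := by
    field_simp; try push_cast; try ring; try exact Or.inl trivial
  rw [hsum, ψred_rep q k hq hk, ψred_rep q k hq hk, ψred_rep q k hq hk]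
  push_cast
  have expand : ((z:ZMod (Nmod q k)) * (q:ZMod (Nmod q k)) ^ n' + (z':ZMod (Nmod q k)) * (q:ZMod (Nmod q k)) ^ n) * rInv q k ^ (n + n')
      = (z:ZMod (Nmod q k)) * ((q:ZMod (Nmod q k)) ^ n' * rInv q k ^ n') * rInv q k ^ n
        + (z':ZMod (Nmod q k)) * ((q:ZMod (Nmod q k)) ^ n * rInv q k ^ n) * rInv q k ^ n' := by
    ring
  rw [expand, pow_mul_rInv q k hq hk, pow_mul_rInv q k hq hk, mul_one, mul_one]

lemma ψred_mul (hq : 2 ≤ q) (hk : 1 ≤ k) {b c : ℚ} (hb : Rp q b) (hc : Rp q c) :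
    ψred q k (b * c) = ψred q k b * ψred q k c := by
  obtain ⟨n, z, rfl⟩ := hb; obtain ⟨n', z', rfl⟩ := hc
  have hq0 : (q:ℚ) ≠ 0 := q_ne_zero hq
  have hprod : (z : ℚ) / (q:ℚ) ^ n * ((z' : ℚ) / (q:ℚ) ^ n')
      = ((z * z' : ℤ) : ℚ) / (q:ℚ) ^ (n + n') := by
    field_simp; try push_cast; try ring; try exact Or.inl trivial
  rw [hprod, ψred_rep q k hq hk, ψred_rep q k hq hk, ψred_rep q k hq hk]
  push_cast
  ring


lemma rep_of_mem (hq : 2 ≤ q) {g : GL (Fin 2) ℚ} (hg : g ∈ BS q hq) :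
    ∃ m : ℤ, ∃ b : ℚ, Rp q b ∧
      (g : Matrix (Fin 2) (Fin 2) ℚ) = !![(q:ℚ) ^ m, b; 0, 1] := by
  have hq0 : (q:ℚ) ≠ 0 := q_ne_zero hq
  induction hg using Subgroup.closure_induction with
  | mem x hx =>
    rcases hx with hx | hx
    · exact ⟨0, 1, Rp_one q, by rw [hx]; rw [aElem_eq]; norm_num⟩
    · exact ⟨1, 0, Rp_zero q, by rw [hx]; show (!![(q:ℚ),0;0,1]) = _; rw [zpow_one]⟩
  | one => exact ⟨0, 0, Rp_zero q, by show (1 : Matrix (Fin 2) (Fin 2) ℚ) = _; rw [Matrix.one_fin_two]; norm_num⟩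
  | mul x y hx hy ihx ihy =>
    obtain ⟨m, b, hb, hxm⟩ := ihx
    obtain ⟨m', b', hb', hym⟩ := ihy
    refine ⟨m + m', (q:ℚ) ^ m * b' + b, Rp_add q hq (Rp_mul q hq (Rp_zpow q hq m) hb') hb, ?_⟩
    show ((x : Matrix (Fin 2) (Fin 2) ℚ) * (y : Matrix (Fin 2) (Fin 2) ℚ)) = _
    rw [hxm, hym, Matrix.mul_fin_two, zpow_add₀ hq0]
    norm_num
  | inv x hx ihx =>
    obtain ⟨m, b, hb, hxm⟩ := ihx
    refine ⟨-m, -((q:ℚ) ^ (-m) * b), Rp_neg q (Rp_mul q hq (Rp_zpow q hq (-m)) hb), ?_⟩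
    have hqum : ((qU hq ^ m : ℚˣ) : ℚ) = (q:ℚ) ^ m := by
      rw [Units.val_zpow_eq_zpow_val]; rfl
    have hx2 : x = Uu b * Dhom (qU hq ^ m) := by
      ext i j
      rw [hxm]
      show _ = (!![1, b; 0, 1] * !![((qU hq ^ m : ℚˣ) : ℚ), 0; 0, 1]) i j
      rw [Matrix.mul_fin_two, hqum]
      fin_cases i <;> fin_cases j <;> simp
    have hUinv : (Uu b)⁻¹ = Uu (-b) := by
      apply inv_eq_of_mul_eq_one_right
      rw [Uu_mul]; simp
    have hDinv : (Dhom (qU hq ^ m))⁻¹ = Dhom (qU hq ^ (-m)) := by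
      rw [← _root_.map_inv, ← _root_.zpow_neg]
    have hqum' : ((qU hq ^ (-m) : ℚˣ) : ℚ) = (q:ℚ) ^ (-m) := by
      rw [Units.val_zpow_eq_zpow_val]; rfl
    rw [hx2, _root_.mul_inv_rev, hUinv, hDinv]
    ext i j
    show (!![((qU hq ^ (-m) : ℚˣ) : ℚ), 0; 0, 1] * !![1, -b; 0, 1]) i j = _
    rw [Matrix.mul_fin_two, hqum']
    fin_cases i <;> fin_cases j <;> simp


lemma qzpow_inj (hq : 2 ≤ q) {m m' : ℤ} (h : (q:ℚ) ^ m = (q:ℚ) ^ m') : m = m' :=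
  zpow_right_injective₀ (by linarith [one_lt_q hq]) (by linarith [one_lt_q hq]) h

open Classical in
/-- the exponent map into `ZMod κ` (junk outside powers of `q`). -/
noncomputable def μred : ℚ → ZMod (κfun k) := fun c =>
  if h : ∃ m : ℤ, c = (q:ℚ) ^ m then ((h.choose : ℤ) : ZMod (κfun k)) else 0

lemma μred_rep (hq : 2 ≤ q) (m : ℤ) : μred q k ((q:ℚ) ^ m) = ((m : ℤ) : ZMod (κfun k)) := by
  unfold μred
  have hex : ∃ m' : ℤ, (q:ℚ) ^ m = (q:ℚ) ^ m' := ⟨m, rfl⟩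
  rw [dif_pos hex]
  congr 1
  exact (qzpow_inj q hq (Exists.choose_spec hex)).symm

/-- matrix reduction map -/
noncomputable def Fmat (x : BS q hq) : Matrix (Fin 2) (Fin 2) (ZMod (Nmod q k)) :=
  ((x : GL (Fin 2) ℚ) : Matrix (Fin 2) (Fin 2) ℚ).map (ψred q k)

lemma map_form (hk : 1 ≤ k) {x : BS q hq} {m : ℤ} {b : ℚ}
    (hx : ((x : GL (Fin 2) ℚ) : Matrix (Fin 2) (Fin 2) ℚ) = !![(q:ℚ) ^ m, b; 0, 1]) :
    Fmat q hq k x = !![ψred q k ((q:ℚ) ^ m), ψred q k b; 0, 1] := by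
  unfold Fmat
  rw [hx]
  ext i j
  fin_cases i <;> fin_cases j <;>
    simp [Matrix.map_apply, ψred_zero q k hq hk, ψred_one q k hq hk]

lemma Fmat_mul (hk : 1 ≤ k) (x y : BS q hq) :
    Fmat q hq k (x * y) = Fmat q hq k x * Fmat q hq k y := by
  have hq0 : (q:ℚ) ≠ 0 := q_ne_zero hq
  obtain ⟨m, b, hb, hxm⟩ := rep_of_mem q hq x.2
  obtain ⟨m', b', hb', hym⟩ := rep_of_mem q hq y.2
  have hxy : (((x * y : BS q hq) : GL (Fin 2) ℚ) : Matrix (Fin 2) (Fin 2) ℚ)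
      = !![(q:ℚ) ^ (m + m'), (q:ℚ) ^ m * b' + b; 0, 1] := by
    show ((x : GL (Fin 2) ℚ) : Matrix (Fin 2) (Fin 2) ℚ) * _ = _
    rw [hxm, hym, Matrix.mul_fin_two, zpow_add₀ hq0]
    norm_num
  rw [map_form q hq k hk hxy, map_form q hq k hk hxm, map_form q hq k hk hym,
    Matrix.mul_fin_two]
  have e1 : ψred q k ((q:ℚ) ^ (m + m')) = ψred q k ((q:ℚ) ^ m) * ψred q k ((q:ℚ) ^ m') := by
    rw [zpow_add₀ hq0]
    exact ψred_mul q k hq hk (Rp_zpow q hq m) (Rp_zpow q hq m')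
  have e2 : ψred q k ((q:ℚ) ^ m * b' + b)
      = ψred q k ((q:ℚ) ^ m) * ψred q k b' + ψred q k b := by
    rw [ψred_add q k hq hk (Rp_mul q hq (Rp_zpow q hq m) hb') hb,
      ψred_mul q k hq hk (Rp_zpow q hq m) hb']
  rw [e1, e2]
  norm_num

lemma Fmat_one (hk : 1 ≤ k) : Fmat q hq k 1 = 1 := by
  have h1 : (((1 : BS q hq) : GL (Fin 2) ℚ) : Matrix (Fin 2) (Fin 2) ℚ)
      = !![(q:ℚ) ^ (0:ℤ), 0; 0, 1] := by
    show (1 : Matrix (Fin 2) (Fin 2) ℚ) = _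
    rw [Matrix.one_fin_two]; norm_num
  rw [map_form q hq k hk h1, Matrix.one_fin_two]
  norm_num [ψred_zero q k hq hk, ψred_one q k hq hk]

/-- reduced `GL₂` element -/
noncomputable def FmatU (hk : 1 ≤ k) (x : BS q hq) : (Matrix (Fin 2) (Fin 2) (ZMod (Nmod q k)))ˣ where
  val := Fmat q hq k x
  inv := Fmat q hq k x⁻¹
  val_inv := by rw [← Fmat_mul q hq k hk, mul_inv_cancel, Fmat_one q hq k hk]
  inv_val := by rw [← Fmat_mul q hq k hk, inv_mul_cancel, Fmat_one q hq k hk]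

/-- the recognizing morphism -/
noncomputable def φBS (hk : 1 ≤ k) :
    BS q hq →* (Matrix (Fin 2) (Fin 2) (ZMod (Nmod q k)))ˣ × Multiplicative (ZMod (κfun k)) :=
  MonoidHom.mk' (fun x => (FmatU q hq k hk x,
      Multiplicative.ofAdd (μred q k (((x : GL (Fin 2) ℚ) : Matrix (Fin 2) (Fin 2) ℚ) 0 0))))
    (by
      intro x y
      have hq0 : (q:ℚ) ≠ 0 := q_ne_zero hq
      obtain ⟨m, b, hb, hxm⟩ := rep_of_mem q hq x.2
      obtain ⟨m', b', hb', hym⟩ := rep_of_mem q hq y.2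
      have hxy : (((x * y : BS q hq) : GL (Fin 2) ℚ) : Matrix (Fin 2) (Fin 2) ℚ)
          = !![(q:ℚ) ^ (m + m'), (q:ℚ) ^ m * b' + b; 0, 1] := by
        show ((x : GL (Fin 2) ℚ) : Matrix (Fin 2) (Fin 2) ℚ) * _ = _
        rw [hxm, hym, Matrix.mul_fin_two, zpow_add₀ hq0]
        norm_num
      refine Prod.ext ?_ ?_
      · exact Units.ext (Fmat_mul q hq k hk x y)
      · show Multiplicative.ofAdd (μred q k _) = Multiplicative.ofAdd (μred q k _) * Multiplicative.ofAdd (μred q k _)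
        rw [← ofAdd_add]
        congr 1
        rw [hxy, hxm, hym]
        norm_num [μred_rep q k hq])

lemma backward (hq : 2 ≤ q) (S : Set (GL (Fin 2) ℚ)) (hk : 1 ≤ k)
    (hper : ∀ g ∈ BS q hq,
      (g ∈ S ↔ g * (tElem q hq) ^ k ∈ S) ∧
      (∀ ℓ : ℤ, (g ∈ S ↔ g * uElem q k ℓ ∈ S))) :
    IsRecognizable q hq S := by
  have hq0 : (q:ℚ) ≠ 0 := q_ne_zero hq
  haveI : NeZero (Nmod q k) := ⟨by have := Nmod_pos q k hq hk; omega⟩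
  haveI : NeZero (κfun k) := ⟨by have := κ_pos k hk; omega⟩
  -- invariance machinery
  set P : GL (Fin 2) ℚ → Prop := fun h => ∀ g ∈ BS q hq, (g ∈ S ↔ g * h ∈ S) with hP
  have hPmul : ∀ h h', h ∈ BS q hq → P h → P h' → P (h * h') := by
    intro h h' hh ph ph' g hg
    rw [ph g hg, ← mul_assoc]
    exact ph' (g * h) (mul_mem hg hh)
  have hPinv : ∀ h, h ∈ BS q hq → P h → P h⁻¹ := by
    intro h hh ph g hg
    have := ph (g * h⁻¹) (mul_mem hg (inv_mem hh))
    rw [inv_mul_cancel_right] at this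
    exact (this).symm
  have hPone : P 1 := by intro g hg; simp
  have hPpow : ∀ h, h ∈ BS q hq → P h → ∀ nn : ℕ, P (h ^ nn) := by
    intro h hh ph nn
    induction nn with
    | zero => simpa using hPone
    | succ nn ih =>
      rw [pow_succ]
      exact hPmul _ _ (pow_mem hh nn) ih ph
  have hPzpow : ∀ h, h ∈ BS q hq → P h → ∀ w : ℤ, P (h ^ w) := by
    intro h hh ph w
    rcases le_or_gt 0 w with hw | hw
    · lift w to ℕ using hw with w0
      rw [zpow_natCast]
      exact hPpow h hh ph w0
    · have : h ^ w = (h ^ (-w).toNat)⁻¹ := by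
        rw [← zpow_natCast, Int.toNat_of_nonneg (by omega), _root_.zpow_neg, inv_inv]
      rw [this]
      exact hPinv _ (pow_mem hh _) (hPpow h hh ph _)
  -- the recognizer
  refine ⟨(Matrix (Fin 2) (Fin 2) (ZMod (Nmod q k)))ˣ × Multiplicative (ZMod (κfun k)),
    inferInstance, inferInstance, φBS q hq k hk, ?_⟩
  intro x y hφ
  have hF : Fmat q hq k x = Fmat q hq k y := congrArg (fun p => p.1.val) hφ
  have hμ0 : μred q k (((x : GL (Fin 2) ℚ) : Matrix (Fin 2) (Fin 2) ℚ) 0 0)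
      = μred q k (((y : GL (Fin 2) ℚ) : Matrix (Fin 2) (Fin 2) ℚ) 0 0) :=
    congrArg (fun p => Multiplicative.toAdd p.2) hφ
  obtain ⟨m, b, hb, hxm⟩ := rep_of_mem q hq x.2
  obtain ⟨m', b', hb', hym⟩ := rep_of_mem q hq y.2
  obtain ⟨n, z, rfl⟩ := hb
  obtain ⟨n', z', rfl⟩ := hb'
  -- exponent congruence
  have hμ : ((m : ℤ) : ZMod (κfun k)) = ((m' : ℤ) : ZMod (κfun k)) := by
    rw [hxm, hym] at hμ0
    simp at hμ0
    rwa [μred_rep q k hq, μred_rep q k hq] at hμ0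
  have hdvdm : ((κfun k : ℕ) : ℤ) ∣ m' - m := by
    rw [← sub_eq_zero, ← Int.cast_sub, ZMod.intCast_zmod_eq_zero_iff_dvd] at hμ
    exact dvd_sub_comm.mp hμ
  have hκk : ((κfun k : ℕ) : ℤ) = k := Int.toNat_of_nonneg (by omega)
  obtain ⟨j, hj⟩ := hdvdm
  -- the (0,1) entries
  rw [map_form q hq k hk hxm, map_form q hq k hk hym] at hF
  have h01 : ψred q k ((z:ℚ)/(q:ℚ)^n) = ψred q k ((z':ℚ)/(q:ℚ)^n') := by
    have := congrArg (fun M : Matrix (Fin 2) (Fin 2) (ZMod (Nmod q k)) => M 0 1) hF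
    simpa using this
  rw [ψred_rep q k hq hk, ψred_rep q k hq hk] at h01
  have E2 : (z : ZMod (Nmod q k)) * (q : ZMod (Nmod q k)) ^ n' * ((q : ZMod (Nmod q k)) ^ n * rInv q k ^ n)
      = (z' : ZMod (Nmod q k)) * (q : ZMod (Nmod q k)) ^ n * ((q : ZMod (Nmod q k)) ^ n' * rInv q k ^ n') := by
    linear_combination ((q : ZMod (Nmod q k)) ^ n * (q : ZMod (Nmod q k)) ^ n') * h01
  rw [pow_mul_rInv q k hq hk, pow_mul_rInv q k hq hk, mul_one, mul_one] at E2
  have hdvdz : ((Nmod q k : ℕ) : ℤ) ∣ z * (q:ℤ) ^ n' - z' * (q:ℤ) ^ n := by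
    have hc : ((z * (q:ℤ) ^ n' - z' * (q:ℤ) ^ n : ℤ) : ZMod (Nmod q k)) = 0 := by
      push_cast
      linear_combination E2
    exact (ZMod.intCast_zmod_eq_zero_iff_dvd _ _).mp hc
  obtain ⟨w, hw⟩ := hdvdz
  obtain ⟨ℓ₀, hℓ₀⟩ : ∃ l : ℤ, l = -m - (n:ℤ) - (n':ℤ) := ⟨_, rfl⟩
  have hzk : (q:ℚ) ^ (k:ℤ) = (q:ℚ) ^ (κfun k : ℕ) := by
    conv_lhs => rw [← hκk]
    exact zpow_natCast _ _
  have hNQ : ((Nmod q k : ℕ) : ℚ) = (q:ℚ) ^ (k:ℤ) - 1 := by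
    unfold Nmod
    have h1 : 1 ≤ q ^ κfun k := Nat.one_le_pow _ _ (by omega)
    rw [Nat.cast_sub h1, hzk]
    push_cast
    ring
  have hscal : (q:ℚ) ^ m * ((w:ℚ) * ((q:ℚ) ^ ℓ₀ - (q:ℚ) ^ (ℓ₀ + k))) + (z:ℚ)/(q:ℚ)^n
      = (z':ℚ)/(q:ℚ)^n' := by
    have hwQ : (z:ℚ) * (q:ℚ)^(n':ℕ) - (z':ℚ) * (q:ℚ)^(n:ℕ) = ((Nmod q k : ℕ):ℚ) * (w:ℚ) := by
      exact_mod_cast congrArg (fun t : ℤ => (t:ℚ)) hw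
    rw [hNQ] at hwQ
    have hl : (q:ℚ)^ℓ₀ * ((q:ℚ)^m * (q:ℚ)^(n:ℕ) * (q:ℚ)^(n':ℕ)) = 1 := by
      rw [← zpow_natCast (q:ℚ) n, ← zpow_natCast (q:ℚ) n', ← zpow_add₀ hq0, ← zpow_add₀ hq0,
        ← zpow_add₀ hq0, show ℓ₀ + (m + (n:ℤ) + (n':ℤ)) = 0 from by omega, zpow_zero]
    have hk2 : (q:ℚ)^(ℓ₀+k) = (q:ℚ)^ℓ₀ * (q:ℚ)^(k:ℤ) := zpow_add₀ hq0 _ _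
    rw [hk2]
    have hn0 : (q:ℚ)^(n:ℕ) ≠ 0 := pow_ne_zero _ hq0
    have hn0' : (q:ℚ)^(n':ℕ) ≠ 0 := pow_ne_zero _ hq0
    field_simp
    first
      | linear_combination ((w:ℚ) * (1 - (q:ℚ)^(k:ℤ))) * hl + hwQ
      | linear_combination ((w:ℚ) * (1 - (q:ℚ)^(k:ℤ))) * hl - hwQ
      | linear_combination ((w:ℚ) * ((q:ℚ)^(k:ℤ) - 1)) * hl + hwQ
      | linear_combination ((w:ℚ) * ((q:ℚ)^(k:ℤ) - 1)) * hl - hwQ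
  have hj' : m' = m + k * j := by rw [hκk] at hj; omega
  have hmm : (q:ℚ) ^ m' = (q:ℚ) ^ m * (q:ℚ) ^ (k * j) := by
    rw [hj', zpow_add₀ hq0]
  have hmat : !![(q:ℚ)^m', (z':ℚ)/(q:ℚ)^n'; 0, 1]
      = !![(q:ℚ)^m, (z:ℚ)/(q:ℚ)^n; 0, 1] * !![1, (w:ℚ) * ((q:ℚ)^ℓ₀ - (q:ℚ)^(ℓ₀+k)); 0, 1]
        * !![(q:ℚ)^(k*j), 0; 0, 1] := by
    rw [Matrix.mul_fin_two, Matrix.mul_fin_two]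
    ext i jj
    fin_cases i <;> fin_cases jj <;> simp <;>
      first
        | linear_combination hmm
        | linear_combination -hmm
        | linear_combination hscal
        | linear_combination -hscal
  have hyx : (y : GL (Fin 2) ℚ)
      = (x : GL (Fin 2) ℚ) * (uElem q k ℓ₀) ^ w * (tElem q hq ^ k) ^ j := by
    have ht : ((tElem q hq ^ k) ^ j) = tElem q hq ^ (k * j) := (_root_.zpow_mul _ _ _).symm
    rw [ht]
    apply Units.ext
    show _ = ((x : GL (Fin 2) ℚ) : Matrix (Fin 2) (Fin 2) ℚ) * _ * _
    rw [hxm, hym, uElem_eq, Uu_zpow, Uu_val, tElem_zpow hq (k*j)]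
    exact hmat
  have hPu : P (uElem q k ℓ₀) := fun g hg => (hper g hg).2 ℓ₀
  have hPt : P (tElem q hq ^ k) := fun g hg => (hper g hg).1
  have hu : uElem q k ℓ₀ ∈ BS q hq := uElem_mem hq k ℓ₀
  have h1 := hPzpow _ hu hPu w
  have h2 := hPzpow _ (zpow_mem (tElem_mem hq) k) hPt j
  calc (x : GL (Fin 2) ℚ) ∈ S
      ↔ (x : GL (Fin 2) ℚ) * (uElem q k ℓ₀) ^ w ∈ S := h1 _ x.2
    _ ↔ (x : GL (Fin 2) ℚ) * (uElem q k ℓ₀) ^ w * (tElem q hq ^ k) ^ j ∈ S :=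
        h2 _ (mul_mem x.2 (zpow_mem hu w))
    _ ↔ (y : GL (Fin 2) ℚ) ∈ S := by rw [← hyx]


end Backward

/-- A subset `S ⊆ BS(1,q)` is recognizable iff it is `k`-periodic for some `k ≥ 1`. -/
theorem isRecognizable_iff_periodic (q : ℕ) (hq : 2 ≤ q) (S : Set (GL (Fin 2) ℚ))
    (hSsub : S ⊆ (BS q hq : Set (GL (Fin 2) ℚ))) :
    IsRecognizable q hq S ↔
      ∃ k : ℤ, 1 ≤ k ∧ ∀ g ∈ BS q hq,
        (g ∈ S ↔ g * (tElem q hq) ^ k ∈ S) ∧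
        (∀ ℓ : ℤ, (g ∈ S ↔ g * uElem q k ℓ ∈ S)) := by
  constructor
  · exact forward
  · rintro ⟨k, hk, hper⟩
    exact backward q k hq S hk hper
end

section
/- The rational subsets of BS(1,q) are not closed under intersection: for every integer q ≥ 2 there exist subsets R₁ and R₂ of GL (Fin 2) ℚ that are rational subsets of BS(1,q) such that R₁ ∩ R₂ is not a rational subset of BS(1,q). -/
open Matrix

/-- `R` is a rational subset of `BS(1,q)`. -/
def IsRationalSubset (q : ℕ) (hq : 2 ≤ q) (R : Set (GL (Fin 2) ℚ)) : Prop :=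
  ∃ (ι : Type) (_ : Fintype ι) (L : Language ι) (f : ι → GL (Fin 2) ℚ),
    L.IsRegular ∧ (∀ i : ι, f i ∈ BS q hq) ∧
    R = {g : GL (Fin 2) ℚ | ∃ w ∈ L, (w.map f).prod = g}

namespace BSAux


/-- upper triangular 2x2 matrix with bottom row (0 1) -/
def UT (u b : ℚ) : Matrix (Fin 2) (Fin 2) ℚ := !![u, b; 0, 1]

lemma UT_mul (u b v c : ℚ) : UT u b * UT v c = UT (u * v) (u * c + b) := by
  ext i j
  fin_cases i <;> fin_cases j <;>
    simp [UT, Matrix.mul_apply, Fin.sum_univ_two]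

lemma UT_one : UT 1 0 = 1 := by
  simp [UT, Matrix.one_fin_two]

lemma UT_inj {u b v c : ℚ} (h : UT u b = UT v c) : u = v ∧ b = c := by
  constructor
  · have := congrFun (congrFun h 0) 0; simpa [UT] using this
  · have := congrFun (congrFun h 0) 1; simpa [UT] using this

lemma coe_aElem : (aElem : Matrix (Fin 2) (Fin 2) ℚ) = UT 1 1 := rfl

lemma coe_tElem (q : ℕ) (hq : 2 ≤ q) :
    ((tElem q hq : GL (Fin 2) ℚ) : Matrix (Fin 2) (Fin 2) ℚ) = UT (q : ℚ) 0 := rfl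

/-- every element of BS(1,q) is upper triangular with bottom row (0 1) and nonzero corner -/
lemma isUT_of_mem {q : ℕ} {hq : 2 ≤ q} {g : GL (Fin 2) ℚ} (hg : g ∈ BS q hq) :
    ∃ u b : ℚ, u ≠ 0 ∧ (g : Matrix (Fin 2) (Fin 2) ℚ) = UT u b := by
  have hq0 : (q : ℚ) ≠ 0 := by
    simpa using (Nat.cast_ne_zero (R := ℚ)).2 (by omega)
  induction hg using Subgroup.closure_induction with
  | mem x hx =>
    rcases hx with hx | hx
    · exact ⟨1, 1, one_ne_zero, by rw [hx]; exact coe_aElem⟩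
    · exact ⟨(q : ℚ), 0, hq0, by rw [Set.mem_singleton_iff] at hx; rw [hx]; exact coe_tElem q hq⟩
  | one => exact ⟨1, 0, one_ne_zero, by rw [Units.val_one, UT_one]⟩
  | mul x y hx hy ihx ihy =>
    obtain ⟨u, b, hu, hx'⟩ := ihx
    obtain ⟨v, c, hv, hy'⟩ := ihy
    exact ⟨u * v, u * c + b, mul_ne_zero hu hv, by rw [Units.val_mul, hx', hy', UT_mul]⟩
  | inv x hx ihx =>
    obtain ⟨u, b, hu, hx'⟩ := ihx
    refine ⟨u⁻¹, -(u⁻¹ * b), inv_ne_zero hu, ?_⟩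
    rw [Matrix.GeneralLinearGroup.coe_inv, hx']
    apply Matrix.inv_eq_left_inv
    rw [UT_mul]
    rw [inv_mul_cancel₀ hu]
    rw [show u⁻¹ * b + -(u⁻¹ * b) = 0 by ring, UT_one]

lemma coe_pow_of_trans {g : GL (Fin 2) ℚ} {b : ℚ}
    (hg : (g : Matrix (Fin 2) (Fin 2) ℚ) = UT 1 b) (j : ℕ) :
    ((g ^ j : GL (Fin 2) ℚ) : Matrix (Fin 2) (Fin 2) ℚ) = UT 1 (j * b) := by
  induction j with
  | zero => simp [Units.val_one, ← UT_one]
  | succ n ih =>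
    rw [pow_succ, Units.val_mul, ih, hg, UT_mul]
    norm_num
    ring_nf

lemma coe_pow_diag {g : GL (Fin 2) ℚ} {u : ℚ}
    (hg : (g : Matrix (Fin 2) (Fin 2) ℚ) = UT u 0) (j : ℕ) :
    ((g ^ j : GL (Fin 2) ℚ) : Matrix (Fin 2) (Fin 2) ℚ) = UT (u ^ j) 0 := by
  induction j with
  | zero => simp [Units.val_one, ← UT_one]
  | succ n ih =>
    rw [pow_succ, Units.val_mul, ih, hg, UT_mul]
    rw [← pow_succ]
    norm_num

lemma coe_aElem_pow (m : ℕ) :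
    ((aElem ^ m : GL (Fin 2) ℚ) : Matrix (Fin 2) (Fin 2) ℚ) = UT 1 m := by
  have := coe_pow_of_trans coe_aElem m
  simpa using this

/-- the translation by q^n -/
noncomputable def T (q : ℕ) (n : ℕ) : GL (Fin 2) ℚ := aElem ^ (q ^ n)

lemma coe_T (q : ℕ) (n : ℕ) :
    ((T q n : GL (Fin 2) ℚ) : Matrix (Fin 2) (Fin 2) ℚ) = UT 1 ((q : ℚ) ^ n) := by
  rw [T, coe_aElem_pow]
  push_cast
  rfl

lemma T_injective (q : ℕ) (hq : 2 ≤ q) : Function.Injective (T q) := by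
  intro m n h
  have h' := congrArg (fun g : GL (Fin 2) ℚ => (g : Matrix (Fin 2) (Fin 2) ℚ)) h
  simp only [coe_T] at h'
  have := (UT_inj h').2
  have hqm : q ^ m = q ^ n := by exact_mod_cast this
  exact Nat.pow_right_injective hq hqm

lemma pow_cast_injective (q : ℕ) (hq : 2 ≤ q) :
    Function.Injective (fun k : ℕ => (q : ℚ) ^ k) := by
  have hq1 : (1 : ℚ) < q := by exact_mod_cast (by omega : 1 < q)
  exact fun i j h => (pow_right_strictMono₀ hq1).injective h



/-- language (2)^m 0 (1)^n over Fin 3 -/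
def L₁ : Language (Fin 3) :=
  {w | ∃ m n : ℕ, w = List.replicate m 2 ++ 0 :: List.replicate n 1}

lemma mem_L₁ {w : List (Fin 3)} :
    w ∈ L₁ ↔ ∃ x y : List (Fin 3),
      w = x ++ 0 :: y ∧ (∀ b ∈ x, b = 2) ∧ (∀ b ∈ y, b = 1) := by
  constructor
  · rintro ⟨m, n, rfl⟩
    exact ⟨List.replicate m 2, List.replicate n 1, rfl,
      fun b hb => (List.eq_of_mem_replicate hb),
      fun b hb => (List.eq_of_mem_replicate hb)⟩
  · rintro ⟨x, y, rfl, hx, hy⟩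
    exact ⟨x.length, y.length, by
      rw [← (List.eq_replicate_length (a := (2 : Fin 3))).2 hx,
          ← (List.eq_replicate_length (a := (1 : Fin 3))).2 hy]⟩

lemma fin3_cases (c : Fin 3) : c = 0 ∨ c = 1 ∨ c = 2 := by
  fin_cases c <;> simp

def M₁ : DFA (Fin 3) (Fin 3) where
  step s c :=
    if s = 0 then (if c = 2 then 0 else if c = 0 then 1 else 2)
    else if s = 1 then (if c = 1 then 1 else 2) else 2
  start := 0
  accept := {1}

lemma evalFrom_cons (s : Fin 3) (c : Fin 3) (w : List (Fin 3)) :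
    M₁.evalFrom s (c :: w) = M₁.evalFrom (M₁.step s c) w := rfl

lemma ev2 (w : List (Fin 3)) : M₁.evalFrom 2 w = 2 := by
  induction w with
  | nil => rfl
  | cons c w ih =>
    rw [evalFrom_cons]
    have hstep : M₁.step 2 c = 2 := rfl
    rw [hstep]; exact ih

lemma ev1 (w : List (Fin 3)) :
    M₁.evalFrom 1 w = 1 ↔ ∀ b ∈ w, b = 1 := by
  induction w with
  | nil => simpa using rfl
  | cons c w ih =>
    rw [evalFrom_cons]
    rcases fin3_cases c with rfl | rfl | rfl
    · have hstep : M₁.step 1 0 = 2 := rfl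
      rw [hstep, ev2]
      simp
    · have hstep : M₁.step 1 1 = 1 := rfl
      rw [hstep, ih]
      simp
    · have hstep : M₁.step 1 2 = 2 := rfl
      rw [hstep, ev2]
      simp

lemma ev0 (w : List (Fin 3)) :
    M₁.evalFrom 0 w = 1 ↔ w ∈ L₁ := by
  rw [mem_L₁]
  induction w with
  | nil =>
    simp only [DFA.evalFrom, List.foldl_nil]
    constructor
    · intro h; exact absurd h (by decide)
    · rintro ⟨x, y, hw, -, -⟩
      exact absurd hw.symm (by simp)
  | cons c w ih =>
    rw [evalFrom_cons]
    rcases fin3_cases c with rfl | rfl | rfl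
    · -- c = 0
      have hstep : M₁.step 0 0 = 1 := rfl
      rw [hstep, ev1]
      constructor
      · intro h
        exact ⟨[], w, rfl, by simp, h⟩
      · rintro ⟨x, y, hw, hx, hy⟩
        cases x with
        | nil =>
          simp only [List.nil_append, List.cons.injEq] at hw
          rw [hw.2]; exact hy
        | cons a x' =>
          simp only [List.cons_append, List.cons.injEq] at hw
          have := hx a (List.mem_cons_self)
          rw [← hw.1] at this
          exact absurd this (by decide)
    · -- c = 1
      have hstep : M₁.step 0 1 = 2 := rfl
      rw [hstep, ev2]
      constructor
      · intro h; exact absurd h (by decide)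
      · rintro ⟨x, y, hw, hx, hy⟩
        cases x with
        | nil =>
          simp only [List.nil_append, List.cons.injEq] at hw
          exact absurd hw.1 (by decide)
        | cons a x' =>
          simp only [List.cons_append, List.cons.injEq] at hw
          have := hx a (List.mem_cons_self)
          rw [← hw.1] at this
          exact absurd this (by decide)
    · -- c = 2
      have hstep : M₁.step 0 2 = 0 := rfl
      rw [hstep, ih]
      constructor
      · rintro ⟨x, y, rfl, hx, hy⟩
        exact ⟨2 :: x, y, rfl, by
          intro b hb
          rcases List.mem_cons.1 hb with h | h
          · exact h
          · exact hx b h, hy⟩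
      · rintro ⟨x, y, hw, hx, hy⟩
        cases x with
        | nil =>
          simp only [List.nil_append, List.cons.injEq] at hw
          exact absurd hw.1 (by decide)
        | cons a x' =>
          simp only [List.cons_append, List.cons.injEq] at hw
          exact ⟨x', y, hw.2, fun b hb => hx b (List.mem_cons_of_mem _ hb), hy⟩

lemma L₁_regular : L₁.IsRegular := by
  refine ⟨Fin 3, inferInstance, M₁, ?_⟩
  ext w
  rw [DFA.mem_accepts]
  show M₁.evalFrom 0 w ∈ ({1} : Set (Fin 3)) ↔ w ∈ L₁
  rw [Set.mem_singleton_iff, ev0]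

/-- the full language over Bool is regular -/
lemma top_regular : (⊤ : Language Bool).IsRegular := by
  refine ⟨Unit, inferInstance, ⟨fun _ _ => (), (), Set.univ⟩, ?_⟩
  ext w
  constructor
  · intro _; trivial
  · intro _
    rw [DFA.mem_accepts]
    exact Set.mem_univ _




noncomputable def f₁ (q : ℕ) (hq : 2 ≤ q) : Fin 3 → GL (Fin 2) ℚ :=
  fun c => if c = 0 then aElem else if c = 1 then (tElem q hq)⁻¹ else tElem q hq

lemma f₁_mem (q : ℕ) (hq : 2 ≤ q) (c : Fin 3) : f₁ q hq c ∈ BS q hq := by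
  have ha : aElem ∈ BS q hq := Subgroup.subset_closure (Set.mem_insert _ _)
  have ht : tElem q hq ∈ BS q hq :=
    Subgroup.subset_closure (Set.mem_insert_of_mem _ rfl)
  rcases fin3_cases c with rfl | rfl | rfl
  · simpa [f₁] using ha
  · simpa [f₁] using inv_mem ht
  · simpa [f₁] using ht

noncomputable def g₁ (q : ℕ) (hq : 2 ≤ q) (m n : ℕ) : GL (Fin 2) ℚ :=
  tElem q hq ^ m * (aElem * ((tElem q hq)⁻¹) ^ n)

lemma coe_tElem_inv (q : ℕ) (hq : 2 ≤ q) :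
    (((tElem q hq)⁻¹ : GL (Fin 2) ℚ) : Matrix (Fin 2) (Fin 2) ℚ) = UT ((q : ℚ)⁻¹) 0 := by
  have hq0 : (q : ℚ) ≠ 0 := by
    simpa using (Nat.cast_ne_zero (R := ℚ)).2 (by omega)
  rw [Matrix.GeneralLinearGroup.coe_inv, coe_tElem]
  apply Matrix.inv_eq_left_inv
  rw [UT_mul, inv_mul_cancel₀ hq0]
  simpa using UT_one

lemma coe_g₁ (q : ℕ) (hq : 2 ≤ q) (m n : ℕ) :
    ((g₁ q hq m n : GL (Fin 2) ℚ) : Matrix (Fin 2) (Fin 2) ℚ)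
      = UT ((q : ℚ) ^ m * ((q : ℚ)⁻¹) ^ n) ((q : ℚ) ^ m) := by
  rw [g₁, Units.val_mul, Units.val_mul, coe_pow_diag (coe_tElem q hq),
    coe_pow_diag (coe_tElem_inv q hq), coe_aElem, UT_mul, UT_mul]
  norm_num

lemma prod_word₁ (q : ℕ) (hq : 2 ≤ q) (m n : ℕ) :
    (((List.replicate m (2 : Fin 3) ++ 0 :: List.replicate n 1).map (f₁ q hq)).prod)
      = g₁ q hq m n := by
  have h2 : f₁ q hq 2 = tElem q hq := rfl
  have h0 : f₁ q hq 0 = aElem := rfl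
  have h1 : f₁ q hq 1 = (tElem q hq)⁻¹ := rfl
  rw [List.map_append, List.prod_append, List.map_replicate, h2, List.prod_replicate,
    List.map_cons, List.prod_cons, List.map_replicate, h1, h0, List.prod_replicate]
  rfl

/-- R₁ is exactly the set of g₁'s -/
lemma mem_R₁ (q : ℕ) (hq : 2 ≤ q) (g : GL (Fin 2) ℚ) :
    (∃ w ∈ L₁, (w.map (f₁ q hq)).prod = g) ↔ ∃ m n : ℕ, g = g₁ q hq m n := by
  constructor
  · rintro ⟨w, ⟨m, n, rfl⟩, rfl⟩
    exact ⟨m, n, prod_word₁ q hq m n⟩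
  · rintro ⟨m, n, rfl⟩
    exact ⟨_, ⟨m, n, rfl⟩, prod_word₁ q hq m n⟩

noncomputable def f₂ : Bool → GL (Fin 2) ℚ :=
  fun b => if b then aElem else aElem⁻¹

lemma f₂_mem (q : ℕ) (hq : 2 ≤ q) (b : Bool) : f₂ b ∈ BS q hq := by
  have ha : aElem ∈ BS q hq := Subgroup.subset_closure (Set.mem_insert _ _)
  cases b
  · simpa [f₂] using inv_mem ha
  · simpa [f₂] using ha

lemma mem_R₂ (q : ℕ) (hq : 2 ≤ q) (g : GL (Fin 2) ℚ) :
    (∃ w ∈ (⊤ : Language Bool), (w.map f₂).prod = g) ↔ ∃ s : ℤ, g = aElem ^ s := by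
  constructor
  · rintro ⟨w, -, rfl⟩
    induction w with
    | nil => exact ⟨0, by simp⟩
    | cons b w ih =>
      obtain ⟨s, hs⟩ := ih
      rw [List.map_cons, List.prod_cons, hs]
      cases b
      · exact ⟨-1 + s, by rw [_root_.zpow_add]; simp [f₂, _root_.zpow_neg_one]⟩
      · exact ⟨1 + s, by rw [_root_.zpow_add]; simp [f₂, zpow_one]⟩
  · rintro ⟨s, rfl⟩
    rcases s with n | n
    · refine ⟨List.replicate n true, trivial, ?_⟩
      rw [List.map_replicate, List.prod_replicate]
      simp [f₂]
    · refine ⟨List.replicate (n + 1) false, trivial, ?_⟩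
      rw [List.map_replicate, List.prod_replicate]
      simp only [f₂, if_neg Bool.false_ne_true, zpow_negSucc, inv_pow]

lemma R₁_inter_R₂ (q : ℕ) (hq : 2 ≤ q) :
    {g : GL (Fin 2) ℚ | ∃ m n : ℕ, g = g₁ q hq m n} ∩
      {g : GL (Fin 2) ℚ | ∃ s : ℤ, g = aElem ^ s} = Set.range (T q) := by
  have hq0 : (q : ℚ) ≠ 0 := by
    simpa using (Nat.cast_ne_zero (R := ℚ)).2 (by omega)
  ext g
  constructor
  · rintro ⟨⟨m, n, rfl⟩, s, hs⟩
    have hcoe := congrArg (fun g : GL (Fin 2) ℚ => (g : Matrix (Fin 2) (Fin 2) ℚ)) hs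
    simp only [coe_g₁] at hcoe
    have hs' : ((aElem ^ s : GL (Fin 2) ℚ) : Matrix (Fin 2) (Fin 2) ℚ) = UT 1 (s : ℚ) := by
      rcases s with k | k
      · simpa using coe_aElem_pow k
      · rw [zpow_negSucc, Matrix.GeneralLinearGroup.coe_inv, coe_aElem_pow]
        apply Matrix.inv_eq_left_inv
        rw [UT_mul, ← UT_one]
        push_cast [Int.cast_negSucc]
        ring_nf
    rw [hs'] at hcoe
    obtain ⟨h1, h2⟩ := UT_inj hcoe
    have hmn : m = n := by
      have : (q : ℚ) ^ m = (q : ℚ) ^ n := by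
        rw [inv_pow] at h1
        exact (mul_inv_eq_one₀ (pow_ne_zero _ hq0)).1 h1
      exact pow_cast_injective q hq this
    subst hmn
    refine ⟨m, ?_⟩
    apply Units.ext
    rw [coe_T]
    rw [coe_g₁, inv_pow, mul_inv_cancel₀ (pow_ne_zero _ hq0)]
  · rintro ⟨n, rfl⟩
    constructor
    · refine ⟨n, n, ?_⟩
      apply Units.ext
      rw [coe_T, coe_g₁, inv_pow, mul_inv_cancel₀ (pow_ne_zero _ hq0)]
    · refine ⟨(q ^ n : ℕ), ?_⟩
      rw [T, zpow_natCast]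


lemma no_three_pows_aux (q : ℕ) (hq : 2 ≤ q) {n₀ n₁ n₂ : ℕ} (h12 : n₁ ≠ n₂)
    (h02 : n₀ < n₂) (h : (q : ℚ) ^ n₀ + (q : ℚ) ^ n₂ = 2 * (q : ℚ) ^ n₁) : False := by
  have hq1 : (1 : ℚ) < q := by exact_mod_cast (by omega : 1 < q)
  have hq2 : (2 : ℚ) ≤ q := by exact_mod_cast hq
  have hpos : ∀ k : ℕ, (0 : ℚ) < (q : ℚ) ^ k := fun k => pow_pos (by linarith) k
  have hmono := pow_right_strictMono₀ hq1
  have hn12 : n₁ < n₂ := by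
    by_contra h'
    push_neg at h'
    have h2' : n₂ < n₁ := lt_of_le_of_ne h' h12.symm
    have hA : (q : ℚ) ^ n₀ < (q : ℚ) ^ n₁ := hmono (lt_trans h02 h2')
    have hB : (q : ℚ) ^ n₂ < (q : ℚ) ^ n₁ := hmono h2'
    linarith
  have h1 : (q : ℚ) ^ (n₁ + 1) ≤ (q : ℚ) ^ n₂ := by
    apply pow_le_pow_right₀ (le_of_lt hq1) hn12
  rw [pow_succ] at h1
  nlinarith [hpos n₁, hpos n₀]

lemma no_three_pows (q : ℕ) (hq : 2 ≤ q) {n₀ n₁ n₂ : ℕ} (h01 : n₀ ≠ n₁) (h12 : n₁ ≠ n₂)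
    (h02 : n₀ ≠ n₂) (h : (q : ℚ) ^ n₀ + (q : ℚ) ^ n₂ = 2 * (q : ℚ) ^ n₁) : False := by
  rcases h02.lt_or_gt with h' | h'
  · exact no_three_pows_aux q hq h12 h' h
  · exact no_three_pows_aux q hq h01.symm h' (by linarith)

lemma flatten_replicate_prod {ι : Type} (f : ι → GL (Fin 2) ℚ) (y : List ι) (j : ℕ) :
    (((List.replicate j y).flatten).map f).prod = ((y.map f).prod) ^ j := by
  induction j with
  | zero => simp
  | succ k ih =>
    rw [List.replicate_succ, List.flatten_cons, List.map_append, List.prod_append, ih,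
      pow_succ']

lemma not_rational_range_T (q : ℕ) (hq : 2 ≤ q) :
    ¬ IsRationalSubset q hq (Set.range (T q)) := by
  classical
  rintro ⟨ι, hι, L, f, ⟨σ, hσ, M, hM⟩, hf, hset⟩
  set N := Fintype.card σ with hN
  have hUT : ∀ w : List ι, ∃ u b : ℚ, u ≠ 0 ∧
      (((w.map f).prod : GL (Fin 2) ℚ) : Matrix (Fin 2) (Fin 2) ℚ) = UT u b := by
    intro w
    apply isUT_of_mem (q := q) (hq := hq)
    apply Subgroup.list_prod_mem
    intro x hx
    obtain ⟨i, -, rfl⟩ := List.mem_map.1 hx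
    exact hf i
  have hprodmem : ∀ w ∈ L, ∃ n : ℕ, (w.map f).prod = T q n := by
    intro w hw
    have : (w.map f).prod ∈ Set.range (T q) := by
      rw [hset]; exact ⟨w, hw, rfl⟩
    obtain ⟨n, hn⟩ := this
    exact ⟨n, hn.symm⟩
  have hex : ∀ n : ℕ, ∃ l : ℕ, ∃ w : List ι,
      w ∈ L ∧ w.length = l ∧ (w.map f).prod = T q n := by
    intro n
    have : T q n ∈ Set.range (T q) := ⟨n, rfl⟩
    rw [hset] at this
    obtain ⟨w, hw, hprod⟩ := this
    exact ⟨w.length, w, hw, rfl, hprod⟩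
  have hlt : ∀ n : ℕ, Nat.find (hex n) < N := by
    intro n
    by_contra hge
    push_neg at hge
    obtain ⟨w, hwL, hwlen, hwprod⟩ := Nat.find_spec (hex n)
    have hwacc : w ∈ M.accepts := by rw [hM]; exact hwL
    have hlen : N ≤ w.length := by rw [hwlen]; exact hge
    obtain ⟨x, y, z, hxyz, hlen2, hy, hpump⟩ := M.pumping_lemma hwacc hlen
    -- pumped words are in L
    have hmemL : ∀ j : ℕ, x ++ (List.replicate j y).flatten ++ z ∈ L := by
      intro j
      rw [← hM]
      apply hpump
      refine Language.mem_mul.2 ⟨x ++ (List.replicate j y).flatten,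
        Language.mem_mul.2 ⟨x, rfl, (List.replicate j y).flatten, ?_, rfl⟩,
        z, rfl, by simp⟩
      exact Language.join_mem_kstar (fun y' hy' => List.eq_of_mem_replicate hy')
    set P := (x.map f).prod with hP
    set Q := (y.map f).prod with hQ
    set Z := (z.map f).prod with hZ
    have hPQZ : ∀ j : ℕ,
        ((x ++ (List.replicate j y).flatten ++ z).map f).prod = P * Q ^ j * Z := by
      intro j
      rw [List.map_append, List.map_append, List.prod_append, List.prod_append,
        flatten_replicate_prod]
    -- each pumped product is a power translation
    have hnj : ∀ j : ℕ, ∃ nj : ℕ, P * Q ^ j * Z = T q nj := by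
      intro j
      obtain ⟨nj, hnj⟩ := hprodmem _ (hmemL j)
      rw [hPQZ j] at hnj
      exact ⟨nj, hnj⟩
    obtain ⟨u1, b1, hu1, hcP⟩ := hUT x
    obtain ⟨u2, b2, hu2, hcQ⟩ := hUT y
    obtain ⟨u3, b3, hu3, hcZ⟩ := hUT z
    rw [← hP] at hcP
    rw [← hQ] at hcQ
    rw [← hZ] at hcZ
    -- scale equations
    have hscale : ∀ j : ℕ, ∀ nj : ℕ, P * Q ^ j * Z = T q nj →
        ((P * Q ^ j * Z : GL (Fin 2) ℚ) : Matrix (Fin 2) (Fin 2) ℚ) = UT 1 ((q : ℚ) ^ nj) := by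
      intro j nj hj
      rw [hj, coe_T]
    obtain ⟨n0, hn0⟩ := hnj 0
    obtain ⟨n1, hn1⟩ := hnj 1
    have h0 := hscale 0 n0 hn0
    have h1 := hscale 1 n1 hn1
    rw [Units.val_mul, Units.val_mul, pow_zero, Units.val_one, hcP, hcZ, mul_one, UT_mul] at h0
    rw [Units.val_mul, Units.val_mul, pow_one, hcP, hcQ, hcZ, UT_mul, UT_mul] at h1
    obtain ⟨e0, t0⟩ := UT_inj h0
    obtain ⟨e1, t1⟩ := UT_inj h1
    have hu2one : u2 = 1 := by linear_combination e1 - u2 * e0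
    rw [hu2one] at hcQ
    by_cases hb2 : b2 = 0
    · -- Q = 1, shorter word
      have hQ1 : Q = 1 := by
        apply Units.ext
        rw [hcQ, hb2, UT_one, Units.val_one]
      have hxz : ((x ++ (List.replicate 0 y).flatten ++ z).map f).prod = T q n := by
        rw [hPQZ 0, pow_zero, mul_one]
        have : P * Q * Z = T q n := by
          have := hwprod
          rw [hxyz] at this
          rw [← this, List.map_append, List.map_append, List.prod_append, List.prod_append]
        rw [← this, hQ1, mul_one]
      have hshort : (x ++ (List.replicate 0 y).flatten ++ z).length < Nat.find (hex n) := by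
        rw [← hwlen, hxyz]
        simp only [List.replicate, List.flatten_nil, List.append_nil, List.length_append]
        have : 0 < y.length := List.length_pos_iff.2 hy
        omega
      exact Nat.find_min (hex n) hshort
        ⟨x ++ (List.replicate 0 y).flatten ++ z, hmemL 0, rfl, hxz⟩
    · -- arithmetic progression of three powers
      obtain ⟨n2, hn2⟩ := hnj 2
      have h2 := hscale 2 n2 hn2
      have hcQ2 : ((Q ^ 2 : GL (Fin 2) ℚ) : Matrix (Fin 2) (Fin 2) ℚ) = UT 1 (2 * b2) :=
        coe_pow_of_trans hcQ 2
      rw [Units.val_mul, Units.val_mul, hcP, hcQ2, hcZ, UT_mul, UT_mul] at h2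
      have hcQ1 : ((Q ^ 1 : GL (Fin 2) ℚ) : Matrix (Fin 2) (Fin 2) ℚ) = UT 1 (1 * b2) :=
        coe_pow_of_trans hcQ 1
      obtain ⟨e2, t2⟩ := UT_inj h2
      -- translations: q^n0 = A, q^n1 = A + u1*b2, q^n2 = A + 2*u1*b2
      rw [hu2one] at t1 e1
      have hB : u1 * b2 ≠ 0 := mul_ne_zero hu1 hb2
      have hd01 : n0 ≠ n1 := by
        intro hEq
        rw [hEq] at t0
        have : u1 * b2 = 0 := by linear_combination t1 - t0
        exact hB this
      have hd12 : n1 ≠ n2 := by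
        intro hEq
        rw [hEq] at t1
        have : u1 * b2 = 0 := by linear_combination t2 - t1
        exact hB this
      have hd02 : n0 ≠ n2 := by
        intro hEq
        rw [hEq] at t0
        have : u1 * b2 = 0 := by linear_combination (t2 - t0) / 2
        exact hB this
      exact no_three_pows q hq hd01 hd12 hd02 (by linear_combination 2 * t1 - t0 - t2)
  -- finitely many short words, infinitely many T's
  have hwords : ∀ n : ℕ, ∃ w : List ι, w ∈ L ∧ w.length < N ∧ (w.map f).prod = T q n := by
    intro n
    obtain ⟨w, hwL, hwlen, hwprod⟩ := Nat.find_spec (hex n)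
    exact ⟨w, hwL, hwlen ▸ hlt n, hwprod⟩
  choose wfun hwL hwlen hwprod using hwords
  have hinj : Function.Injective wfun := by
    intro m n hEq
    apply T_injective q hq
    rw [← hwprod m, ← hwprod n, hEq]
  have : {l : List ι | l.length < N}.Infinite :=
    Set.infinite_of_injective_forall_mem hinj (fun n => hwlen n)
  exact this (List.finite_length_lt ι N)

end BSAux

/-- The rational subsets of `BS(1,q)` are not closed under intersection. -/
theorem rational_subsets_not_closed_under_intersection (q : ℕ) (hq : 2 ≤ q) :
    ∃ R₁ R₂ : Set (GL (Fin 2) ℚ),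
      IsRationalSubset q hq R₁ ∧ IsRationalSubset q hq R₂ ∧
      ¬ IsRationalSubset q hq (R₁ ∩ R₂) := by
  refine ⟨{g : GL (Fin 2) ℚ | ∃ w ∈ BSAux.L₁, (w.map (BSAux.f₁ q hq)).prod = g},
          {g : GL (Fin 2) ℚ | ∃ w ∈ (⊤ : Language Bool), (w.map BSAux.f₂).prod = g},
          ⟨Fin 3, inferInstance, BSAux.L₁, BSAux.f₁ q hq, BSAux.L₁_regular,
            BSAux.f₁_mem q hq, rfl⟩,
          ⟨Bool, inferInstance, ⊤, BSAux.f₂, BSAux.top_regular, BSAux.f₂_mem q hq, rfl⟩, ?_⟩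
  have h1 : {g : GL (Fin 2) ℚ | ∃ w ∈ BSAux.L₁, (w.map (BSAux.f₁ q hq)).prod = g}
      = {g : GL (Fin 2) ℚ | ∃ m n : ℕ, g = BSAux.g₁ q hq m n} := Set.ext (BSAux.mem_R₁ q hq)
  have h2 : {g : GL (Fin 2) ℚ | ∃ w ∈ (⊤ : Language Bool), (w.map BSAux.f₂).prod = g}
      = {g : GL (Fin 2) ℚ | ∃ s : ℤ, g = aElem ^ s} := Set.ext (BSAux.mem_R₂ q hq)
  rw [h1, h2, BSAux.R₁_inter_R₂ q hq]
  exact BSAux.not_rational_range_T q hq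
end

section
/- The PE-regular subsets of BS(1,2) are not closed under generated submonoids: let S be the additive submonoid of ℚ generated by {x : ℚ | ∃ i : ℕ, 1 ≤ i ∧ x = 1 + 2^(−(i:ℤ))}. Then the subset {M ∈ GL (Fin 2) ℚ | ∃ r ∈ S, the matrix of M is !![1, r; 0, 1]} of BS(1,2) is not PE-regular (here q = 2). -/
open Matrix

/-- The PE-alphabet. -/
def PELetter (q : ℕ) := Bool ⊕ (Fin q × Bool × Bool)

/-- `w` is a PE-representation of the element `M` of `GL (Fin 2) ℚ`. -/
def IsPERep (q : ℕ) (M : GL (Fin 2) ℚ) (w : List (PELetter q)) : Prop :=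
  ∃ (ε : Bool) (ds : List (Fin q × Bool × Bool)),
    w = Sum.inl ε :: ds.map Sum.inr ∧ ds ≠ [] ∧
    ∃ (m : ℤ) (r : ℚ) (k₂ : ℕ), k₂ < ds.length ∧
      (M : Matrix (Fin 2) (Fin 2) ℚ) = !![(q : ℚ) ^ m, r; 0, 1] ∧
      (∀ j : Fin ds.length, (ds.get j).2.1 = true ↔ (j : ℕ) = ds.length - 1 - k₂) ∧
      (∃! j : Fin ds.length, (ds.get j).2.2 = true) ∧
      (∀ j : Fin ds.length, (ds.get j).2.2 = true →
        ((ds.length : ℤ) - 1 - (j : ℕ)) - (k₂ : ℤ) = m) ∧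
      (if ε then (1 : ℚ) else -1) *
        (∑ j : Fin ds.length,
          ((ds.get j).1 : ℚ) * (q : ℚ) ^ (((ds.length : ℤ) - 1 - (j : ℕ)) - (k₂ : ℤ))) = r

/-- `w` is the pointed expansion of `M`: a PE-representation of minimal length. -/
def IsPE (q : ℕ) (M : GL (Fin 2) ℚ) (w : List (PELetter q)) : Prop :=
  IsPERep q M w ∧ ∀ w' : List (PELetter q), IsPERep q M w' → w.length ≤ w'.length

/-- A subset of `BS(1,q)` is PE-regular if the language of pointed expansions of its
elements is a regular language. -/
def IsPERegular (q : ℕ) (R : Set (GL (Fin 2) ℚ)) : Prop :=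
  Language.IsRegular {w : List (PELetter q) | ∃ M ∈ R, IsPE q M w}

attribute [reducible] PELetter

namespace PEAux


/-- Sum of powers of two indexed by a list of exponents. -/
def spow (l : List ℕ) : ℕ := (l.map (fun e => 2 ^ e)).sum

lemma spow_cons (a : ℕ) (l : List ℕ) : spow (a :: l) = 2 ^ a + spow l := by
  simp [spow]

lemma spow_append (l₁ l₂ : List ℕ) : spow (l₁ ++ l₂) = spow l₁ + spow l₂ := by
  simp [spow]

lemma spow_replicate_zero (u : ℕ) : spow (List.replicate u 0) = u := by
  induction u with
  | zero => rfl
  | succ n ih =>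
    rw [List.replicate_succ, spow_cons, ih]
    omega

/-- split off zero exponents -/
lemma spow_split (l : List ℕ) :
    spow l = l.count 0 + 2 * spow ((l.filter (· ≠ 0)).map (· - 1)) := by
  induction l with
  | nil => rfl
  | cons a t ih =>
    rcases Nat.eq_zero_or_pos a with rfl | ha
    · simp [spow_cons, ih, List.count_cons]
      ring
    · have hane : (a ≠ 0) := by omega
      rw [spow_cons, ih]
      have h1 : (a :: t).count 0 = t.count 0 := by
        simp [List.count_cons, hane]
      have h2 : ((a :: t).filter (· ≠ 0)) = a :: (t.filter (· ≠ 0)) := by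
        simp [List.filter_cons, hane]
      rw [h1, h2]
      simp [spow_cons]
      have : 2 ^ a = 2 * 2 ^ (a - 1) := by
        rw [← pow_succ']
        congr 1
        omega
      omega

lemma count_le_len (l : List ℕ) : l.count 0 ≤ l.length := List.count_le_length

lemma filter_len (l : List ℕ) : (l.filter (· ≠ 0)).length = l.length - l.count 0 := by
  induction l with
  | nil => rfl
  | cons a t ih =>
    have hct := count_le_len t
    rcases Nat.eq_zero_or_pos a with rfl | ha
    · have hd : (decide ((0:ℕ) ≠ 0)) = false := by simp
      rw [List.count_cons, List.filter_cons]
      simp only [hd, Bool.false_eq_true, if_false, List.length_cons, ih]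
      norm_num
      omega
    · have hane : a ≠ 0 := by omega
      have hd : (decide (a ≠ 0)) = true := by simp [hane]
      rw [List.count_cons, List.filter_cons]
      simp only [hd, if_true, List.length_cons, ih]
      have : (if (a == 0) = true then 1 else 0) = 0 := by simp [hane]
      omega

/-- Key lemma: if `2^(c+k) ∣ spow l + 2^c` then `k ≤ l.length`. -/
lemma keyA (k : ℕ) : ∀ c (l : List ℕ), 2 ^ (c + k) ∣ spow l + 2 ^ c → k ≤ l.length := by
  induction k with
  | zero => intro c l _; exact Nat.zero_le _
  | succ k ihk =>
    intro c
    induction c with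
    | zero =>
      intro l h
      rw [Nat.zero_add] at h
      set z := l.count 0 with hz
      set T := spow ((l.filter (· ≠ 0)).map (· - 1)) with hT
      have hsplit := spow_split l
      have h2 : 2 ∣ spow l + 1 := by
        refine dvd_trans ?_ (by simpa using h)
        exact dvd_pow_self 2 (by omega)
      have hzodd : z % 2 = 1 := by omega
      set u := z / 2 with hu
      have hzz : z = 2 * u + 1 := by omega
      set l' := List.replicate u 0 ++ (l.filter (· ≠ 0)).map (· - 1) with hl'
      have hsl' : spow l' = u + T := by
        rw [hl', spow_append, spow_replicate_zero]
      have heq : spow l + 1 = 2 * (spow l' + 1) := by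
        rw [hsl']; omega
      have hdvd : 2 ^ (0 + k) ∣ spow l' + 2 ^ 0 := by
        rw [Nat.zero_add]
        have hk1 : (2:ℕ) ^ (k+1) = 2 * 2 ^ k := by ring
        rw [hk1, show spow l + 2 ^ 0 = 2 * (spow l' + 1) by simpa using heq] at h
        have := (Nat.mul_dvd_mul_iff_left (by norm_num : 0 < 2)).mp h
        simpa using this
      have hlen := ihk 0 l' hdvd
      have hll : l'.length = u + (l.length - z) := by
        rw [hl', List.length_append, List.length_replicate, List.length_map, filter_len]
      have hcl := count_le_len l
      omega
    | succ c ihc =>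
      intro l h
      set z := l.count 0 with hz
      set T := spow ((l.filter (· ≠ 0)).map (· - 1)) with hT
      have hsplit := spow_split l
      have h2 : 2 ∣ spow l + 2 ^ (c+1) := by
        refine dvd_trans ?_ h
        exact dvd_pow_self 2 (by omega)
      have h2' : (2:ℕ) ∣ 2 ^ (c+1) := dvd_pow_self 2 (by omega)
      have hzeven : z % 2 = 0 := by omega
      set u := z / 2 with hu
      have hzz : z = 2 * u := by omega
      set l' := List.replicate u 0 ++ (l.filter (· ≠ 0)).map (· - 1) with hl'
      have hsl' : spow l' = u + T := by
        rw [hl', spow_append, spow_replicate_zero]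
      have heq : spow l + 2 ^ (c+1) = 2 * (spow l' + 2 ^ c) := by
        rw [hsl']
        have : (2:ℕ) ^ (c+1) = 2 * 2 ^ c := by ring
        omega
      have hdvd : 2 ^ (c + (k+1)) ∣ spow l' + 2 ^ c := by
        have hh : (2:ℕ) ^ (c + 1 + (k+1)) = 2 * 2 ^ (c + (k+1)) := by ring
        rw [hh, heq] at h
        exact (Nat.mul_dvd_mul_iff_left (by norm_num : 0 < 2)).mp h
      have hlen := ihc l' hdvd
      have hll : l'.length = u + (l.length - z) := by
        rw [hl', List.length_append, List.length_replicate, List.length_map, filter_len]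
      have hcl := count_le_len l
      omega



/-- The generating set. -/
def gens : Set ℚ := {x : ℚ | ∃ i : ℕ, 1 ≤ i ∧ x = 1 + 2 ^ (-(i : ℤ))}

noncomputable def fsum (I : List ℕ) : ℚ := (I.map fun i => (2:ℚ) ^ (-(i:ℤ))).sum

lemma fsum_nil : fsum [] = 0 := rfl

lemma fsum_cons (a : ℕ) (I : List ℕ) : fsum (a :: I) = 2 ^ (-(a:ℤ)) + fsum I := by simp [fsum]

lemma fsum_nonneg (I : List ℕ) : 0 ≤ fsum I := by
  induction I with
  | nil => simp [fsum_nil]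
  | cons a t ih => rw [fsum_cons]; positivity

lemma fsum_pos (a : ℕ) (I : List ℕ) : 0 < fsum (a :: I) := by
  rw [fsum_cons]
  have := fsum_nonneg I
  positivity

lemma cast_spow_eq (K : ℕ) (I : List ℕ) (h : ∀ i ∈ I, i ≤ K) :
    ((spow (I.map (K - ·)) : ℕ) : ℚ) = fsum I * 2 ^ K := by
  induction I with
  | nil => simp [spow, fsum_nil]
  | cons a t ih =>
    have ha : a ≤ K := h a (by simp)
    have ht : ∀ i ∈ t, i ≤ K := fun i hi => h i (by simp [hi])
    rw [List.map_cons, spow_cons, fsum_cons]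
    push_cast
    rw [ih ht]
    have : ((2:ℚ) ^ (K - a) : ℚ) = 2 ^ (-(a:ℤ)) * 2 ^ K := by
      have h1 : ((2:ℚ) ^ (K - a)) = (2:ℚ) ^ (((K - a : ℕ) : ℤ)) := by
        rw [zpow_natCast]
      rw [h1]
      rw [show ((K - a : ℕ) : ℤ) = -(a:ℤ) + (K:ℤ) by omega]
      rw [zpow_add₀ (by norm_num : (2:ℚ) ≠ 0)]
      rw [zpow_natCast]
    rw [this]
    ring

lemma i_le_sum {I : List ℕ} {i : ℕ} (hi : i ∈ I) : i ≤ I.sum :=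
  List.le_sum_of_mem hi

/-- The crucial arithmetic fact: `n' + 1 - 2^{-k}` is not in the submonoid when `n' < k`. -/
lemma notInS (n' k : ℕ) (hn'k : n' < k) (hk : 1 ≤ k) :
    ((n' : ℚ) + 1 - 2 ^ (-(k:ℤ))) ∉ AddSubmonoid.closure gens := by
  intro hmem
  obtain ⟨l, hl, hsum⟩ := AddSubmonoid.exists_list_of_mem_closure hmem
  -- extract exponents
  have : ∀ l' : List ℚ, (∀ y ∈ l', y ∈ gens) →
      ∃ I : List ℕ, (∀ i ∈ I, 1 ≤ i) ∧ I.length = l'.length ∧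
        l'.sum = l'.length + fsum I := by
    intro l'
    induction l' with
    | nil => intro _; exact ⟨[], by simp, by simp, by simp [fsum_nil]⟩
    | cons a t ih =>
      intro hmem'
      obtain ⟨I, hI1, hI2, hI3⟩ := ih (fun y hy => hmem' y (by simp [hy]))
      obtain ⟨i, hi1, hi2⟩ := hmem' a (by simp)
      refine ⟨i :: I, ?_, by simp [hI2], ?_⟩
      · intro j hj
        rcases List.mem_cons.mp hj with rfl | hj
        · exact hi1
        · exact hI1 j hj
      · rw [List.sum_cons, hI3, hi2, fsum_cons]
        simp only [List.length_cons]
        push_cast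
        ring
  obtain ⟨I, hI1, hIlen, hIsum⟩ := this l hl
  set n := I.length with hn
  rw [← hIlen] at hIsum
  rw [hsum] at hIsum
  -- hIsum : n' + 1 - 2^{-k} = n + fsum I
  -- step 1 : n ≤ n'
  have h2k : (0:ℚ) < 2 ^ (-(k:ℤ)) := by positivity
  have h2k1 : (2:ℚ) ^ (-(k:ℤ)) ≤ 1/2 := by
    rw [show (1/2 : ℚ) = 2 ^ (-(1:ℤ)) by norm_num]
    apply zpow_le_zpow_right₀ (by norm_num : (1:ℚ) ≤ 2)
    omega
  have hnn' : n ≤ n' := by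
    rcases I with _ | ⟨a, t⟩
    · -- n = 0, fsum = 0, contradiction: n' + 1 - 2^{-k} = 0 but > 0
      exfalso
      simp only [fsum_nil, List.length_nil, Nat.cast_zero, add_zero] at hIsum
      have : (0:ℚ) < (n' : ℚ) + 1 - 2 ^ (-(k:ℤ)) := by
        have : (0:ℚ) ≤ (n' : ℚ) := by positivity
        linarith
      rw [hIsum] at this
      simp at this
    · by_contra hc
      push_neg at hc
      -- n' < n, i.e. n' + 1 ≤ n
      have h1 : ((n':ℚ)) + 1 ≤ (n : ℚ) := by
        have : (n' + 1 : ℕ) ≤ n := hc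
        exact_mod_cast this
      have h2 : (0:ℚ) < fsum (a :: t) := fsum_pos a t
      have : (n':ℚ) + 1 - 2 ^ (-(k:ℤ)) > (n':ℚ) + 1 := by
        rw [hIsum]
        calc ((n':ℚ)) + 1 < (n:ℚ) + fsum (a :: t) := by
              have := fsum_pos a t
              push_cast at h1 ⊢
              linarith
          _ = _ := rfl
      linarith
  set m := n' - n with hm
  have hmn : (n' : ℚ) = (n : ℚ) + (m : ℚ) := by
    have : n' = n + m := by omega
    exact_mod_cast congrArg (Nat.cast : ℕ → ℚ) this
  have hF : fsum I = ((m:ℚ) + 1) - 2 ^ (-(k:ℤ)) := by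
    rw [hmn] at hIsum
    linarith
  -- scale by 2^K
  set K := k + I.sum with hK
  have hkK : k ≤ K := by omega
  have hiK : ∀ i ∈ I, i ≤ K := fun i hi => le_trans (i_le_sum hi) (by omega)
  have hscaled := cast_spow_eq K I hiK
  rw [hF] at hscaled
  have hpow : ((2:ℚ) ^ (K - k) : ℚ) = 2 ^ (-(k:ℤ)) * 2 ^ K := by
    have h1 : ((2:ℚ) ^ (K - k)) = (2:ℚ) ^ (((K - k : ℕ) : ℤ)) := by rw [zpow_natCast]
    rw [h1, show ((K - k : ℕ) : ℤ) = -(k:ℤ) + (K:ℤ) by omega,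
      zpow_add₀ (by norm_num : (2:ℚ) ≠ 0), zpow_natCast]
  -- nat equation
  have hnat : (spow (I.map (K - ·)) : ℚ) + ((2:ℚ)^(K-k)) = ((m:ℚ)+1) * 2 ^ K := by
    rw [hscaled, hpow]
    ring
  have hnat' : spow (I.map (K - ·)) + 2^(K-k) = (m+1) * 2 ^ K := by
    have : ((spow (I.map (K - ·)) + 2^(K-k) : ℕ) : ℚ) = (((m+1) * 2 ^ K : ℕ) : ℚ) := by
      push_cast
      push_cast at hnat
      linarith
    exact_mod_cast this
  have hdvd : 2 ^ ((K - k) + k) ∣ spow (I.map (K - ·)) + 2 ^ (K - k) := by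
    rw [show (K - k) + k = K by omega, hnat']
    exact Dvd.intro_left _ rfl
  have hfin := keyA k (K - k) (I.map (K - ·)) hdvd
  rw [List.length_map] at hfin
  omega

/-- Geometric sum. -/
lemma geom_sum_neg (k : ℕ) :
    ∑ i ∈ Finset.range k, (2:ℚ) ^ (-((i:ℤ) + 1)) = 1 - 2 ^ (-(k:ℤ)) := by
  induction k with
  | zero => simp
  | succ k ih =>
    rw [Finset.sum_range_succ, ih]
    have h1 : (2:ℚ) ^ (-((k:ℤ) + 1)) = 2 ^ (-(k:ℤ)) * 2 ^ (-(1:ℤ)) := by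
      rw [← zpow_add₀ (by norm_num : (2:ℚ) ≠ 0)]
      ring_nf
    have h2 : (2:ℚ) ^ (-((k:ℤ)+1)) = 2 ^ (-((k+1:ℕ):ℤ)) := by
      norm_num
    rw [← h2, h1]
    norm_num
    ring



abbrev Dig := Fin 2 × Bool × Bool

def Zd : Dig := (0, false, false)
def Od : Dig := (1, false, false)
def Pd : Dig := (0, true, true)

@[simp] lemma fin_one_val : (((1 : Fin 2) : ℕ) : ℚ) = 1 := rfl
@[simp] lemma fin_zero_val : (((0 : Fin 2) : ℕ) : ℚ) = 0 := rfl

/-- the digit value sum appearing in `IsPERep` (with `q = 2`). -/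
noncomputable def valQ (ds : List Dig) (k₂ : ℕ) : ℚ :=
  ∑ j : Fin ds.length,
    ((ds.get j).1 : ℚ) * (2 : ℚ) ^ (((ds.length : ℤ) - 1 - (j : ℕ)) - (k₂ : ℤ))

lemma valQ_nil (k₂ : ℕ) : valQ [] k₂ = 0 := by simp [valQ]

lemma valQ_cons (d : Dig) (ds : List Dig) (k₂ : ℕ) :
    valQ (d :: ds) k₂ = (d.1 : ℚ) * 2 ^ ((ds.length : ℤ) - (k₂ : ℤ)) + valQ ds k₂ := by
  have h : valQ (d :: ds) k₂ = ∑ j : Fin (ds.length + 1),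
      (((d :: ds).get j).1 : ℚ) *
        (2 : ℚ) ^ ((((d :: ds).length : ℤ) - 1 - (j : ℕ)) - (k₂ : ℤ)) := rfl
  rw [h, Fin.sum_univ_succ]
  congr 1
  · have h0 : (d :: ds).get (0 : Fin (ds.length + 1)) = d := rfl
    rw [h0]
    congr 1
    have : (((0 : Fin (ds.length + 1)) : ℕ) : ℤ) = 0 := rfl
    rw [this, List.length_cons]
    push_cast
    ring
  · rw [valQ]
    apply Finset.sum_congr rfl
    intro j _
    have h1 : (d :: ds).get j.succ = ds.get j := rfl
    rw [h1]
    congr 1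
    have h2 : ((j.succ : Fin (ds.length + 1)) : ℕ) = (j : ℕ) + 1 := rfl
    rw [h2, List.length_cons]
    push_cast
    ring

lemma valQ_int (ds : List Dig) (k₂ : ℕ) :
    ∃ N : ℕ, valQ ds k₂ = (N : ℚ) * 2 ^ (-(k₂ : ℤ)) ∧ N < 2 ^ ds.length := by
  induction ds with
  | nil => exact ⟨0, by simp [valQ_nil], by norm_num⟩
  | cons d ds ih =>
    obtain ⟨N, hN, hNlt⟩ := ih
    refine ⟨(d.1 : ℕ) * 2 ^ ds.length + N, ?_, ?_⟩
    · rw [valQ_cons, hN]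
      have : (2:ℚ) ^ ((ds.length : ℤ) - (k₂ : ℤ)) = 2 ^ (ds.length : ℕ) * 2 ^ (-(k₂:ℤ)) := by
        rw [show (ds.length : ℤ) - (k₂:ℤ) = (ds.length : ℤ) + (-(k₂:ℤ)) by ring,
          zpow_add₀ (by norm_num : (2:ℚ) ≠ 0), zpow_natCast]
      rw [this]
      push_cast
      ring
    · have hd : (d.1 : ℕ) ≤ 1 := by omega
      have h3 : (d.1 : ℕ) * 2 ^ ds.length ≤ 2 ^ ds.length := by
        have := Nat.mul_le_mul_right (2 ^ ds.length) hd
        omega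
      have : (d :: ds).length = ds.length + 1 := rfl
      rw [this, pow_succ]
      omega

lemma valQ_nonneg (ds : List Dig) (k₂ : ℕ) : 0 ≤ valQ ds k₂ := by
  obtain ⟨N, hN, _⟩ := valQ_int ds k₂
  rw [hN]; positivity

/-- words -/
def ds2 (t k : ℕ) : List Dig := List.replicate t Zd ++ Pd :: List.replicate k Od

def ds1 (t k : ℕ) : List Dig := Od :: ds2 t k

lemma ds2_length (t k : ℕ) : (ds2 t k).length = t + k + 1 := by simp [ds2]; omega

lemma ds1_length (t k : ℕ) : (ds1 t k).length = t + k + 2 := by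
  have : (ds1 t k).length = (ds2 t k).length + 1 := rfl
  rw [this, ds2_length]

lemma ds2_ne_nil (t k : ℕ) : ds2 t k ≠ [] := by
  intro h
  have := ds2_length t k
  rw [h] at this
  simp at this

lemma ds1_ne_nil (t k : ℕ) : ds1 t k ≠ [] := by simp [ds1]

lemma ds2_getElem (t k : ℕ) (j : ℕ) (h : j < (ds2 t k).length) :
    (ds2 t k)[j] = if j < t then Zd else if j = t then Pd else Od := by
  rw [ds2_length] at h
  by_cases hj : j < t
  · simp only [ds2]
    rw [List.getElem_append_left (by simpa using hj), List.getElem_replicate]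
    simp [hj]
  · push_neg at hj
    simp only [ds2]
    rw [List.getElem_append_right (by simpa using hj)]
    simp only [List.length_replicate]
    by_cases hjt : j = t
    · subst hjt
      simp [hj]
    · obtain ⟨i, hi⟩ : ∃ i, j - t = i + 1 := ⟨j - t - 1, by omega⟩
      simp only [hi]
      rw [List.getElem_cons_succ, List.getElem_replicate]
      simp [hjt, show ¬ (j < t) by omega]

lemma ds1_getElem (t k : ℕ) (j : ℕ) (h : j < (ds1 t k).length) :
    (ds1 t k)[j] = if j = 0 then Od
      else if j < t + 1 then Zd else if j = t + 1 then Pd else Od := by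
  rcases j with _ | j
  · simp [ds1]
  · simp only [ds1]
    rw [List.getElem_cons_succ, ds2_getElem]
    have hne : j + 1 ≠ 0 := by omega
    simp only [hne, if_false]
    by_cases h1 : j < t
    · simp [h1, show j + 1 < t + 1 by omega]
    · simp only [h1, if_false]
      by_cases h2 : j = t
      · simp [h2]
      · simp [h2, show ¬ (j + 1 < t + 1) by omega, show j + 1 ≠ t + 1 by omega]

lemma valQ_replicate_O (k c : ℕ) :
    valQ (List.replicate k Od) c = 2 ^ (-(c:ℤ)) * (2 ^ k - 1) := by
  induction k with
  | zero => simp [valQ_nil]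
  | succ k ih =>
    rw [List.replicate_succ, valQ_cons, ih, List.length_replicate]
    have h1 : (2:ℚ) ^ ((k : ℤ) - (c : ℤ)) = 2 ^ (k:ℕ) * 2 ^ (-(c:ℤ)) := by
      rw [show (k : ℤ) - (c:ℤ) = (k : ℤ) + (-(c:ℤ)) by ring,
        zpow_add₀ (by norm_num : (2:ℚ) ≠ 0), zpow_natCast]
    rw [h1, show (Od.1 : ℚ) = 1 from rfl]
    push_cast
    ring

lemma valQ_zd_cons (ds : List Dig) (k₂ : ℕ) : valQ (Zd :: ds) k₂ = valQ ds k₂ := by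
  rw [valQ_cons, show (Zd.1 : ℚ) = 0 from rfl]
  ring

lemma valQ_pd_cons (ds : List Dig) (k₂ : ℕ) : valQ (Pd :: ds) k₂ = valQ ds k₂ := by
  rw [valQ_cons, show (Pd.1 : ℚ) = 0 from rfl]
  ring

lemma valQ_ds2 (t k : ℕ) : valQ (ds2 t k) k = 1 - 2 ^ (-(k:ℤ)) := by
  induction t with
  | zero =>
    rw [show ds2 0 k = Pd :: List.replicate k Od from rfl, valQ_pd_cons, valQ_replicate_O]
    rw [mul_sub]
    rw [show (2:ℚ) ^ (-(k:ℤ)) * 2 ^ (k:ℕ) = 1 by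
      rw [← zpow_natCast (2:ℚ) k, ← zpow_add₀ (by norm_num : (2:ℚ) ≠ 0)]
      norm_num]
    ring
  | succ t ih =>
    have h : ds2 (t+1) k = Zd :: ds2 t k := by
      rw [show ds2 (t+1) k = List.replicate (t+1) Zd ++ Pd :: List.replicate k Od from rfl,
        List.replicate_succ, List.cons_append]
      rfl
    rw [h, valQ_zd_cons, ih]

lemma valQ_ds1 (t k : ℕ) :
    valQ (ds1 t k) k = 2 ^ (t+1 : ℕ) + 1 - 2 ^ (-(k:ℤ)) := by
  rw [show ds1 t k = Od :: ds2 t k from rfl, valQ_cons, valQ_ds2, ds2_length]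
  have h1 : (2:ℚ) ^ (((t + k + 1 : ℕ) : ℤ) - (k : ℤ)) = 2 ^ (t + 1 : ℕ) := by
    rw [show ((t + k + 1 : ℕ) : ℤ) - (k:ℤ) = ((t + 1 : ℕ) : ℤ) by push_cast; ring,
      zpow_natCast]
  rw [h1, show (Od.1 : ℚ) = 1 from rfl]
  ring



/-- the sum in `IsPERep` (q = 2) equals `valQ`. -/
lemma sumconv (ds : List Dig) (k₂ : ℕ) :
    (∑ j : Fin ds.length,
      ((ds.get j).1 : ℚ) * ((2:ℕ) : ℚ) ^ (((ds.length : ℤ) - 1 - (j : ℕ)) - (k₂ : ℤ)))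
      = valQ ds k₂ := by
  rw [valQ]
  norm_num

/-- marker facts -/
lemma ds2_mark (t k : ℕ) (j : ℕ) (h : j < (ds2 t k).length) :
    ((ds2 t k)[j].2.1 = true) ↔ j = t := by
  rw [ds2_getElem t k j h]
  split_ifs with h1 h2 <;> simp [Zd, Od, Pd] <;> omega

lemma ds1_mark (t k : ℕ) (j : ℕ) (h : j < (ds1 t k).length) :
    ((ds1 t k)[j].2.1 = true) ↔ j = t + 1 := by
  rw [ds1_getElem t k j h]
  split_ifs with h1 h2 h3 <;> simp [Zd, Od, Pd] <;> omega

lemma ds2_cursor (t k : ℕ) (j : ℕ) (h : j < (ds2 t k).length) :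
    ((ds2 t k)[j].2.2 = true) ↔ j = t := by
  rw [ds2_getElem t k j h]
  split_ifs with h1 h2 <;> simp [Zd, Od, Pd] <;> omega

lemma ds1_cursor (t k : ℕ) (j : ℕ) (h : j < (ds1 t k).length) :
    ((ds1 t k)[j].2.2 = true) ↔ j = t + 1 := by
  rw [ds1_getElem t k j h]
  split_ifs with h1 h2 h3 <;> simp [Zd, Od, Pd] <;> omega

/-- The subset of `GL (Fin 2) ℚ` under consideration. -/
def Rset : Set (GL (Fin 2) ℚ) :=
  {M : GL (Fin 2) ℚ | ∃ r ∈ AddSubmonoid.closure gens,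
    (M : Matrix (Fin 2) (Fin 2) ℚ) = !![1, r; 0, 1]}

/-- The central negative lemma : a word whose digit part has the marker at
position `T` out of `T + k + 1` digits and value `n' + 1 - 2^(-k)` with `n' < k`
is not a PE-representation of any element of `Rset`. -/
lemma not_rep (ds : List Dig) (T n' k : ℕ)
    (hlen : ds.length = T + k + 1)
    (hmarkT : ∀ h : T < ds.length, ds[T].2.1 = true)
    (hval : valQ ds k = (n' : ℚ) + 1 - 2 ^ (-(k:ℤ)))
    (hn' : n' < k) (hk : 1 ≤ k) :
    ∀ M ∈ Rset, ¬ IsPERep 2 M (Sum.inl true :: ds.map Sum.inr) := by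
  rintro M ⟨r', hr'S, hM⟩ ⟨ε, ds', hw, hne, m, r, k₂, hk₂, hmat, hmark, hcur, hcurm, hsum⟩
  rw [List.cons.injEq] at hw
  obtain ⟨hhead, htail⟩ := hw
  have hε : true = ε := Sum.inl.inj hhead
  subst hε
  have hds : ds = ds' := List.map_injective_iff.mpr Sum.inr_injective htail
  subst hds
  -- determine k₂
  have hTlt : T < ds.length := by omega
  have hmT := (hmark ⟨T, hTlt⟩).mp (by
    rw [List.get_eq_getElem]
    exact hmarkT hTlt)
  simp only at hmT
  have hk₂k : k₂ = k := by omega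
  -- compute r
  rw [if_pos rfl, one_mul, sumconv, hk₂k, hval] at hsum
  -- r' = r
  have hrr : r' = r := by
    have h01 := congrFun (congrFun (hM.symm.trans hmat) 0) 1
    simpa using h01
  rw [hrr, ← hsum] at hr'S
  exact notInS n' k hn' hk hr'S

/-- value of the chosen element -/
noncomputable def rq (k : ℕ) : ℚ := (k:ℚ) + 1 - 2 ^ (-(k:ℤ))

lemma rq_mem (k : ℕ) : rq k ∈ AddSubmonoid.closure gens := by
  have h : rq k = ∑ i ∈ Finset.range k, ((1:ℚ) + 2 ^ (-((i:ℤ) + 1))) := by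
    rw [Finset.sum_add_distrib, geom_sum_neg, Finset.sum_const, Finset.card_range]
    rw [rq]
    push_cast
    ring
  rw [h]
  refine AddSubmonoid.sum_mem _ ?_
  intro i _
  refine AddSubmonoid.subset_closure ⟨i + 1, by omega, ?_⟩
  push_cast
  ring_nf

noncomputable def M₀ (k : ℕ) : GL (Fin 2) ℚ :=
  Matrix.GeneralLinearGroup.mkOfDetNeZero !![1, rq k; 0, 1]
    (by norm_num [Matrix.det_fin_two_of])

lemma coe_M₀ (k : ℕ) : (M₀ k : Matrix (Fin 2) (Fin 2) ℚ) = !![1, rq k; 0, 1] := rfl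

lemma M₀_mem (k : ℕ) : M₀ k ∈ Rset := ⟨rq k, rq_mem k, coe_M₀ k⟩

lemma two_zpow_neg_le_half (k : ℕ) (hk : 1 ≤ k) : (2:ℚ) ^ (-(k:ℤ)) ≤ 1/2 := by
  rw [show (1/2 : ℚ) = 2 ^ (-(1:ℤ)) by norm_num]
  apply zpow_le_zpow_right₀ (by norm_num : (1:ℚ) ≤ 2)
  omega

lemma rq_pos (k : ℕ) (hk : 1 ≤ k) : 0 < rq k := by
  rw [rq]
  have h1 := two_zpow_neg_le_half k hk
  have h2 : (0:ℚ) ≤ (k:ℚ) := by positivity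
  linarith

/-- the canonical word for `M₀ (2^s)` -/
def wd (s : ℕ) : List (PELetter 2) :=
  Sum.inl true :: (ds1 (s-1) (2^s)).map Sum.inr

lemma wd_length (s : ℕ) (hs : 1 ≤ s) : (wd s).length = s + 2^s + 2 := by
  rw [wd, List.length_cons, List.length_map, ds1_length]
  omega

lemma isPERep_wd (s : ℕ) (hs : 1 ≤ s) : IsPERep 2 (M₀ (2^s)) (wd s) := by
  set k := 2^s with hkdef
  have hk1 : 1 ≤ k := Nat.one_le_two_pow
  have hlen : (ds1 (s-1) k).length = (s-1) + k + 2 := ds1_length _ _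
  refine ⟨true, ds1 (s-1) k, rfl, ds1_ne_nil _ _, 0, rq k, k, by omega, ?_, ?_, ?_, ?_, ?_⟩
  · rw [coe_M₀]
    norm_num
  · intro j
    rw [List.get_eq_getElem]
    rw [ds1_mark (s-1) k j j.isLt,
      show (ds1 (s-1) k).length - 1 - k = (s-1) + 1 from by rw [hlen]; omega]
  · refine ⟨⟨s, by omega⟩, ?_, ?_⟩
    · show ((ds1 (s-1) k).get ⟨s, by omega⟩).2.2 = true
      rw [List.get_eq_getElem]
      rw [ds1_cursor (s-1) k s (by omega)]
      omega
    · intro j hj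
      rw [List.get_eq_getElem, ds1_cursor (s-1) k j j.isLt] at hj
      apply Fin.ext
      simp only
      omega
  · intro j hj
    rw [List.get_eq_getElem, ds1_cursor (s-1) k j j.isLt] at hj
    have hlen' := hlen
    have hj' : (j : ℕ) = s := by omega
    rw [hj', hlen']
    push_cast
    omega
  · rw [if_pos rfl, one_mul, sumconv, valQ_ds1]
    rw [rq]
    have : (s - 1) + 1 = s := by omega
    rw [this]
    congr 1
    rw [hkdef]
    push_cast
    ring

lemma isPE_wd (s : ℕ) (hs : 1 ≤ s) : IsPE 2 (M₀ (2^s)) (wd s) := by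
  refine ⟨isPERep_wd s hs, ?_⟩
  intro w' hrep
  set k := 2^s with hkdef
  have hk1 : 1 ≤ k := Nat.one_le_two_pow
  obtain ⟨ε, ds', hw, hne, m, r, k₂, hk₂, hmat, hmark, hcur, hcurm, hsum⟩ := hrep
  -- r = rq k
  have hr : r = rq k := by
    have h01 := congrFun (congrFun ((coe_M₀ k).symm.trans hmat) 0) 1
    simpa using h01.symm
  rw [sumconv] at hsum
  obtain ⟨N, hN, hNlt⟩ := valQ_int ds' k₂
  have hval : valQ ds' k₂ = rq k := by
    cases ε
    · exfalso
      rw [if_neg (by simp), hr] at hsum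
      have h0 := valQ_nonneg ds' k₂
      have := rq_pos k hk1
      nlinarith [hsum]
    · rw [if_pos rfl, one_mul] at hsum
      rw [hsum, hr]
  -- now N * 2^{-k₂} = rq k
  rw [hN] at hval
  have h2pos : (0:ℚ) < 2 ^ (k₂:ℤ) := by positivity
  have hNval : (N:ℚ) = rq k * 2 ^ (k₂:ℤ) := by
    have := congrArg (fun x => x * (2:ℚ) ^ (k₂:ℤ)) hval
    rw [mul_assoc, ← zpow_add₀ (by norm_num : (2:ℚ) ≠ 0)] at this
    simpa using this
  -- k ≤ k₂
  have hkk₂ : k ≤ k₂ := by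
    by_contra hcon
    push_neg at hcon
    set z : ℤ := ((k:ℤ) + 1) * 2 ^ (k₂:ℕ) - (N:ℤ) with hz
    have hzq : (z:ℚ) = 2 ^ ((k₂:ℤ) - (k:ℤ)) := by
      have hne2 : (2:ℚ) ≠ 0 := by norm_num
      have hsplit : rq k * 2 ^ (k₂:ℤ) =
          ((k:ℚ) + 1) * 2 ^ (k₂:ℤ) - 2 ^ ((k₂:ℤ) - (k:ℤ)) := by
        rw [rq, zpow_sub₀ hne2, _root_.zpow_neg]
        field_simp
      have hcast : (z:ℚ) = ((k:ℚ) + 1) * 2 ^ (k₂:ℤ) - (N:ℚ) := by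
        rw [hz]
        push_cast
        rw [← zpow_natCast (2:ℚ) k₂]
      rw [hcast, hNval, hsplit]
      ring
    have hub : (z:ℚ) < 1 := by
      rw [hzq]
      calc (2:ℚ) ^ ((k₂:ℤ) - (k:ℤ)) ≤ 2 ^ (-(1:ℤ)) := by
            apply zpow_le_zpow_right₀ (by norm_num : (1:ℚ) ≤ 2)
            omega
        _ < 1 := by norm_num
    have hlb : (0:ℚ) < (z:ℚ) := by rw [hzq]; positivity
    have h1 : (0:ℤ) < z := by exact_mod_cast hlb
    have h2 : z < 1 := by exact_mod_cast hub
    omega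
  -- s + k₂ < ds'.length
  have hslt : s + k₂ < ds'.length := by
    have hk2q : (k:ℚ) ≤ rq k := by
      rw [rq]
      have h1 : (2:ℚ) ^ (-(k:ℤ)) ≤ 1 := by
        rw [show (1:ℚ) = 2 ^ (0:ℤ) by norm_num]
        apply zpow_le_zpow_right₀ (by norm_num : (1:ℚ) ≤ 2)
        omega
      linarith
    have h3 : (k:ℚ) * 2 ^ (k₂:ℤ) ≤ (N:ℚ) := by
      rw [hNval]
      have := mul_le_mul_of_nonneg_right hk2q (le_of_lt h2pos)
      linarith
    have h4 : ((2 ^ (s + k₂) : ℕ) : ℚ) ≤ (N:ℚ) := by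
      rw [show ((2 ^ (s + k₂) : ℕ) : ℚ) = (k:ℚ) * 2 ^ (k₂:ℤ) by
        rw [hkdef]
        push_cast
        rw [pow_add, ← zpow_natCast (2:ℚ) k₂]]
      exact h3
    have h5 : (2 ^ (s + k₂) : ℕ) ≤ N := by exact_mod_cast h4
    have h6 : (2:ℕ) ^ (s + k₂) < 2 ^ ds'.length := by omega
    exact (Nat.pow_lt_pow_iff_right (by norm_num)).mp h6
  rw [hw, wd_length s hs, List.length_cons, List.length_map]
  omega

/-- prefix of a replicate-headed list -/
lemma prefix_replicate {α : Type*} : ∀ (pre : List α) (m : ℕ) (suf X : List α) (a : α),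
    pre ++ suf = List.replicate m a ++ X → pre.length ≤ m →
    pre = List.replicate pre.length a ∧
      suf = List.replicate (m - pre.length) a ++ X := by
  intro pre
  induction pre with
  | nil => intro m suf X a h _; simpa using h
  | cons p pre ih =>
    intro m suf X a h hle
    simp only [List.length_cons] at hle
    have hm : m = (m - 1) + 1 := by omega
    rw [hm, List.replicate_succ, List.cons_append, List.cons_append, List.cons.injEq] at h
    obtain ⟨hpa, h2⟩ := h
    obtain ⟨ih1, ih2⟩ := ih (m-1) suf X a h2 (by omega)
    constructor
    · rw [List.length_cons, List.replicate_succ, ← ih1, hpa]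
    · rw [ih2]
      simp only [List.length_cons]
      congr 2
      omega


end PEAux

open PEAux in
/-- The subset of `BS(1,2)` corresponding to the submonoid of `ℚ` generated by the
numbers `1 + 2^(-i)`, `i ≥ 1`, is not PE-regular. -/
theorem submonoid_not_isPERegular :
    ¬ IsPERegular 2 {M : GL (Fin 2) ℚ |
      ∃ r ∈ AddSubmonoid.closure {x : ℚ | ∃ i : ℕ, 1 ≤ i ∧ x = 1 + 2 ^ (-(i : ℤ))},
        (M : Matrix (Fin 2) (Fin 2) ℚ) = !![1, r; 0, 1]} := by
  intro hreg
  obtain ⟨σ, hfin, dfa, hacc⟩ := hreg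
  set p := Fintype.card σ with hp
  set s := p + 1 with hs
  set k := 2 ^ s with hk
  have hs1 : 1 ≤ s := by omega
  have hk1 : 1 ≤ k := Nat.one_le_two_pow
  have hks : s + 1 ≤ k := by
    rw [hk]
    calc s + 1 ≤ 2 ^ s := Nat.succ_le_of_lt (Nat.lt_two_pow_self)
      _ = k := hk.symm
  -- the language
  set L : Language (PELetter 2) := {w : List (PELetter 2) | ∃ M ∈ Rset, IsPE 2 M w} with hL
  have haccL : dfa.accepts = L := by
    rw [hacc]
    rfl
  have hxL : wd s ∈ L := ⟨M₀ k, M₀_mem k, isPE_wd s hs1⟩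
  have hxacc : wd s ∈ dfa.accepts := by rw [haccL]; exact hxL
  have hlenx : Fintype.card σ ≤ (wd s).length := by
    rw [wd_length s hs1]
    omega
  obtain ⟨a, b, c, hx, hab, hbne, hsub⟩ := dfa.pumping_lemma hxacc hlenx
  have hac : a ++ c ∈ L := by
    rw [← haccL]
    apply hsub
    refine Language.mem_mul.mpr ?_
    refine ⟨a ++ [], ?_, c, rfl, by simp⟩
    rw [Language.mem_mul]
    exact ⟨a, rfl, [], Language.nil_mem_kstar _, rfl⟩
  obtain ⟨M, hMR, hMPE⟩ := hac
  have hMrep := hMPE.1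
  -- case analysis on a
  rcases a with _ | ⟨a₀, a'⟩
  · -- a = [], b starts with the sign letter; a ++ c = c is all inr
    simp only [List.nil_append] at hx hMrep
    rcases b with _ | ⟨b₀, b'⟩
    · exact hbne rfl
    rw [wd, List.cons_append, List.cons.injEq] at hx
    obtain ⟨hb₀, htail⟩ := hx
    obtain ⟨db, dc, hds, hdb, hdc⟩ := List.append_eq_map_iff.mp htail.symm
    obtain ⟨ε', ds', hw', _⟩ := hMrep
    rw [hw'] at hdc
    rcases dc with _ | ⟨d₀, dc'⟩
    · simp at hdc
    · rw [List.map_cons, List.cons.injEq] at hdc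
      exact absurd hdc.1 (by simp)
  · -- a = a₀ :: a'
    rw [wd, List.cons_append, List.cons_append, List.cons.injEq] at hx
    obtain ⟨ha₀, htail'⟩ := hx
    subst ha₀
    have htail : a' ++ (b ++ c) = (ds1 (s-1) k).map Sum.inr := by
      rw [htail', List.append_assoc]
    obtain ⟨da, rest, hsplit1, hda, hrest⟩ := List.append_eq_map_iff.mp htail
    obtain ⟨db, dc, hsplit2, hdb, hdc⟩ := List.append_eq_map_iff.mp hrest.symm
    subst hsplit2
    have hdbne : db ≠ [] := by
      intro h
      rw [h] at hdb
      exact hbne (by simpa using hdb.symm)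
    have hlensum : da.length + db.length ≤ p - 1 := by
      have h1 : da.length = a'.length := by rw [← hda, List.length_map]
      have h2 : db.length = b.length := by rw [← hdb, List.length_map]
      simp only [List.length_cons] at hab
      omega
    -- ds1 (s-1) k = da ++ db ++ dc
    simp only [List.cons_append] at hMrep
    have hsplit1 : Od :: (List.replicate (s-1) Zd ++ Pd :: List.replicate k Od)
        = da ++ (db ++ dc) := hsplit1
    rcases da with _ | ⟨d₀, da'⟩
    · -- da = [] : db starts with Od
      simp only [List.nil_append] at hsplit1
      rcases db with _ | ⟨e₀, db'⟩
      · exact hdbne rfl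
      rw [List.cons_append, List.cons.injEq] at hsplit1
      obtain ⟨rfl, hsplit1'⟩ := hsplit1
      have hdb'len : db'.length ≤ s - 1 := by
        simp only [List.length_cons] at hlensum
        omega
      obtain ⟨hdb'eq, hdceq⟩ := prefix_replicate db' (s-1) dc _ Zd hsplit1'.symm hdb'len
      have hceq : c = (ds2 (s - 1 - db'.length) k).map Sum.inr := by
        rw [← hdc, hdceq]
        rfl
      have ha' : a' = [] := by simpa using hda.symm
      subst ha'
      simp only [List.nil_append] at hMrep
      rw [hceq] at hMrep
      refine not_rep (ds2 (s - 1 - db'.length) k) (s - 1 - db'.length) 0 k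
        (ds2_length _ _) ?_ ?_ (by omega) hk1 M hMR hMrep
      · intro h
        rw [(ds2_mark _ _ _ h)]
      · rw [valQ_ds2]
        norm_num
    · -- da = d₀ :: da'
      rw [List.cons_append, List.cons.injEq] at hsplit1
      obtain ⟨rfl, hsplit1'⟩ := hsplit1
      rw [← List.append_assoc] at hsplit1'
      have hdalen : (da' ++ db).length ≤ s - 1 := by
        rw [List.length_append]
        simp only [List.length_cons] at hlensum
        omega
      obtain ⟨hpre, hsuf⟩ := prefix_replicate (da' ++ db) (s-1) dc _ Zd hsplit1'.symm hdalen
      have hda'len : da'.length ≤ (da' ++ db).length := by simp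
      obtain ⟨hda'eq, hdbeq⟩ := prefix_replicate da' (da' ++ db).length db
        [] Zd (by rw [List.append_nil]; exact hpre) (by omega)
      rw [List.append_nil] at hdbeq
      -- a ++ c = inl true :: map inr (ds1 (s-1-db.length) k)
      set j := db.length with hj
      have hj1 : 1 ≤ j := by
        rw [hj]
        cases db
        · exact absurd rfl hdbne
        · simp
      have hjle : da'.length + j ≤ p - 1 := by
        simp only [List.length_cons] at hlensum
        omega
      have hcombined : da' ++ dc = List.replicate (s - 1 - j) Zd ++ Pd :: List.replicate k Od := by
        rw [hda'eq, hsuf, ← List.append_assoc, ← List.replicate_add]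
        congr 2
        rw [List.length_append]
        omega
      have hword : a' ++ c = (ds1 (s - 1 - j) k).map Sum.inr := by
        rw [← hda, ← hdc, ← List.map_append]
        congr 1
        rw [List.cons_append, hcombined]
        rfl
      have hn'lt : 2 ^ (s - 1 - j + 1) < k := by
        rw [hk]
        apply Nat.pow_lt_pow_right (by norm_num)
        omega
      rw [hword] at hMrep
      refine not_rep (ds1 (s - 1 - j) k) (s - 1 - j + 1) (2 ^ (s - 1 - j + 1)) k
        (by rw [ds1_length]; omega) ?_ ?_ hn'lt hk1 M hMR hMrep
      · intro h
        rw [(ds1_mark _ _ _ h)]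
      · rw [valQ_ds1]
        push_cast
        ring
end

section
/- Bounded precision for rational subsets with cursor at the origin: let q ≥ 2 be an integer and let R be a rational subset of BS(1,q) such that every M ∈ R has top-left matrix entry equal to 1 (i.e., (M : Matrix (Fin 2) (Fin 2) ℚ) 0 0 = 1). Then there exists k : ℕ such that for every M ∈ R, the rational number q^k * ((M : Matrix (Fin 2) (Fin 2) ℚ) 0 1) is an integer (lies in the range of the coercion ℤ → ℚ). -/
open Matrix

lemma qQ_ne_zero {q : ℕ} (hq : 2 ≤ q) : (q : ℚ) ≠ 0 := by
  simpa using (Nat.cast_ne_zero (R := ℚ)).2 (by omega)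

lemma collectQ {q : ℕ} (hq : 2 ≤ q) (α β γ : ℤ) (x : ℚ) (h : α + β = γ) :
    (q:ℚ)^α * ((q:ℚ)^β * x) = (q:ℚ)^γ * x := by
  rw [← mul_assoc, ← zpow_add₀ (qQ_ne_zero hq), h]

lemma zpow_mul_intQ {q : ℕ} (hq : 2 ≤ q) (e : ℤ) (he : 0 ≤ e) (n : ℤ) :
    (q:ℚ)^e * (n : ℚ) = ((q^e.toNat * n : ℤ) : ℚ) := by
  push_cast
  rw [← zpow_natCast (q:ℚ) e.toNat, Int.toNat_of_nonneg he]

lemma mem_BS_form {q : ℕ} (hq : 2 ≤ q) (g : GL (Fin 2) ℚ) (hg : g ∈ BS q hq) :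
    ∃ (m : ℤ) (x : ℚ) (c : ℕ) (n : ℤ),
      ((g : Matrix (Fin 2) (Fin 2) ℚ)) = !![(q:ℚ)^m, x; 0, 1] ∧ (q:ℚ)^(c:ℤ) * x = n := by
  have hq0 := qQ_ne_zero hq
  induction hg using Subgroup.closure_induction with
  | mem g hgmem =>
    rcases hgmem with h | h
    · refine ⟨0, 1, 0, 1, ?_, by norm_num⟩
      subst h
      show !![1, 1; 0, 1] = _
      norm_num
    · refine ⟨1, 0, 0, 0, ?_, by norm_num⟩
      subst h
      show !![(q:ℚ), 0; 0, 1] = _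
      norm_num
  | one =>
    refine ⟨0, 0, 0, 0, ?_, by norm_num⟩
    show ((1 : GL (Fin 2) ℚ) : Matrix (Fin 2) (Fin 2) ℚ) = _
    rw [Units.val_one, Matrix.one_fin_two]
    norm_num
  | mul g h hg hh ihg ihh =>
    obtain ⟨m, x, c, n, hm, hc⟩ := ihg
    obtain ⟨m', x', c', n', hm', hc'⟩ := ihh
    refine ⟨m + m', (q:ℚ)^m * x' + x, c + c' + m.natAbs,
      q^(((c:ℤ) + m.natAbs + m).toNat) * n' + q^(c' + m.natAbs) * n, ?_, ?_⟩
    · rw [Units.val_mul, hm, hm', Matrix.mul_fin_two, zpow_add₀ hq0]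
      ext i j
      fin_cases i <;> fin_cases j <;> simp
    · have hA : ((c + c' + m.natAbs : ℕ) : ℤ) + m = ((c:ℤ) + m.natAbs + m) + c' := by
        push_cast; ring
      have hApos : (0:ℤ) ≤ (c:ℤ) + m.natAbs + m := by omega
      rw [mul_add, collectQ hq ((c + c' + m.natAbs : ℕ):ℤ) m (((c + c' + m.natAbs : ℕ):ℤ) + m) x' rfl, hA,
        ← collectQ hq ((c:ℤ) + m.natAbs + m) (c':ℤ) (((c:ℤ) + m.natAbs + m) + c') x' rfl, hc',
        zpow_mul_intQ hq _ hApos,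
        show ((c + c' + m.natAbs : ℕ) : ℤ) = ((c' + m.natAbs : ℕ) : ℤ) + c by push_cast; ring,
        ← collectQ hq ((c' + m.natAbs : ℕ):ℤ) (c:ℤ) (((c' + m.natAbs : ℕ):ℤ) + c) x rfl, hc,
        zpow_mul_intQ hq _ (by positivity)]
      push_cast
      have he : (((c':ℤ) + |m|).toNat) = c' + m.natAbs := by
        rw [Int.abs_eq_natAbs]; omega
      rw [he, pow_add]
  | inv g hg ih =>
    obtain ⟨m, x, c, n, hm, hc⟩ := ih
    have hB : ((g : Matrix (Fin 2) (Fin 2) ℚ)) * !![(q:ℚ)^(-m), -((q:ℚ)^(-m) * x); 0, 1] = 1 := by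
      rw [hm, Matrix.mul_fin_two]
      have h1 : (q:ℚ)^m * (q:ℚ)^(-m) = 1 := by
        rw [← zpow_add₀ hq0]; simp
      have h2 : (q:ℚ)^m ≠ 0 := zpow_ne_zero m hq0
      ext i j
      fin_cases i <;> fin_cases j <;>
        simp [Matrix.one_fin_two, _root_.zpow_neg] <;> field_simp <;> ring
    refine ⟨-m, -((q:ℚ)^(-m) * x), c + m.natAbs, -(q^(((m.natAbs : ℤ) - m).toNat) * n), ?_, ?_⟩
    · have h2 : ((g⁻¹ : GL (Fin 2) ℚ) : Matrix (Fin 2) (Fin 2) ℚ)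
          = ((g⁻¹ : GL (Fin 2) ℚ) : Matrix (Fin 2) (Fin 2) ℚ)
            * (((g : Matrix (Fin 2) (Fin 2) ℚ)) * !![(q:ℚ)^(-m), -((q:ℚ)^(-m) * x); 0, 1]) := by
        rw [hB, mul_one]
      rw [h2, ← mul_assoc]
      have h3 : ((g⁻¹ : GL (Fin 2) ℚ) : Matrix (Fin 2) (Fin 2) ℚ)
          * (g : Matrix (Fin 2) (Fin 2) ℚ) = 1 := by
        rw [← Units.val_mul, inv_mul_cancel g, Units.val_one]
      rw [h3, one_mul]
    · rw [mul_neg, show ((c + m.natAbs : ℕ):ℤ) = ((m.natAbs:ℤ) - m) + (m + c) by push_cast; ring,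
        ← collectQ hq ((m.natAbs:ℤ) - m) (m + (c:ℤ)) (((m.natAbs:ℤ) - m) + (m + c)) ((q:ℚ)^(-m) * x) rfl,
        ← collectQ hq (m:ℤ) (c:ℤ) ((m:ℤ) + c) ((q:ℚ)^(-m) * x) rfl,
        show (q:ℚ)^(c:ℤ) * ((q:ℚ)^(-m) * x) = (q:ℚ)^(-m) * ((q:ℚ)^(c:ℤ) * x) by ring,
        hc, collectQ hq m (-m) 0 (n:ℚ) (by ring), zpow_zero, one_mul,
        zpow_mul_intQ hq _ (by omega)]
      push_cast
      ring

lemma prod_form {q : ℕ} (hq : 2 ≤ q) {ι : Type} (f : ι → GL (Fin 2) ℚ)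
    (m : ι → ℤ) (x : ι → ℚ) (C2 : ℕ)
    (hmat : ∀ i, ((f i : GL (Fin 2) ℚ) : Matrix (Fin 2) (Fin 2) ℚ) = !![(q:ℚ)^(m i), x i; 0, 1])
    (hint : ∀ i, ∃ n : ℤ, (q:ℚ)^((C2:ℕ):ℤ) * x i = n) :
    ∀ w : List ι, ∃ y : ℚ,
      (((w.map f).prod : GL (Fin 2) ℚ) : Matrix (Fin 2) (Fin 2) ℚ)
        = !![(q:ℚ)^((w.map m).sum), y; 0, 1] ∧
      ∀ B : ℤ, 0 ≤ B → (∀ j, -B ≤ ((w.take j).map m).sum) →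
        ∃ n : ℤ, (q:ℚ)^(B + C2) * y = n := by
  have hq0 := qQ_ne_zero hq
  intro w
  induction w with
  | nil =>
    refine ⟨0, ?_, fun B hB hpre => ⟨0, by simp⟩⟩
    show ((1 : GL (Fin 2) ℚ) : Matrix (Fin 2) (Fin 2) ℚ) = _
    rw [Units.val_one, Matrix.one_fin_two]
    norm_num
  | cons i w ih =>
    obtain ⟨y, hy, hyB⟩ := ih
    refine ⟨(q:ℚ)^(m i) * y + x i, ?_, ?_⟩
    · rw [List.map_cons, List.prod_cons, Units.val_mul, hmat i, hy, Matrix.mul_fin_two,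
        List.map_cons, List.sum_cons, zpow_add₀ hq0]
      ext a b
      fin_cases a <;> fin_cases b <;> simp
    · intro B hB hpre
      have h1 : -B ≤ m i := by simpa using hpre 1
      have hB' : (0:ℤ) ≤ B + m i := by omega
      have hpre' : ∀ j, -(B + m i) ≤ ((w.take j).map m).sum := by
        intro j
        have h2 := hpre (j+1)
        rw [List.take_succ_cons, List.map_cons, List.sum_cons] at h2
        omega
      obtain ⟨n', hn'⟩ := hyB (B + m i) hB' hpre'
      obtain ⟨ni, hni⟩ := hint i
      refine ⟨n' + q^B.toNat * ni, ?_⟩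
      rw [mul_add, collectQ hq (B + C2) (m i) (B + m i + C2) y (by ring), hn',
        ← collectQ hq B (C2:ℤ) (B + C2) (x i) rfl, hni, zpow_mul_intQ hq B hB ni]
      push_cast
      ring

lemma height_bound {ι σ : Type} [Fintype σ] (M : DFA ι σ)
    (m : ι → ℤ) (C : ℕ) (hC : ∀ i, (m i).natAbs < C)
    (hzero : ∀ w ∈ M.accepts, ((w.map m).sum) = 0) :
    ∀ w ∈ M.accepts, ∀ j, -((Fintype.card σ : ℤ) * C) ≤ ((w.take j).map m).sum := by
  set N := Fintype.card σ with hN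
  intro w hw j
  by_contra hcon
  push_neg at hcon
  set S : ℕ → ℤ := fun i => ((w.take i).map m).sum with hS
  have hstep : ∀ i, S i - (C:ℤ) ≤ S (i+1) := by
    intro i
    by_cases hi : i < w.length
    · have : w.take (i+1) = w.take i ++ [w.get ⟨i, hi⟩] := by
        rw [List.take_succ, List.getElem?_eq_getElem hi]
        rfl
      have hle := hC (w.get ⟨i, hi⟩)
      simp only [hS, this, List.map_append, List.sum_append, List.map_cons, List.map_nil,
        List.sum_cons, List.sum_nil]
      have : -(C:ℤ) ≤ m (w.get ⟨i, hi⟩) := by omega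
      omega
    · have : w.take (i+1) = w.take i := by
        rw [List.take_of_length_le (by omega), List.take_of_length_le (by omega)]
      simp only [hS, this]
      omega
  have hex : ∀ s : Fin (N+1), ∃ i, S i < -(((s:ℕ):ℤ) * C) := by
    intro s
    refine ⟨j, lt_of_lt_of_le hcon ?_⟩
    have hsN : ((s:ℕ):ℤ) ≤ N := by exact_mod_cast Nat.lt_succ_iff.mp s.isLt
    have h2 : ((s:ℕ):ℤ) * C ≤ (N:ℤ) * C := mul_le_mul_of_nonneg_right hsN (by positivity)
    linarith
  let J : Fin (N+1) → ℕ := fun s => Nat.find (hex s)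
  have hJ : ∀ s, S (J s) < -(((s:ℕ):ℤ) * C) := fun s => Nat.find_spec (hex s)
  have hJmin : ∀ s : Fin (N+1), ∀ i < J s, -(((s:ℕ):ℤ) * C) ≤ S i := by
    intro s i hi
    have h := Nat.find_min (hex s) hi
    push_neg at h
    exact h
  have hJlb : ∀ s : Fin (N+1), -(((s:ℕ):ℤ) * C) - C ≤ S (J s) := by
    intro s
    rcases Nat.eq_zero_or_pos (J s) with h0 | hpos
    · have h1 := hJ s
      rw [h0] at h1
      have h2 : S 0 = 0 := by simp [hS]
      have h3 : (0:ℤ) ≤ ((s:ℕ):ℤ) * C := by positivity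
      omega
    · obtain ⟨t, ht⟩ := Nat.exists_eq_add_of_lt hpos
      rw [Nat.zero_add] at ht
      have h1 := hJmin s t (by omega)
      have h2 := hstep t
      rw [← ht] at h2
      omega
  have hmono : ∀ s s' : Fin (N+1), (s:ℕ) ≤ (s':ℕ) → J s ≤ J s' := by
    intro s s' hss
    apply Nat.find_min'
    refine lt_of_lt_of_le (hJ s') ?_
    have h1 : ((s:ℕ):ℤ) ≤ ((s':ℕ):ℤ) := by exact_mod_cast hss
    have h2 : ((s:ℕ):ℤ) * C ≤ ((s':ℕ):ℤ) * C := mul_le_mul_of_nonneg_right h1 (by positivity)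
    linarith
  have hcard : Fintype.card σ < Fintype.card (Fin (N+1)) := by simp [hN]
  obtain ⟨s, s', hne, heq⟩ :=
    Fintype.exists_ne_map_eq_of_card_lt (fun s : Fin (N+1) => M.eval (w.take (J s))) hcard
  -- wlog s < s'
  wlog hlt : (s:ℕ) < (s':ℕ) generalizing s s'
  · refine this s' s hne.symm heq.symm ?_
    exact lt_of_le_of_ne (not_lt.mp hlt) (fun h => hne (Fin.val_injective h.symm))
  have hSlt : S (J s') < S (J s) := by
    have h1 := hJ s'
    have h2 := hJlb s
    have h3 : ((s:ℕ):ℤ) + 1 ≤ ((s':ℕ):ℤ) := by exact_mod_cast hlt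
    have h4 : (((s:ℕ):ℤ) + 1) * C ≤ ((s':ℕ):ℤ) * C := mul_le_mul_of_nonneg_right h3 (by positivity)
    have h5 : (((s:ℕ):ℤ) + 1) * C = ((s:ℕ):ℤ) * C + C := by ring
    linarith
  set a := J s
  set b := J s'
  have hab : a < b := lt_of_le_of_ne (hmono s s' (le_of_lt hlt)) (by
    intro h
    rw [show a = b from h] at hSlt
    omega)
  -- the deleted word
  set w' := w.take a ++ w.drop b with hw'
  have hw'acc : w' ∈ M.accepts := by
    rw [DFA.mem_accepts] at hw ⊢
    have : M.eval w' = M.eval w := by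
      conv_rhs => rw [← List.take_append_drop b w]
      show M.evalFrom M.start _ = M.evalFrom M.start _
      rw [DFA.evalFrom_of_append, DFA.evalFrom_of_append]
      congr 1
    rwa [this]
  have hsum : ((w'.map m).sum) = S a - S b := by
    have htot : S b + ((w.drop b).map m).sum = 0 := by
      have := hzero w hw
      rw [← List.take_append_drop b w] at this
      simpa [hS] using this
    simp only [hw', List.map_append, List.sum_append]
    simp only [hS] at htot ⊢
    omega
  have := hzero w' hw'acc
  rw [hsum] at this
  omega


/-- Bounded precision: if all elements of a rational subset of `BS(1,q)` have cursor
at the origin, then the precision of their fractional part is bounded. -/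
theorem rational_subset_bounded_precision (q : ℕ) (hq : 2 ≤ q) (R : Set (GL (Fin 2) ℚ))
    (hR : IsRationalSubset q hq R)
    (hcursor : ∀ M ∈ R, (M : Matrix (Fin 2) (Fin 2) ℚ) 0 0 = 1) :
    ∃ k : ℕ, ∀ M ∈ R, ∃ n : ℤ,
      (q : ℚ) ^ k * ((M : Matrix (Fin 2) (Fin 2) ℚ) 0 1) = (n : ℚ) := by
  classical
  obtain ⟨ι, hι, L, f, hreg, hf, hRdef⟩ := hR
  obtain ⟨σ, hσ, Mdfa, hacc⟩ := hreg
  letI := hι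
  letI := hσ
  have hq0 := qQ_ne_zero hq
  choose m x c n hmat hint using fun i => mem_BS_form hq (f i) (hf i)
  set C : ℕ := (Finset.univ.sup fun i => (m i).natAbs) + 1 with hCdef
  set C2 : ℕ := Finset.univ.sup c with hC2def
  have hC : ∀ i, (m i).natAbs < C :=
    fun i => Nat.lt_succ_of_le (Finset.le_sup (f := fun i => (m i).natAbs) (Finset.mem_univ i))
  have hint2 : ∀ i, ∃ nn : ℤ, (q:ℚ)^((C2:ℕ):ℤ) * x i = nn := by
    intro i
    have hci : c i ≤ C2 := Finset.le_sup (Finset.mem_univ i)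
    refine ⟨q^(C2 - c i) * n i, ?_⟩
    rw [← collectQ hq ((C2 - c i : ℕ):ℤ) ((c i : ℕ):ℤ) ((C2:ℕ):ℤ) (x i)
        (by push_cast; omega),
      hint i, zpow_mul_intQ hq _ (by positivity)]
    push_cast [Int.toNat_natCast]
    ring
  have hSzero : ∀ w ∈ Mdfa.accepts, ((w.map m).sum) = 0 := by
    intro w hw
    obtain ⟨y, hy, _⟩ := prod_form hq f m x C2 hmat hint2 w
    have hmem : (w.map f).prod ∈ R := by
      rw [hRdef]; exact ⟨w, by rwa [hacc] at hw, rfl⟩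
    have h00 := hcursor _ hmem
    rw [hy] at h00
    have h00' : (q:ℚ)^((w.map m).sum) = 1 := by simpa using h00
    have hq1 : (q:ℚ) ≠ 1 := by
      have : (1:ℚ) < q := by exact_mod_cast (by omega : 1 < q)
      exact ne_of_gt this
    exact (zpow_eq_one_iff_right₀ (by positivity) hq1).mp h00'
  refine ⟨Fintype.card σ * C + C2, ?_⟩
  intro Mel hMel
  rw [hRdef] at hMel
  obtain ⟨w, hwL, hprod⟩ := hMel
  obtain ⟨y, hy, hyB⟩ := prod_form hq f m x C2 hmat hint2 w
  have hwacc : w ∈ Mdfa.accepts := by rwa [hacc]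
  have hpre := height_bound Mdfa m C hC hSzero w hwacc
  obtain ⟨nn, hnn⟩ := hyB ((Fintype.card σ : ℤ) * C) (by positivity) hpre
  refine ⟨nn, ?_⟩
  have h01 : (Mel : Matrix (Fin 2) (Fin 2) ℚ) 0 1 = y := by
    rw [← hprod, hy]; simp
  rw [h01, ← hnn]
  congr 1
end

section
/- Matrix description of BS(1,q): for every integer q ≥ 2, the subgroup BS(1,q) of GL (Fin 2) ℚ equals the set of all M ∈ GL (Fin 2) ℚ for which there exist m : ℤ and r : ℚ with r ∈ Z[1/q] such that the matrix of M is !![(q : ℚ)^m, r; 0, 1]. -/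
open Matrix

/-- `Z[1/q]`: the rationals of the form `n / q^i`. -/
def ZOneOverQ (q : ℕ) : Set ℚ := {x : ℚ | ∃ (n : ℤ) (i : ℕ), x = (n : ℚ) / (q : ℚ) ^ i}

lemma mul_tri (a b c d : ℚ) : !![a,b;(0:ℚ),1] * !![c,d;0,1] = !![a*c, a*d+b; 0, 1] := by
  ext i j; fin_cases i <;> fin_cases j <;> simp [Matrix.mul_apply, Fin.sum_univ_succ]

lemma tri_ext {a b a' b' : ℚ} (h1 : a = a') (h2 : b = b') :
    !![a,b;(0:ℚ),1] = !![a',b';0,1] := by rw [h1, h2]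

lemma zq_add {q : ℕ} (hq0 : (q:ℚ) ≠ 0) {x y : ℚ} (hx : x ∈ ZOneOverQ q)
    (hy : y ∈ ZOneOverQ q) : x + y ∈ ZOneOverQ q := by
  obtain ⟨n, i, rfl⟩ := hx
  obtain ⟨n', j, rfl⟩ := hy
  refine ⟨n * q ^ j + n' * q ^ i, i + j, ?_⟩
  have hi : ((q:ℚ)) ^ i ≠ 0 := pow_ne_zero _ hq0
  have hj : ((q:ℚ)) ^ j ≠ 0 := pow_ne_zero _ hq0
  push_cast
  rw [div_add_div _ _ hi hj, pow_add]
  ring_nf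

lemma zq_neg {q : ℕ} {x : ℚ} (hx : x ∈ ZOneOverQ q) : -x ∈ ZOneOverQ q := by
  obtain ⟨n, i, rfl⟩ := hx
  exact ⟨-n, i, by push_cast; ring⟩

lemma zq_zpow_mul {q : ℕ} (hq0 : (q:ℚ) ≠ 0) (m : ℤ) {x : ℚ}
    (hx : x ∈ ZOneOverQ q) : (q:ℚ) ^ m * x ∈ ZOneOverQ q := by
  obtain ⟨n, i, rfl⟩ := hx
  refine ⟨n * q ^ m.toNat, i + (-m).toNat, ?_⟩
  have hm : (q:ℚ) ^ m = (q:ℚ) ^ m.toNat / (q:ℚ) ^ (-m).toNat := by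
    rw [eq_div_iff (pow_ne_zero _ hq0), ← zpow_natCast ((q:ℚ)) ((-m).toNat),
      ← zpow_natCast ((q:ℚ)) (m.toNat), ← zpow_add₀ hq0]
    congr 1; omega
  rw [hm]
  have hi : ((q:ℚ)) ^ i ≠ 0 := pow_ne_zero _ hq0
  have hk : ((q:ℚ)) ^ (-m).toNat ≠ 0 := pow_ne_zero _ hq0
  push_cast
  rw [div_mul_div_comm, pow_add]
  ring_nf

lemma coe_inv_eq {M : GL (Fin 2) ℚ} {B : Matrix (Fin 2) (Fin 2) ℚ}
    (h : (M : Matrix (Fin 2) (Fin 2) ℚ) * B = 1) :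
    ((M⁻¹ : GL (Fin 2) ℚ) : Matrix (Fin 2) (Fin 2) ℚ) = B := by
  calc ((M⁻¹ : GL (Fin 2) ℚ) : Matrix (Fin 2) (Fin 2) ℚ)
      = ↑M⁻¹ * ((M : Matrix (Fin 2) (Fin 2) ℚ) * B) := by rw [h, mul_one]
    _ = B := by rw [← mul_assoc, Units.inv_mul, one_mul]

lemma coe_zpow_a (n : ℤ) :
    ((aElem ^ n : GL (Fin 2) ℚ) : Matrix (Fin 2) (Fin 2) ℚ) = !![1, (n:ℚ); 0, 1] := by
  have ha : (aElem : Matrix (Fin 2) (Fin 2) ℚ) = !![1,1;0,1] := rfl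
  have hainv : ((aElem⁻¹ : GL (Fin 2) ℚ) : Matrix (Fin 2) (Fin 2) ℚ) = !![1,-1;0,1] := by
    apply coe_inv_eq
    rw [ha, mul_tri, Matrix.one_fin_two]
    exact tri_ext (by norm_num) (by norm_num)
  induction n using Int.induction_on with
  | zero => rw [zpow_zero, Units.val_one, Matrix.one_fin_two]; exact tri_ext rfl (by norm_num)
  | succ k ih =>
      rw [_root_.zpow_add_one, Units.val_mul, ih, ha, mul_tri]
      exact tri_ext (by norm_num) (by push_cast; ring)
  | pred k ih =>
      rw [_root_.zpow_sub_one, Units.val_mul, ih, hainv, mul_tri]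
      exact tri_ext (by norm_num) (by push_cast; ring)

lemma coe_zpow_t (q : ℕ) (hq : 2 ≤ q) (m : ℤ) :
    ((tElem q hq ^ m : GL (Fin 2) ℚ) : Matrix (Fin 2) (Fin 2) ℚ) = !![(q:ℚ)^m, 0; 0, 1] := by
  have hq0 : (q : ℚ) ≠ 0 := by
    simpa using (Nat.cast_ne_zero (R := ℚ)).2 (by omega)
  have ht : (tElem q hq : Matrix (Fin 2) (Fin 2) ℚ) = !![(q:ℚ),0;0,1] := rfl
  have htinv : (((tElem q hq)⁻¹ : GL (Fin 2) ℚ) : Matrix (Fin 2) (Fin 2) ℚ)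
      = !![(q:ℚ)⁻¹,0;0,1] := by
    apply coe_inv_eq
    rw [ht, mul_tri, Matrix.one_fin_two]
    exact tri_ext (mul_inv_cancel₀ hq0) (by norm_num)
  induction m using Int.induction_on with
  | zero => rw [zpow_zero, Units.val_one, Matrix.one_fin_two, zpow_zero]
  | succ k ih =>
      rw [_root_.zpow_add_one, Units.val_mul, ih, ht, mul_tri, zpow_add_one₀ hq0]
      exact tri_ext rfl (by ring)
  | pred k ih =>
      rw [_root_.zpow_sub_one, Units.val_mul, ih, htinv, mul_tri, zpow_sub_one₀ hq0]
      exact tri_ext rfl (by ring)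

/-- Matrix description of `BS(1,q)`: it consists exactly of the invertible matrices
`!![q^m, r; 0, 1]` with `m : ℤ` and `r ∈ Z[1/q]`. -/
theorem BS_eq_matrix_description (q : ℕ) (hq : 2 ≤ q) :
    (BS q hq : Set (GL (Fin 2) ℚ)) =
      {M : GL (Fin 2) ℚ | ∃ (m : ℤ) (r : ℚ), r ∈ ZOneOverQ q ∧
        (M : Matrix (Fin 2) (Fin 2) ℚ) = !![(q : ℚ) ^ m, r; 0, 1]} := by
  have hq0 : (q : ℚ) ≠ 0 := by
    simpa using (Nat.cast_ne_zero (R := ℚ)).2 (by omega)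
  ext M
  simp only [SetLike.mem_coe, Set.mem_setOf_eq]
  constructor
  · intro hM
    induction hM using Subgroup.closure_induction with
    | mem x hx =>
        rcases hx with hx | hx
        · subst hx
          exact ⟨0, 1, ⟨1, 0, by norm_num⟩, by
            show (!![1,1;0,1] : Matrix (Fin 2) (Fin 2) ℚ) = _
            rw [zpow_zero]⟩
        · subst hx
          exact ⟨1, 0, ⟨0, 0, by norm_num⟩, by
            show (!![(q:ℚ),0;0,1] : Matrix (Fin 2) (Fin 2) ℚ) = _
            rw [zpow_one]⟩
    | one =>
        exact ⟨0, 0, ⟨0, 0, by norm_num⟩, by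
          rw [Units.val_one, Matrix.one_fin_two, zpow_zero]⟩
    | mul x y hx hy ihx ihy =>
        obtain ⟨m, r, hr, hxm⟩ := ihx
        obtain ⟨m', r', hr', hym⟩ := ihy
        refine ⟨m + m', (q:ℚ)^m * r' + r, zq_add hq0 (zq_zpow_mul hq0 m hr') hr, ?_⟩
        rw [Units.val_mul, hxm, hym, mul_tri, zpow_add₀ hq0]
    | inv x hx ih =>
        obtain ⟨m, r, hr, hxm⟩ := ih
        refine ⟨-m, (q:ℚ)^(-m) * (-r), zq_zpow_mul hq0 (-m) (zq_neg hr), ?_⟩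
        apply coe_inv_eq
        rw [hxm, mul_tri, Matrix.one_fin_two]
        have h1 : (q:ℚ)^m * (q:ℚ)^(-m) = 1 := by
          rw [← zpow_add₀ hq0, add_neg_cancel, zpow_zero]
        refine tri_ext h1 ?_
        have : (q:ℚ)^m * ((q:ℚ)^(-m) * -r) = ((q:ℚ)^m * (q:ℚ)^(-m)) * (-r) := by ring
        rw [this, h1]; ring
  · rintro ⟨m, r, ⟨n, i, rfl⟩, hM⟩
    have e1 : (q:ℚ)^(-(i:ℤ)) * (q:ℚ)^((i:ℤ)+m) = (q:ℚ)^m := by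
      rw [← zpow_add₀ hq0, neg_add_cancel_left]
    have e2 : (q:ℚ)^(-(i:ℤ)) * (n:ℚ) = (n:ℚ) / (q:ℚ)^i := by
      rw [_root_.zpow_neg, zpow_natCast, div_eq_mul_inv, mul_comm]
    have key : (((tElem q hq ^ (-(i:ℤ)) * aElem ^ n * tElem q hq ^ ((i:ℤ) + m)) :
        GL (Fin 2) ℚ) : Matrix (Fin 2) (Fin 2) ℚ) = !![(q:ℚ)^m, (n:ℚ)/(q:ℚ)^i; 0, 1] := by
      rw [Units.val_mul, Units.val_mul, coe_zpow_t, coe_zpow_t, coe_zpow_a, mul_tri, mul_tri]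
      refine tri_ext (by rw [mul_one]; exact e1) ?_
      rw [mul_zero, zero_add, add_zero]
      exact e2
    have hMeq : M = tElem q hq ^ (-(i:ℤ)) * aElem ^ n * tElem q hq ^ ((i:ℤ) + m) :=
      Units.ext (by rw [hM, key])
    rw [hMeq]
    have hamem : aElem ∈ BS q hq := Subgroup.subset_closure (by simp)
    have htmem : tElem q hq ∈ BS q hq := Subgroup.subset_closure (by simp)
    exact mul_mem (mul_mem (zpow_mem htmem _) (zpow_mem hamem _)) (zpow_mem htmem _)
end

section
/- State evaluations for trim automata accepting only the identity: let G be a group and (Q, E, q₀, q_f) a trim automaton over G whose accepted set equals {1}. Then there exists a map η : Q → G such that η q₀ = 1 and for every edge (p, g, p') ∈ E, η p' = (η p) * g. -/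
/-- `ρ` is a run from `p` to `p'` with production `g` in the automaton over the group `G`
with edge set `E`: a (possibly empty) chain of edges from `E` starting at `p`, ending at
`p'`, whose labels multiply to `g`. -/
def IsRun {Q G : Type*} [Monoid G] (E : Set (Q × G × Q)) (p p' : Q) (g : G)
    (ρ : List (Q × G × Q)) : Prop :=
  (∀ e ∈ ρ, e ∈ E) ∧ ρ.Chain' (fun e f => e.2.2 = f.1) ∧
  (ρ.map fun e => e.2.1).prod = g ∧
  (ρ = [] → p = p') ∧
  (∀ h : ρ ≠ [], (ρ.head h).1 = p ∧ (ρ.getLast h).2.2 = p')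

lemma isRun_nil {Q G : Type*} [Monoid G] (E : Set (Q × G × Q)) (p : Q) :
    IsRun E p p 1 [] := by
  refine ⟨by simp, List.isChain_nil, by simp, fun _ => rfl, fun h => absurd rfl h⟩

lemma isRun_single {Q G : Type*} [Monoid G] {E : Set (Q × G × Q)} {e : Q × G × Q}
    (he : e ∈ E) : IsRun E e.1 e.2.2 e.2.1 [e] := by
  refine ⟨by simpa, List.isChain_singleton _, by simp, by simp, fun h => ⟨rfl, rfl⟩⟩

lemma IsRun.append {Q G : Type*} [Monoid G] {E : Set (Q × G × Q)} {p p' p'' : Q}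
    {g h : G} {ρ σ : List (Q × G × Q)}
    (h1 : IsRun E p p' g ρ) (h2 : IsRun E p' p'' h σ) :
    IsRun E p p'' (g * h) (ρ ++ σ) := by
  obtain ⟨m1, c1, pr1, e1, ne1⟩ := h1
  obtain ⟨m2, c2, pr2, e2, ne2⟩ := h2
  rcases eq_or_ne ρ [] with rfl | hρ
  · simp only [List.nil_append]
    rw [← pr1, List.map_nil, List.prod_nil, one_mul]
    rw [e1 rfl]
    exact ⟨m2, c2, pr2, e2, ne2⟩
  rcases eq_or_ne σ [] with rfl | hσ
  · simp only [List.append_nil]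
    rw [← pr2, List.map_nil, List.prod_nil, mul_one]
    rw [← e2 rfl]
    exact ⟨m1, c1, pr1, e1, ne1⟩
  have hns : ρ ++ σ ≠ [] := by simp [hρ]
  refine ⟨?_, ?_, ?_, ?_, ?_⟩
  · intro e he; rcases List.mem_append.1 he with h | h
    · exact m1 e h
    · exact m2 e h
  · apply List.isChain_append.2
    refine ⟨c1, c2, ?_⟩
    intro x hx y hy
    rw [List.getLast?_eq_getLast hρ] at hx
    rw [List.head?_eq_head hσ] at hy
    cases hx; cases hy
    rw [(ne1 hρ).2, (ne2 hσ).1]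
  · rw [List.map_append, List.prod_append, pr1, pr2]
  · intro h; exact absurd h hns
  · intro _
    constructor
    · rw [List.head_append_of_ne_nil]
      exact (ne1 hρ).1
    · rw [List.getLast_append_of_ne_nil _ hσ]
      exact (ne2 hσ).2

/-- A trim automaton over a group `G` accepting exactly `{1}` admits a state
evaluation. -/
theorem trim_automaton_accepting_one_has_state_evaluation
    {G : Type*} [Group G] (Q : Type*) [Fintype Q]
    (E : Set (Q × G × Q)) (q0 qf : Q)
    (trim : ∀ s : Q, (∃ (g : G) (ρ : List (Q × G × Q)), IsRun E q0 s g ρ) ∧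
                     (∃ (g : G) (ρ : List (Q × G × Q)), IsRun E s qf g ρ))
    (hacc : {g : G | ∃ ρ : List (Q × G × Q), IsRun E q0 qf g ρ} = {1}) :
    ∃ η : Q → G, η q0 = 1 ∧ ∀ e ∈ E, η e.2.2 = η e.1 * e.2.1 := by
  have uniq : ∀ (s : Q) (g g' : G) (ρ ρ' : List (Q × G × Q)),
      IsRun E q0 s g ρ → IsRun E q0 s g' ρ' → g = g' := by
    intro s g g' ρ ρ' h1 h2
    obtain ⟨h, σ, hσ⟩ := (trim s).2
    have e1 : g * h ∈ {g : G | ∃ ρ, IsRun E q0 qf g ρ} := ⟨_, h1.append hσ⟩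
    have e2 : g' * h ∈ {g : G | ∃ ρ, IsRun E q0 qf g ρ} := ⟨_, h2.append hσ⟩
    rw [hacc, Set.mem_singleton_iff] at e1 e2
    exact mul_right_cancel (e1.trans e2.symm)
  choose f hf using fun s => (trim s).1
  choose ρ hρ using hf
  refine ⟨f, ?_, ?_⟩
  · exact uniq q0 (f q0) 1 _ [] (hρ q0) (isRun_nil E q0)
  · intro e he
    exact uniq e.2.2 (f e.2.2) (f e.1 * e.2.1) _ (ρ e.1 ++ [e]) (hρ e.2.2)
      ((hρ e.1).append (isRun_single he))
end

section
/- Hill-cutting for counter automata: let (Q, E) be a counter automaton where Q has exactly n elements, let p, p' ∈ Q, and let τ be a returning run from p to p'. If some counter value of τ is strictly greater than n², or some counter value of τ is strictly less than −n², then there exists a returning run τ' from p to p' such that the length of τ' is strictly less than the length of τ and the minimum counter value of τ' is at least the minimum counter value of τ. -/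
/-- `ρ` is a run from `p` to `p'` in the counter automaton with edge set `E`:
a nonempty-or-empty chain of edges from `E` starting at `p` and ending at `p'`. -/
def IsCRun {Q : Type*} (E : Set (Q × ℤ × Q)) (p p' : Q) (ρ : List (Q × ℤ × Q)) : Prop :=
  (∀ e ∈ ρ, e ∈ E) ∧ ρ.Chain' (fun e f => e.2.2 = f.1) ∧
  (ρ = [] → p = p') ∧
  (∀ h : ρ ≠ [], (ρ.head h).1 = p ∧ (ρ.getLast h).2.2 = p')

/-- The counter value of a run after `i` steps: the sum of the first `i` counter
updates. -/
def counterValue {Q : Type*} (ρ : List (Q × ℤ × Q)) (i : ℕ) : ℤ :=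
  ((ρ.take i).map fun e => e.2.1).sum

section Aux

variable {Q : Type*}

private lemma getElem_idx_congr {α : Type*} (l : List α) {i j : ℕ} (h : i = j)
    (hj : j < l.length) : l[i]'(h ▸ hj) = l[j]'hj := by subst h; rfl

private lemma ivt_up (f : ℕ → ℤ) (hup : ∀ k, f (k+1) ≤ f k + 1) :
    ∀ a b : ℕ, a ≤ b → ∀ v : ℤ, f a ≤ v → v ≤ f b → ∃ k, a ≤ k ∧ k ≤ b ∧ f k = v := by
  intro a b hab
  induction b, hab using Nat.le_induction with
  | base => exact fun v h1 h2 => ⟨a, le_refl a, le_refl a, le_antisymm h1 h2⟩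
  | succ b hb ih =>
    intro v h1 h2
    rcases le_or_gt v (f b) with h | h
    · obtain ⟨k, hk1, hk2, hk3⟩ := ih v h1 h
      exact ⟨k, hk1, hk2.trans (Nat.le_succ b), hk3⟩
    · refine ⟨b+1, by omega, le_refl _, ?_⟩
      have := hup b; omega

private lemma ivt_down (f : ℕ → ℤ) (hdown : ∀ k, f k - 1 ≤ f (k+1)) (a b : ℕ) (hab : a ≤ b)
    (v : ℤ) (h1 : v ≤ f a) (h2 : f b ≤ v) : ∃ k, a ≤ k ∧ k ≤ b ∧ f k = v := by
  obtain ⟨k, h, h', h''⟩ := ivt_up (fun k => -f k)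
    (fun k => show -f (k+1) ≤ -f k + 1 by have := hdown k; omega)
    a b hab (-v) (show -f a ≤ -v by omega) (show -v ≤ -f b by omega)
  refine ⟨k, h, h', ?_⟩
  have h3 : -f k = -v := h''
  omega

/-- The state after `i` edges of a run starting at `p`. -/
private def stA (p : Q) (ρ : List (Q × ℤ × Q)) : ℕ → Q
  | 0 => p
  | (i+1) => if h : i < ρ.length then ρ[i].2.2 else p

private lemma cv_zero (ρ : List (Q × ℤ × Q)) : counterValue ρ 0 = 0 := by
  simp [counterValue]

private lemma cv_succ (ρ : List (Q × ℤ × Q)) (i : ℕ) (h : i < ρ.length) :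
    counterValue ρ (i+1) = counterValue ρ i + ρ[i].2.1 := by
  unfold counterValue
  rw [List.map_take, List.map_take,
    List.sum_take_succ _ _ (by simpa using h)]
  simp

private lemma cv_stable (ρ : List (Q × ℤ × Q)) (i : ℕ) (h : ρ.length ≤ i) :
    counterValue ρ i = counterValue ρ ρ.length := by
  unfold counterValue
  rw [List.take_of_length_le h, List.take_of_length_le (le_refl _)]

private lemma cv_step (ρ : List (Q × ℤ × Q)) (hd : ∀ e ∈ ρ, e.2.1 ∈ ({-1, 0, 1} : Set ℤ))
    (i : ℕ) : counterValue ρ (i+1) ≤ counterValue ρ i + 1 ∧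
      counterValue ρ i - 1 ≤ counterValue ρ (i+1) := by
  rcases lt_or_ge i ρ.length with h | h
  · rw [cv_succ ρ i h]
    have := hd ρ[i] (List.getElem_mem h)
    simp only [Set.mem_insert_iff, Set.mem_singleton_iff] at this
    rcases this with h' | h' | h' <;> rw [h'] <;> omega
  · rw [cv_stable ρ i h, cv_stable ρ (i+1) (by omega)]
    omega

private lemma stA_fst {E : Set (Q × ℤ × Q)} {p p' : Q} {ρ : List (Q × ℤ × Q)}
    (hrun : IsCRun E p p' ρ) (i : ℕ) (h : i < ρ.length) : ρ[i].1 = stA p ρ i := by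
  match i with
  | 0 =>
    have hne : ρ ≠ [] := by rw [← List.length_pos_iff_ne_nil]; omega
    have := (hrun.2.2.2 hne).1
    rw [List.head_eq_getElem] at this
    exact this
  | (j+1) =>
    have hchain := List.isChain_iff_getElem.mp hrun.2.1 j (by omega)
    rw [stA]
    rw [dif_pos (by omega : j < ρ.length)]
    exact hchain.symm

private lemma stA_last {E : Set (Q × ℤ × Q)} {p p' : Q} {ρ : List (Q × ℤ × Q)}
    (hrun : IsCRun E p p' ρ) : stA p ρ ρ.length = p' := by
  rcases eq_or_ne ρ [] with rfl | hne
  · exact hrun.2.2.1 rfl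
  · have hlen : 0 < ρ.length := List.length_pos_of_ne_nil hne
    have hlast := (hrun.2.2.2 hne).2
    rw [List.getLast_eq_getElem] at hlast
    obtain ⟨m, hm⟩ : ∃ m, ρ.length = m + 1 := ⟨ρ.length - 1, by omega⟩
    rw [hm, stA, dif_pos (by omega : m < ρ.length)]
    rw [← hlast]
    rw [getElem_idx_congr ρ (show ρ.length - 1 = m from by omega) (by omega)]

private lemma stA_eq_of_take_eq {p : Q} {ρ σ : List (Q × ℤ × Q)} {c : ℕ}
    (h : ρ.take c = σ.take c) (i : ℕ) (hi : i ≤ c) (hil : i ≤ ρ.length) (hil' : i ≤ σ.length) :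
    stA p ρ i = stA p σ i := by
  match i with
  | 0 => rfl
  | (j+1) =>
    rw [stA, stA, dif_pos (by omega : j < ρ.length), dif_pos (by omega : j < σ.length)]
    have h1 : (ρ.take c)[j]'(by rw [List.length_take]; omega) =
        (σ.take c)[j]'(by rw [List.length_take]; omega) := by
      congr 1
    rw [List.getElem_take, List.getElem_take] at h1
    rw [h1]

private lemma cutOne {E : Set (Q × ℤ × Q)} {p p' : Q} {τ : List (Q × ℤ × Q)}
    (hrun : IsCRun E p p' τ) {a b : ℕ} (hab : a ≤ b) (hbl : b ≤ τ.length)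
    (hst : stA p τ a = stA p τ b) :
    IsCRun E p p' (τ.take a ++ τ.drop b) ∧
    (τ.take a ++ τ.drop b).length = a + (τ.length - b) ∧
    (∀ i ≤ a, counterValue (τ.take a ++ τ.drop b) i = counterValue τ i) ∧
    (∀ k, counterValue (τ.take a ++ τ.drop b) (a + k)
        = counterValue τ a + (counterValue τ (b + k) - counterValue τ b)) ∧
    ((τ.take a ++ τ.drop b).take a = τ.take a) := by
  have hal : a ≤ τ.length := hab.trans hbl
  have hlt : (τ.take a).length = a := by rw [List.length_take]; omega
  have hld : (τ.drop b).length = τ.length - b := List.length_drop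
  have hlen : (τ.take a ++ τ.drop b).length = a + (τ.length - b) := by
    rw [List.length_append, hlt, hld]
  have hgetl : ∀ (i : ℕ) (h : i < a),
      (τ.take a ++ τ.drop b)[i]'(by omega) = τ[i]'(by omega) := by
    intro i h
    rw [List.getElem_append_left (by rw [hlt]; omega), List.getElem_take]
  have hgetr : ∀ (i : ℕ) (h : a ≤ i) (h2 : i < (τ.take a ++ τ.drop b).length),
      (τ.take a ++ τ.drop b)[i]'(h2) = τ[b + (i - a)]'(by omega) := by
    intro i h h2
    rw [List.getElem_append_right (by rw [hlt]; omega), List.getElem_drop]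
    exact getElem_idx_congr τ (show b + (i - (τ.take a).length) = b + (i - a) from by
      rw [hlt]) (by omega)
  have htake : (τ.take a ++ τ.drop b).take a = τ.take a := by
    rw [List.take_append, hlt, Nat.sub_self, List.take_zero, List.append_nil,
      List.take_take, min_self]
  refine ⟨⟨?_, ?_, ?_, ?_⟩, hlen, ?_, ?_, htake⟩
  · -- membership
    intro e he
    rcases List.mem_append.mp he with h | h
    · exact hrun.1 e (List.take_subset _ _ h)
    · exact hrun.1 e (List.drop_subset _ _ h)
  · -- chain
    refine List.isChain_append.mpr ⟨hrun.2.1.take _, hrun.2.1.drop _, ?_⟩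
    intro x hx y hy
    have hane : τ.take a ≠ [] := by
      intro h; rw [h] at hx; simp at hx
    have hbne : τ.drop b ≠ [] := by
      intro h; rw [h] at hy; simp at hy
    have ha0 : 0 < a := by
      by_contra h
      apply hane
      have h' : a = 0 := by omega
      rw [h', List.take_zero]
    have hblt : b < τ.length := by
      by_contra h
      apply hbne
      rw [List.drop_eq_nil_iff]
      omega
    have hx' : x = τ[a-1]'(by omega) := by
      rw [List.getLast?_eq_getLast hane] at hx
      have hx2 : (τ.take a).getLast hane = x := by simpa using hx
      rw [← hx2, List.getLast_eq_getElem]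
      rw [getElem_idx_congr (τ.take a) (show (τ.take a).length - 1 = a - 1 from by omega)
        (by rw [hlt]; omega)]
      rw [List.getElem_take]
    have hy' : y = τ[b]'(hblt) := by
      rw [List.head?_eq_head hbne] at hy
      have hy2 : (τ.drop b).head hbne = y := by simpa using hy
      rw [← hy2, List.head_drop]
    rw [hx', hy']
    have h1 : (τ[a-1]'(by omega)).2.2 = stA p τ a := by
      obtain ⟨m, hm⟩ : ∃ m, a = m + 1 := ⟨a - 1, by omega⟩
      subst hm
      rw [stA, dif_pos (by omega : m < τ.length)]
      rfl
    rw [h1, hst, ← stA_fst hrun b hblt]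
  · -- empty case
    intro h
    have h2 := List.append_eq_nil_iff.mp h
    have ha0 : a = 0 := by
      rcases List.take_eq_nil_iff.mp h2.1 with h' | h'
      · exact h'
      · subst h'; simp at hal; omega
    have hbL : b = τ.length := by
      have := List.drop_eq_nil_iff.mp h2.2
      omega
    have hh : stA p τ 0 = stA p τ τ.length := by rw [← ha0, ← hbL]; exact hst
    rw [show stA p τ 0 = p from rfl] at hh
    rw [hh]
    exact stA_last hrun
  · -- head and last
    intro hne
    have hσpos : 0 < (τ.take a ++ τ.drop b).length := List.length_pos_of_ne_nil hne
    constructor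
    · rw [List.head_eq_getElem]
      rcases Nat.eq_zero_or_pos a with ha0 | hapos
      · rw [hgetr 0 (by omega) hσpos]
        have hblt : b < τ.length := by omega
        rw [getElem_idx_congr τ (show b + (0 - a) = b from by omega) hblt]
        rw [stA_fst hrun b hblt, ← hst, ha0]
        rfl
      · rw [hgetl 0 hapos]
        exact stA_fst hrun 0 (by omega)
    · rw [List.getLast_eq_getElem]
      rcases lt_or_ge b τ.length with hblt | hbge
      · have hge : a ≤ (τ.take a ++ τ.drop b).length - 1 := by omega
        rw [hgetr ((τ.take a ++ τ.drop b).length - 1) hge (by omega)]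
        have hτne : τ ≠ [] := by rw [← List.length_pos_iff_ne_nil]; omega
        have hlast := (hrun.2.2.2 hτne).2
        rw [List.getLast_eq_getElem] at hlast
        rw [getElem_idx_congr τ
          (show b + ((τ.take a ++ τ.drop b).length - 1 - a) = τ.length - 1 from by omega)
          (by omega)]
        exact hlast
      · have hbL : b = τ.length := by omega
        have hapos : 0 < a := by
          by_contra h
          have : (τ.take a ++ τ.drop b).length = 0 := by omega
          omega
        rw [hgetl ((τ.take a ++ τ.drop b).length - 1) (by omega)]
        obtain ⟨m, hm⟩ : ∃ m, a = m + 1 := ⟨a - 1, by omega⟩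
        have h1 : (τ[(τ.take a ++ τ.drop b).length - 1]'(by omega)).2.2 = stA p τ a := by
          rw [getElem_idx_congr τ
            (show (τ.take a ++ τ.drop b).length - 1 = m from by omega) (by omega)]
          conv_rhs => rw [hm]
          rw [stA, dif_pos (by omega : m < τ.length)]
        rw [h1, hst, hbL]
        exact stA_last hrun
  · -- counterValue for i ≤ a
    intro i hi
    unfold counterValue
    congr 1
    rw [List.take_append, hlt,
      show i - a = 0 from by omega, List.take_zero, List.append_nil,
      List.take_take, min_eq_left hi]
  · -- counterValue at a + k
    intro k
    have h1 : (τ.take a ++ τ.drop b).take (a + k) = τ.take a ++ (τ.drop b).take k := by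
      rw [List.take_append, hlt,
        show a + k - a = k from by omega, List.take_take,
        min_eq_right (Nat.le_add_right a k)]
    have h2 : τ.take (b + k) = τ.take b ++ (τ.drop b).take k := List.take_add
    have h3 : counterValue τ (b + k)
        = counterValue τ b + (((τ.drop b).take k).map (fun e => e.2.1)).sum := by
      unfold counterValue
      rw [h2, List.map_append, List.sum_append]
    show (((τ.take a ++ τ.drop b).take (a+k)).map (fun e => e.2.1)).sum = _
    rw [h1, List.map_append, List.sum_append]
    unfold counterValue
    unfold counterValue at h3
    omega

private lemma find_cut [Fintype Q] {n : ℕ} (hcard : Fintype.card Q = n)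
    (st : ℕ → Q) (f : ℕ → ℤ) (L P : ℕ) (hP : P ≤ L)
    (hf0 : f 0 = 0) (hfL : f L = 0)
    (hup : ∀ k, f (k+1) ≤ f k + 1) (hdown : ∀ k, f k - 1 ≤ f (k+1))
    (hbig : (n:ℤ)^2 < f P) :
    ∃ a b c d : ℕ, a < b ∧ b ≤ c ∧ c ≤ d ∧ d ≤ L ∧
      st a = st b ∧ st c = st d ∧
      f b - f a = f c - f d ∧ 0 ≤ f a ∧ f a ≤ f b ∧
      (∀ j, b ≤ j → j ≤ c → f b ≤ f j) := by
  classical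
  set I : ℕ → ℕ := fun ℓ => Nat.findGreatest (fun i => f i = (ℓ:ℤ)) P with hI
  set J : ℕ → ℕ := fun ℓ =>
    if h : ∃ m, f (P + m) = (ℓ:ℤ) ∧ P + m ≤ L then P + Nat.find h else 0 with hJ
  have hIle : ∀ ℓ : ℕ, I ℓ ≤ P := by
    intro ℓ
    simp only [hI]
    exact Nat.findGreatest_le (P := fun i => f i = (ℓ:ℤ)) P
  have hIval : ∀ ℓ : ℕ, (ℓ:ℤ) ≤ (n:ℤ)^2 → f (I ℓ) = ℓ := by
    intro ℓ hℓ
    obtain ⟨i, hi1, hi2, hi3⟩ := ivt_up f hup 0 P (Nat.zero_le P) (ℓ:ℤ)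
      (by rw [hf0]; positivity) (by linarith)
    simp only [hI]
    exact Nat.findGreatest_spec (P := fun i => f i = (ℓ:ℤ)) hi2 hi3
  have hIgr : ∀ ℓ : ℕ, ∀ k, I ℓ < k → k ≤ P → f k ≠ (ℓ:ℤ) := by
    intro ℓ k h1 h2
    simp only [hI] at h1
    exact Nat.findGreatest_is_greatest (P := fun i => f i = (ℓ:ℤ)) h1 h2
  have hJspec : ∀ ℓ : ℕ, (ℓ:ℤ) ≤ (n:ℤ)^2 →
      f (J ℓ) = ℓ ∧ P ≤ J ℓ ∧ J ℓ ≤ L ∧ (∀ k, P ≤ k → k < J ℓ → k ≤ L → f k ≠ (ℓ:ℤ)) := by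
    intro ℓ hℓ
    have hex : ∃ m, f (P + m) = (ℓ:ℤ) ∧ P + m ≤ L := by
      obtain ⟨k, hk1, hk2, hk3⟩ := ivt_down f hdown P L hP (ℓ:ℤ)
        (by linarith) (by rw [hfL]; positivity)
      exact ⟨k - P, by rw [show P + (k - P) = k from by omega]; exact ⟨hk3, hk2⟩⟩
    have hJval : J ℓ = P + Nat.find hex := by simp only [hJ]; rw [dif_pos hex]
    have hspec := Nat.find_spec hex
    refine ⟨by rw [hJval]; exact hspec.1, by rw [hJval]; omega,
      by rw [hJval]; exact hspec.2, ?_⟩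
    intro k hk1 hk2 hk3 hk4
    rw [hJval] at hk2
    exact Nat.find_min hex (m := k - P) (by omega)
      ⟨by rw [show P + (k - P) = k from by omega]; exact hk4, by omega⟩
  have hcard2 : Fintype.card (Q × Q) < Fintype.card (Fin (n^2 + 1)) := by
    rw [Fintype.card_prod, hcard, Fintype.card_fin]
    nlinarith
  obtain ⟨x, y, hxy, hgxy⟩ := Fintype.exists_ne_map_eq_of_card_lt
    (fun ℓ : Fin (n^2 + 1) => (st (I ℓ), st (J ℓ))) hcard2
  obtain ⟨ℓ, ℓ', hlt, hle, hstI, hstJ⟩ : ∃ ℓ ℓ' : ℕ, ℓ < ℓ' ∧ ℓ' ≤ n^2 ∧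
      st (I ℓ) = st (I ℓ') ∧ st (J ℓ) = st (J ℓ') := by
    rcases lt_or_gt_of_ne hxy with h | h
    · exact ⟨x, y, h, by omega, congrArg Prod.fst hgxy, congrArg Prod.snd hgxy⟩
    · exact ⟨y, x, h, by omega, (congrArg Prod.fst hgxy).symm, (congrArg Prod.snd hgxy).symm⟩
  have hℓ'le : (ℓ':ℤ) ≤ (n:ℤ)^2 := by
    have h := hle
    have h2 : ((ℓ':ℕ):ℤ) ≤ ((n^2:ℕ):ℤ) := by exact_mod_cast h
    push_cast at h2
    exact h2
  have hℓℓ'Z : (ℓ:ℤ) < (ℓ':ℤ) := by exact_mod_cast hlt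
  have hℓle : (ℓ:ℤ) ≤ (n:ℤ)^2 := by linarith
  have fIℓ := hIval ℓ hℓle
  have fIℓ' := hIval ℓ' hℓ'le
  obtain ⟨fJℓ, hPJℓ, hJℓL, hJℓmin⟩ := hJspec ℓ hℓle
  obtain ⟨fJℓ', hPJℓ', hJℓ'L, hJℓ'min⟩ := hJspec ℓ' hℓ'le
  have hM1 : I ℓ < I ℓ' := by
    rcases lt_trichotomy (I ℓ) (I ℓ') with h | h | h
    · exact h
    · exfalso
      have : (ℓ:ℤ) = (ℓ':ℤ) := by rw [← fIℓ, h, fIℓ']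
      omega
    · exfalso
      obtain ⟨k, hk1, hk2, hk3⟩ := ivt_up f hup (I ℓ) P (hIle ℓ) (ℓ':ℤ)
        (by rw [fIℓ]; exact hℓℓ'Z.le) (by linarith)
      exact hIgr ℓ' k (by omega) hk2 hk3
  have hM2 : J ℓ' < J ℓ := by
    rcases lt_trichotomy (J ℓ') (J ℓ) with h | h | h
    · exact h
    · exfalso
      have : (ℓ:ℤ) = (ℓ':ℤ) := by rw [← fJℓ, ← h, fJℓ']
      omega
    · exfalso
      obtain ⟨k, hk1, hk2, hk3⟩ := ivt_down f hdown P (J ℓ) hPJℓ (ℓ':ℤ)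
        (by linarith) (by rw [fJℓ]; exact hℓℓ'Z.le)
      exact hJℓ'min k hk1 (by omega) (by omega) hk3
  have hM3 : ∀ j, I ℓ' ≤ j → j ≤ J ℓ' → (ℓ':ℤ) ≤ f j := by
    intro j hj1 hj2
    by_contra hcon
    push_neg at hcon
    rcases le_total j P with hjP | hPj
    · obtain ⟨k, hk1, hk2, hk3⟩ := ivt_up f hup j P hjP (ℓ':ℤ) hcon.le (by linarith)
      have hne : j ≠ I ℓ' := by
        intro h
        rw [h, fIℓ'] at hcon
        exact lt_irrefl _ hcon
      exact hIgr ℓ' k (by omega) hk2 hk3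
    · obtain ⟨k, hk1, hk2, hk3⟩ := ivt_down f hdown P j hPj (ℓ':ℤ) (by linarith) hcon.le
      have hne : j ≠ J ℓ' := by
        intro h
        rw [h, fJℓ'] at hcon
        exact lt_irrefl _ hcon
      exact hJℓ'min k hk1 (by omega) (by omega) hk3
  refine ⟨I ℓ, I ℓ', J ℓ', J ℓ, hM1, le_trans (hIle ℓ') hPJℓ', hM2.le, hJℓL,
    hstI, hstJ.symm, ?_, ?_, ?_, ?_⟩
  · rw [fIℓ, fIℓ', fJℓ, fJℓ']
  · rw [fIℓ]; positivity
  · rw [fIℓ, fIℓ']; exact hℓℓ'Z.le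
  · intro j hj1 hj2
    rw [fIℓ']
    exact hM3 j hj1 hj2

end Aux

/-- Hill-cutting for counter automata: if a returning run of an `n`-state counter
automaton reaches a counter value above `n²` or below `-n²`, then there is a strictly
shorter returning run between the same states whose minimum counter value is at least
the minimum counter value of the original run. -/
theorem counter_automaton_hill_cutting
    {Q : Type*} [Fintype Q] (n : ℕ) (hcard : Fintype.card Q = n)
    (E : Set (Q × ℤ × Q)) (hE : ∀ e ∈ E, e.2.1 ∈ ({-1, 0, 1} : Set ℤ))
    (p p' : Q) (τ : List (Q × ℤ × Q)) (hrun : IsCRun E p p' τ)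
    (hret : counterValue τ τ.length = 0)
    (hbig : (∃ i ≤ τ.length, (n : ℤ) ^ 2 < counterValue τ i) ∨
            (∃ i ≤ τ.length, counterValue τ i < -(n : ℤ) ^ 2)) :
    ∃ τ' : List (Q × ℤ × Q), IsCRun E p p' τ' ∧
      counterValue τ' τ'.length = 0 ∧
      τ'.length < τ.length ∧
      ∀ i ≤ τ'.length, ∃ j ≤ τ.length, counterValue τ j ≤ counterValue τ' i := by
  classical
  have hd : ∀ e ∈ τ, e.2.1 ∈ ({-1, 0, 1} : Set ℤ) := fun e he => hE e (hrun.1 e he)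
  obtain ⟨s, hs, P, hPle, hPbig⟩ : ∃ s : ℤ, (s = 1 ∨ s = -1) ∧
      ∃ P ≤ τ.length, (n:ℤ)^2 < s * counterValue τ P := by
    rcases hbig with ⟨i, hi, h⟩ | ⟨i, hi, h⟩
    · exact ⟨1, Or.inl rfl, i, hi, by linarith⟩
    · exact ⟨-1, Or.inr rfl, i, hi, by linarith⟩
  have hup : ∀ k, s * counterValue τ (k+1) ≤ s * counterValue τ k + 1 := by
    intro k
    obtain ⟨h1, h2⟩ := cv_step τ hd k
    rcases hs with rfl | rfl
    · simp only [one_mul]; omega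
    · simp only [neg_one_mul]; omega
  have hdown : ∀ k, s * counterValue τ k - 1 ≤ s * counterValue τ (k+1) := by
    intro k
    obtain ⟨h1, h2⟩ := cv_step τ hd k
    rcases hs with rfl | rfl
    · simp only [one_mul]; omega
    · simp only [neg_one_mul]; omega
  obtain ⟨a, b, c, d, hab, hbc, hcd, hdL, hstab, hstcd, hfid, hfa0, hfab, hmid⟩ :=
    find_cut hcard (stA p τ) (fun i => s * counterValue τ i) τ.length P hPle
      (by simp [cv_zero]) (by simp [hret]) hup hdown hPbig
  have hid : counterValue τ b - counterValue τ a = counterValue τ c - counterValue τ d := by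
    rcases hs with rfl | rfl
    · simp only [one_mul] at hfid; omega
    · simp only [neg_one_mul] at hfid; omega
  -- first cut: remove (c, d]
  obtain ⟨hrun1, hlen1, hcva1, hcvk1, htake1⟩ := cutOne hrun hcd hdL hstcd
  have hstpres : ∀ i ≤ c, stA p (τ.take c ++ τ.drop d) i = stA p τ i := by
    intro i hi
    exact stA_eq_of_take_eq htake1 i hi (by omega) (by omega)
  -- second cut: remove (a, b]
  have hstab1 : stA p (τ.take c ++ τ.drop d) a = stA p (τ.take c ++ τ.drop d) b := by
    rw [hstpres a (by omega), hstpres b hbc]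
    exact hstab
  obtain ⟨hrun2, hlen2, hcva2, hcvk2, -⟩ := cutOne hrun1 hab.le (by omega) hstab1
  set τ1 := τ.take c ++ τ.drop d with hτ1
  set σ := τ1.take a ++ τ1.drop b with hσ
  have e1 : counterValue τ1 τ1.length = counterValue τ c - counterValue τ d := by
    have h3 := hcvk1 (τ.length - d)
    rw [show d + (τ.length - d) = τ.length from by omega, hret] at h3
    rw [show τ1.length = c + (τ.length - d) from by omega, h3]
    ring
  refine ⟨σ, hrun2, ?_, by omega, ?_⟩
  · -- returning
    rw [hlen2, hcvk2 (τ1.length - b), show b + (τ1.length - b) = τ1.length from by omega,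
      e1, hcva1 a (by omega), hcva1 b hbc]
    linarith
  · -- minimum counter value
    intro i hi
    rcases le_or_gt i a with hia | hia
    · refine ⟨i, by omega, ?_⟩
      rw [hcva2 i hia, hcva1 i (by omega)]
    · obtain ⟨k, rfl⟩ : ∃ k, i = a + k := ⟨i - a, by omega⟩
      rw [hcvk2 k, hcva1 a (by omega), hcva1 b hbc]
      rcases le_or_gt (b + k) c with hbk | hbk
      · rw [hcva1 (b + k) hbk]
        have hm := hmid (b + k) (by omega) hbk
        rcases hs with rfl | rfl
        · refine ⟨0, by omega, ?_⟩
          rw [cv_zero]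
          simp only [one_mul] at hm hfa0
          linarith
        · refine ⟨b + k, by omega, ?_⟩
          simp only [neg_one_mul] at hfab
          linarith
      · obtain ⟨m, hm⟩ : ∃ m, b + k = c + m := ⟨b + k - c, by omega⟩
        rw [hm, hcvk1 m]
        refine ⟨d + m, by omega, ?_⟩
        linarith
end

section
/- Let k, ℓ, m : ℕ, let d : Fin k → ℕ be nondecreasing with 1 ≤ d i for all i, and let e : Fin ℓ → ℕ be strictly increasing with 1 ≤ e j for all j. If ∑ i : Fin k, (1 + 2^(−(d i : ℤ))) = (m : ℚ) + ∑ j : Fin ℓ, 2^(−(e j : ℤ)) as an equality in ℚ, then m ≥ ℓ. -/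
def S2 (n : ℕ) : ℕ := (Nat.digits 2 n).sum

lemma S2_zero : S2 0 = 0 := by simp [S2]

lemma S2_one : S2 1 = 1 := by simp [S2]

lemma S2_two_mul_add (n r : ℕ) (hr : r < 2) : S2 (2 * n + r) = S2 n + r := by
  rcases Nat.eq_zero_or_pos (2 * n + r) with h | h
  · have h1 : n = 0 ∧ r = 0 := by omega
    simp [h1.1, h1.2, S2]
  · unfold S2
    rw [Nat.digits_def' (by norm_num : 1 < 2) h]
    have h1 : (2 * n + r) % 2 = r := by omega
    have h2 : (2 * n + r) / 2 = n := by omega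
    rw [h1, h2, List.sum_cons]
    omega

lemma S2_succ_le (n : ℕ) : S2 (n + 1) ≤ S2 n + 1 := by
  induction n using Nat.strong_induction_on with
  | _ n ih =>
    rcases Nat.even_or_odd n with ⟨q, hq⟩ | ⟨q, hq⟩
    · have h1 : n = 2 * q := by omega
      subst h1
      have := S2_two_mul_add q 1 (by norm_num)
      have h2 := S2_two_mul_add q 0 (by norm_num)
      simp at h2
      omega
    · have h1 : n = 2 * q + 1 := by omega
      subst h1
      have h2 : 2 * q + 1 + 1 = 2 * (q + 1) + 0 := by ring
      rw [h2, S2_two_mul_add _ _ (by norm_num)]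
      have h3 := ih q (by omega)
      have h4 := S2_two_mul_add q 1 (by norm_num)
      omega

lemma S2_add_pow (a n : ℕ) : S2 (n + 2 ^ a) ≤ S2 n + 1 := by
  induction a generalizing n with
  | zero => simpa using S2_succ_le n
  | succ a ih =>
    obtain ⟨q, r, hr, hn⟩ : ∃ q r, r < 2 ∧ n = 2 * q + r := ⟨n / 2, n % 2, by omega, by omega⟩
    subst hn
    have h : 2 * q + r + 2 ^ (a + 1) = 2 * (q + 2 ^ a) + r := by rw [pow_succ]; ring
    rw [h, S2_two_mul_add _ _ hr, S2_two_mul_add _ _ hr]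
    have := ih q
    omega

lemma S2_mul_pow_add (c N : ℕ) : ∀ D, D < 2 ^ N → S2 (c * 2 ^ N + D) = S2 c + S2 D := by
  induction N with
  | zero =>
    intro D hD
    have : D = 0 := by omega
    subst this
    simp [S2_zero]
  | succ N ih =>
    intro D hD
    obtain ⟨q, r, hr, hD'⟩ : ∃ q r, r < 2 ∧ D = 2 * q + r := ⟨D / 2, D % 2, by omega, by omega⟩
    subst hD'
    have hq : q < 2 ^ N := by rw [pow_succ] at hD; omega
    have h : c * 2 ^ (N + 1) + (2 * q + r) = 2 * (c * 2 ^ N + q) + r := by rw [pow_succ]; ring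
    rw [h, S2_two_mul_add _ _ hr, ih q hq, S2_two_mul_add _ _ hr]
    omega

lemma S2_sum_pow_le {α : Type*} (s : Finset α) (f : α → ℕ) :
    S2 (∑ i ∈ s, 2 ^ f i) ≤ s.card := by
  induction s using Finset.cons_induction with
  | empty => simp [S2]
  | cons a s ha ih =>
    rw [Finset.sum_cons, Finset.card_cons, add_comm (2 ^ f a)]
    exact (S2_add_pow _ _).trans (by omega)

lemma sum_range_two_pow (N : ℕ) : ∑ a ∈ Finset.range N, 2 ^ a = 2 ^ N - 1 := by
  induction N with
  | zero => simp
  | succ N ih =>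
    rw [Finset.sum_range_succ, ih, pow_succ]
    have : 1 ≤ 2 ^ N := Nat.one_le_two_pow
    omega

lemma sum_two_pow_lt (t : Finset ℕ) (N : ℕ) (h : ∀ a ∈ t, a < N) :
    ∑ a ∈ t, 2 ^ a < 2 ^ N := by
  have h1 : t ⊆ Finset.range N := fun a ha => Finset.mem_range.mpr (h a ha)
  have h2 : ∑ a ∈ t, 2 ^ a ≤ ∑ a ∈ Finset.range N, 2 ^ a :=
    Finset.sum_le_sum_of_subset h1
  rw [sum_range_two_pow] at h2
  have : 1 ≤ 2 ^ N := Nat.one_le_two_pow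
  omega

lemma S2_sum_distinct (t : Finset ℕ) : S2 (∑ a ∈ t, 2 ^ a) = t.card := by
  induction t using Finset.induction_on_max with
  | empty => simp [S2]
  | insert a s hs ih =>
    have ha : a ∉ s := fun h => lt_irrefl a (hs a h)
    rw [Finset.sum_insert ha, Finset.card_insert_of_notMem ha]
    have hlt : ∑ x ∈ s, 2 ^ x < 2 ^ a := sum_two_pow_lt s a hs
    have := S2_mul_pow_add 1 a (∑ x ∈ s, 2 ^ x) hlt
    rw [one_mul] at this
    rw [this, S2_one, ih]
    omega

/-- Summing-up lemma for the numbers `1 + 2^(-d i)`. -/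

theorem summing_up_10 (k ℓ m : ℕ) (d : Fin k → ℕ) (hd : Monotone d) (hd1 : ∀ i, 1 ≤ d i)
    (e : Fin ℓ → ℕ) (he : StrictMono e) (he1 : ∀ j, 1 ≤ e j)
    (heq : ∑ i : Fin k, ((1 : ℚ) + 2 ^ (-(d i : ℤ))) =
           (m : ℚ) + ∑ j : Fin ℓ, (2 : ℚ) ^ (-(e j : ℤ))) :
    ℓ ≤ m := by
  classical
  set N : ℕ := (Finset.univ.sup d ⊔ Finset.univ.sup e) ⊔ 1 with hN
  have hN1 : 1 ≤ N := le_sup_right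
  have hdN : ∀ i, d i ≤ N := fun i =>
    le_sup_of_le_left (le_sup_of_le_left (Finset.le_sup (Finset.mem_univ i)))
  have heN : ∀ j, e j ≤ N := fun j =>
    le_sup_of_le_left (le_sup_of_le_right (Finset.le_sup (Finset.mem_univ j)))
  -- key cast lemma
  have key : ∀ a : ℕ, a ≤ N → (2 : ℚ) ^ N * (2 : ℚ) ^ (-(a : ℤ)) = ((2 ^ (N - a) : ℕ) : ℚ) := by
    intro a ha
    rw [← zpow_natCast (2 : ℚ) N, ← zpow_add₀ (by norm_num : (2 : ℚ) ≠ 0)]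
    push_cast
    rw [← zpow_natCast (2 : ℚ) (N - a)]
    congr 1
    omega
  -- rearrange heq
  have heq1 : (∑ i : Fin k, (2 : ℚ) ^ (-(d i : ℤ))) =
      ((m : ℚ) - k) + ∑ j : Fin ℓ, (2 : ℚ) ^ (-(e j : ℤ)) := by
    rw [Finset.sum_add_distrib, Finset.sum_const, Finset.card_univ, Fintype.card_fin] at heq
    simp only [nsmul_eq_mul, mul_one] at heq
    push_cast at heq ⊢
    linarith [heq]
  -- multiply by 2^N
  have heq2 : ((∑ i : Fin k, 2 ^ (N - d i) : ℕ) : ℚ) =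
      ((m : ℚ) - k) * 2 ^ N + ((∑ j : Fin ℓ, 2 ^ (N - e j) : ℕ) : ℚ) := by
    have h1 : (2 : ℚ) ^ N * (∑ i : Fin k, (2 : ℚ) ^ (-(d i : ℤ))) =
        (2 : ℚ) ^ N * (((m : ℚ) - k) + ∑ j : Fin ℓ, (2 : ℚ) ^ (-(e j : ℤ))) := by rw [heq1]
    rw [Finset.mul_sum, mul_add, Finset.mul_sum] at h1
    calc ((∑ i : Fin k, 2 ^ (N - d i) : ℕ) : ℚ)
        = ∑ i : Fin k, (2 : ℚ) ^ N * (2 : ℚ) ^ (-(d i : ℤ)) := by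
          push_cast
          exact Finset.sum_congr rfl fun i _ => by
            have := key (d i) (hdN i); push_cast at this; rw [this]
      _ = (2 : ℚ) ^ N * ((m : ℚ) - k) + ∑ j : Fin ℓ, (2 : ℚ) ^ N * (2 : ℚ) ^ (-(e j : ℤ)) := h1
      _ = ((m : ℚ) - k) * 2 ^ N + ((∑ j : Fin ℓ, 2 ^ (N - e j) : ℕ) : ℚ) := by
          rw [mul_comm]
          congr 1
          push_cast
          exact Finset.sum_congr rfl fun j _ => by
            have := key (e j) (heN j); push_cast at this; rw [this.symm]
  -- names
  set L : ℕ := ∑ i : Fin k, 2 ^ (N - d i) with hL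
  set D : ℕ := ∑ j : Fin ℓ, 2 ^ (N - e j) with hD
  -- D as sum over distinct exponents
  have hginj : Function.Injective (fun j : Fin ℓ => N - e j) := by
    intro j1 j2 h
    have h1 := heN j1; have h2 := heN j2
    have : e j1 = e j2 := by simp only at h; omega
    exact he.injective this
  have hDimg : D = ∑ a ∈ Finset.univ.image (fun j : Fin ℓ => N - e j), 2 ^ a := by
    rw [Finset.sum_image (fun x _ y _ h => hginj h)]
  have hDlt : D < 2 ^ N := by
    rw [hDimg]
    apply sum_two_pow_lt
    intro a ha
    obtain ⟨j, _, rfl⟩ := Finset.mem_image.mp ha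
    have := he1 j; have := heN j
    omega
  -- integer equation
  have hZ : (L : ℤ) = ((m : ℤ) - k) * 2 ^ N + (D : ℤ) := by exact_mod_cast heq2
  have hkm : k ≤ m := by
    by_contra hcon
    push_neg at hcon
    have h1 : (m : ℤ) - k ≤ -1 := by
      have : (m : ℤ) < k := by exact_mod_cast hcon
      omega
    have hP : (0 : ℤ) < 2 ^ N := by positivity
    have h2 : ((m : ℤ) - k) * 2 ^ N ≤ -1 * 2 ^ N :=
      mul_le_mul_of_nonneg_right h1 (le_of_lt hP)
    have h3 : (0 : ℤ) ≤ (L : ℤ) := Int.natCast_nonneg L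
    have h4 : (D : ℤ) < 2 ^ N := by exact_mod_cast hDlt
    linarith
  -- natural number equation
  have hNat : L = (m - k) * 2 ^ N + D := by
    have h1 : (L : ℤ) = (((m - k) * 2 ^ N + D : ℕ) : ℤ) := by
      push_cast [Nat.cast_sub hkm]
      linarith [hZ]
    exact_mod_cast h1
  -- digit sums
  have hSL : S2 L ≤ k := by
    have := S2_sum_pow_le (Finset.univ : Finset (Fin k)) (fun i => N - d i)
    simpa using this
  have hSD : S2 D = ℓ := by
    rw [hDimg, S2_sum_distinct, Finset.card_image_of_injective _ hginj]
    simp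
  have hSR : S2 ((m - k) * 2 ^ N + D) = S2 (m - k) + ℓ := by
    rw [S2_mul_pow_add _ _ _ hDlt, hSD]
  rw [hNat, hSR] at hSL
  omega
end

section
/- Let k, ℓ, m : ℕ, let d : Fin k → ℕ be nondecreasing with 1 ≤ d i for all i, and let e : Fin ℓ → ℕ be strictly increasing with 1 ≤ e j for all j. If ∑ i : Fin k, (1 + 2^(−(d i : ℤ))) = (m : ℚ) + ∑ j : Fin ℓ, 2^(−(e j : ℤ)) as an equality in ℚ, then k ≥ ℓ. -/
namespace SU12
def s (n : ℕ) : ℕ := n.bitIndices.length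
@[simp] lemma s_zero : s 0 = 0 := by simp [s]
@[simp] lemma s_one : s 1 = 1 := by simp [s]
lemma s_two_mul (n : ℕ) : s (2 * n) = s n := by simp [s]
lemma s_two_mul_add_one (n : ℕ) : s (2 * n + 1) = s n + 1 := by simp [s]
@[simp] lemma s_two_pow (a : ℕ) : s (2 ^ a) = 1 := by simp [s]

lemma s_add_le_aux (N : ℕ) : ∀ a b : ℕ, a + b ≤ N → s (a + b) ≤ s a + s b := by
  induction N with
  | zero => intro a b h
            have : a = 0 ∧ b = 0 := by omega
            simp [this.1, this.2]
  | succ N ih =>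
    intro a b h
    rcases Nat.eq_zero_or_pos a with rfl | ha
    · simp
    rcases Nat.eq_zero_or_pos b with rfl | hb
    · simp
    obtain ⟨a', ha'⟩ : ∃ a', a = 2 * a' + a % 2 := ⟨a / 2, by omega⟩
    obtain ⟨b', hb'⟩ : ∃ b', b = 2 * b' + b % 2 := ⟨b / 2, by omega⟩
    rcases Nat.even_or_odd a with hae | hao
    · rcases Nat.even_or_odd b with hbe | hbo
      · have h2 : a % 2 = 0 := Nat.even_iff.mp hae
        have h3 : b % 2 = 0 := Nat.even_iff.mp hbe
        have : a + b = 2 * (a' + b') := by omega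
        rw [this, ha', hb', h2, h3, add_zero, add_zero, s_two_mul, s_two_mul, s_two_mul]
        exact ih a' b' (by omega)
      · have h2 : a % 2 = 0 := Nat.even_iff.mp hae
        have h3 : b % 2 = 1 := Nat.odd_iff.mp hbo
        have : a + b = 2 * (a' + b') + 1 := by omega
        rw [this, ha', hb', h2, h3, add_zero, s_two_mul_add_one, s_two_mul, s_two_mul_add_one]
        have := ih a' b' (by omega)
        omega
    · rcases Nat.even_or_odd b with hbe | hbo
      · have h2 : a % 2 = 1 := Nat.odd_iff.mp hao
        have h3 : b % 2 = 0 := Nat.even_iff.mp hbe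
        have : a + b = 2 * (a' + b') + 1 := by omega
        rw [this, ha', hb', h2, h3, add_zero, s_two_mul_add_one, s_two_mul, s_two_mul_add_one]
        have := ih a' b' (by omega)
        omega
      · have h2 : a % 2 = 1 := Nat.odd_iff.mp hao
        have h3 : b % 2 = 1 := Nat.odd_iff.mp hbo
        have hab : a + b = 2 * (a' + b' + 1) := by omega
        rw [hab, ha', hb', h2, h3, s_two_mul, s_two_mul_add_one, s_two_mul_add_one]
        have h4 := ih (a' + b') 1 (by omega)
        have h5 := ih a' b' (by omega)
        simp at h4
        omega

lemma s_add_le (a b : ℕ) : s (a + b) ≤ s a + s b := s_add_le_aux (a + b) a b le_rfl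

lemma s_sum_le {α : Type*} (u : Finset α) (f : α → ℕ) :
    s (∑ i ∈ u, f i) ≤ ∑ i ∈ u, s (f i) := by
  induction u using Finset.cons_induction with
  | empty => simp
  | cons a u ha ih =>
    rw [Finset.sum_cons, Finset.sum_cons]
    exact le_trans (s_add_le _ _) (by omega)

lemma s_list (L : List ℕ) (hL : L.Pairwise (· < ·)) :
    s ((L.map (2 ^ ·)).sum) = L.length := by
  rw [s, Nat.bitIndices_twoPowsum hL.sortedLT]

lemma sum_range_two_pow_lt (N : ℕ) : ∑ i ∈ Finset.range N, 2 ^ i < 2 ^ N := by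
  induction N with
  | zero => simp
  | succ N ih => rw [Finset.sum_range_succ, pow_succ]; omega

end SU12

/-- Summing-up lemma for the numbers `1 + 2^(-d i)`. -/
theorem summing_up_12 (k ℓ m : ℕ) (d : Fin k → ℕ) (hd : Monotone d) (hd1 : ∀ i, 1 ≤ d i)
    (e : Fin ℓ → ℕ) (he : StrictMono e) (he1 : ∀ j, 1 ≤ e j)
    (heq : ∑ i : Fin k, ((1 : ℚ) + 2 ^ (-(d i : ℤ))) =
           (m : ℚ) + ∑ j : Fin ℓ, (2 : ℚ) ^ (-(e j : ℤ))) :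
    ℓ ≤ k := by
  classical
  set N : ℕ := (Finset.univ.sup d) + (Finset.univ.sup e) + 1 with hNdef
  have hdN : ∀ i, d i ≤ N := fun i => by
    have := Finset.le_sup (f := d) (Finset.mem_univ i); omega
  have heN : ∀ j, e j ≤ N := fun j => by
    have := Finset.le_sup (f := e) (Finset.mem_univ j); omega
  have hcast : ∀ a : ℕ, a ≤ N → (2 : ℚ) ^ (N - a) = 2 ^ (N : ℤ) * 2 ^ (-(a : ℤ)) := by
    intro a haN
    rw [← zpow_natCast (2 : ℚ) (N - a), Nat.cast_sub haN, sub_eq_add_neg,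
      zpow_add₀ (by norm_num : (2 : ℚ) ≠ 0)]
  have h0 : (k : ℚ) + ∑ i : Fin k, (2:ℚ) ^ (-(d i : ℤ))
      = (m : ℚ) + ∑ j : Fin ℓ, (2:ℚ) ^ (-(e j : ℤ)) := by
    rw [Finset.sum_add_distrib, Finset.sum_const, Finset.card_univ, Fintype.card_fin,
      nsmul_eq_mul, mul_one] at heq
    exact heq
  have key : ((k * 2 ^ N + ∑ i : Fin k, 2 ^ (N - d i) : ℕ) : ℚ)
      = ((m * 2 ^ N + ∑ j : Fin ℓ, 2 ^ (N - e j) : ℕ) : ℚ) := by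
    push_cast
    rw [Finset.sum_congr rfl (fun i _ => hcast (d i) (hdN i)),
      Finset.sum_congr rfl (fun j _ => hcast (e j) (heN j)),
      show ((2 : ℚ) ^ N) = (2 : ℚ) ^ (N : ℤ) from (zpow_natCast 2 N).symm]
    rw [← Finset.mul_sum, ← Finset.mul_sum]
    linear_combination (2 : ℚ) ^ (N : ℤ) * h0
  have E : k * 2 ^ N + ∑ i : Fin k, 2 ^ (N - d i)
      = m * 2 ^ N + ∑ j : Fin ℓ, 2 ^ (N - e j) := Nat.cast_inj.mp key
  -- the sorted list of fractional exponents
  set f : Fin ℓ → ℕ := fun j => N - e j.rev with hf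
  have hfmono : StrictMono f := by
    intro j j' hjj
    have h1 : j'.rev < j.rev := Fin.rev_lt_rev.mpr hjj
    have h2 : e j'.rev < e j.rev := he h1
    have := heN j.rev
    simp only [hf]
    omega
  set L1 : List ℕ := List.ofFn f with hL1
  have hL1sorted : L1.Pairwise (· < ·) := (List.sortedLT_ofFn_iff.mpr hfmono).pairwise
  have hL1sum : (L1.map (2 ^ ·)).sum = ∑ j : Fin ℓ, 2 ^ (N - e j) := by
    rw [hL1, List.map_ofFn, List.sum_ofFn]
    exact Fintype.sum_bijective Fin.rev Fin.rev_involutive.bijective _ _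
      (fun j => by simp [hf, Fin.rev_rev])
  have hB : ∑ j : Fin ℓ, 2 ^ (N - e j) < 2 ^ N := by
    rw [← hL1sum, ← List.sum_toFinset _ hL1sorted.nodup]
    calc (L1.toFinset.sum (2 ^ ·)) ≤ ∑ i ∈ Finset.range N, 2 ^ i := by
          apply Finset.sum_le_sum_of_subset
          intro x hx
          rw [List.mem_toFinset, hL1, List.mem_ofFn] at hx
          obtain ⟨j, rfl⟩ := hx
          have := heN j.rev
          have := he1 j.rev
          simp only [hf, Finset.mem_range]
          omega
      _ < 2 ^ N := SU12.sum_range_two_pow_lt N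
  have hkm : k ≤ m := by
    by_contra hkm
    push_neg at hkm
    have h1 : m * 2 ^ N + 2 ^ N ≤ k * 2 ^ N := by
      calc m * 2 ^ N + 2 ^ N = (m + 1) * 2 ^ N := by ring
        _ ≤ k * 2 ^ N := Nat.mul_le_mul_right _ (by omega)
    have h2 : k * 2 ^ N ≤ m * 2 ^ N + ∑ j : Fin ℓ, 2 ^ (N - e j) :=
      le_trans (Nat.le_add_right _ _) (le_of_eq E)
    have h3 := le_trans h1 h2
    have h4 : (2 : ℕ) ^ N ≤ ∑ j : Fin ℓ, 2 ^ (N - e j) := by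
      exact (add_le_add_iff_left _).mp h3
    omega
  have E' : ∑ i : Fin k, 2 ^ (N - d i)
      = (m - k) * 2 ^ N + ∑ j : Fin ℓ, 2 ^ (N - e j) := by
    have hm : m * 2 ^ N = k * 2 ^ N + (m - k) * 2 ^ N := by
      rw [← Nat.add_mul]
      congr 1
      omega
    rw [hm, add_assoc] at E
    exact Nat.add_left_cancel E
  have hsA : SU12.s (∑ i : Fin k, 2 ^ (N - d i)) ≤ k :=
    le_trans (SU12.s_sum_le _ _) (by simp)
  set L2 : List ℕ := L1 ++ (Nat.bitIndices (m - k)).map (· + N) with hL2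
  have hL2sorted : L2.Pairwise (· < ·) := by
    rw [hL2, List.pairwise_append]
    refine ⟨hL1sorted, Nat.bitIndices_sorted.pairwise.map _ (fun h => by omega), ?_⟩
    intro x hx y hy
    rw [hL1, List.mem_ofFn] at hx
    obtain ⟨j, rfl⟩ := hx
    rw [List.mem_map] at hy
    obtain ⟨i, _, rfl⟩ := hy
    have := heN j.rev
    have := he1 j.rev
    simp only [hf]
    omega
  have hL2sum : (L2.map (2 ^ ·)).sum = (m - k) * 2 ^ N + ∑ j : Fin ℓ, 2 ^ (N - e j) := by
    rw [hL2, List.map_append, List.sum_append, hL1sum, ← Nat.bitIndices_two_pow_mul,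
      Nat.twoPowSum_bitIndices]
    ring
  have hsB : ℓ ≤ SU12.s ((m - k) * 2 ^ N + ∑ j : Fin ℓ, 2 ^ (N - e j)) := by
    rw [← hL2sum, SU12.s_list L2 hL2sorted, hL2, List.length_append, hL1, List.length_ofFn]
    omega
  rw [← E'] at hsB
  exact le_trans hsB hsA
end

section
/- Let n : ℕ and let S be the additive submonoid of ℚ generated by {x : ℚ | ∃ i : ℕ, 1 ≤ i ∧ x = 1 + 2^(−(i:ℤ))}. Then (n : ℚ) + ∑_{i=1}^{n} 2^(−(i:ℤ)) ∈ S, and for every m : ℕ with (m : ℚ) + ∑_{i=1}^{n} 2^(−(i:ℤ)) ∈ S one has m ≥ n; that is, n is the least natural number m such that (m : ℚ) + ∑_{i=1}^{n} 2^(−(i:ℤ)) ∈ S. -/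
/-- The additive submonoid of `ℚ` generated by the numbers `1 + 2^(-i)`, `i ≥ 1`. -/
def genSubmonoid : AddSubmonoid ℚ :=
  AddSubmonoid.closure {x : ℚ | ∃ i : ℕ, 1 ≤ i ∧ x = 1 + 2 ^ (-(i : ℤ))}

private def dy (i : ℕ) : ℚ := 2 ^ (-(i : ℤ))

private lemma f_pos (i : ℕ) : (0 : ℚ) < dy i := zpow_pos (by norm_num) _

private lemma f_le_half {i : ℕ} (hi : 1 ≤ i) : dy i ≤ 1 / 2 := by
  unfold dy
  rw [zpow_neg, zpow_natCast]
  rw [inv_le_comm₀ (by positivity) (by norm_num)]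
  calc (1 / 2 : ℚ)⁻¹ = 2 ^ 1 := by norm_num
  _ ≤ 2 ^ i := pow_le_pow_right₀ (by norm_num) hi

private lemma dy_succ (n : ℕ) : dy (n + 1) = dy n * 2⁻¹ := by
  unfold dy
  push_cast
  rw [neg_add, zpow_add₀ (by norm_num : (2:ℚ) ≠ 0)]
  norm_num

private lemma geom_sum (n : ℕ) : ∑ i ∈ Finset.Icc 1 n, dy i = 1 - dy n := by
  induction n with
  | zero => simp [dy]
  | succ n ih =>
    rw [Finset.sum_Icc_succ_top (by omega), ih, dy_succ]
    have h0 : dy n ≠ 0 := (f_pos n).ne'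
    field_simp
    ring

/-- Key counting lemma. -/
private lemma key : ∀ n : ℕ, 1 ≤ n → ∀ p : ℕ, ∀ M : Multiset ℕ, (∀ i ∈ M, 1 ≤ i) →
    ((M.map dy).sum = p + 1 - dy n) → n + 2 * p ≤ Multiset.card M := by
  intro n hn
  induction n, hn using Nat.le_induction with
  | base =>
    intro p M hM hsum
    have hle : (M.map dy).sum ≤ Multiset.card (M.map dy) • (1/2 : ℚ) := by
      apply Multiset.sum_le_card_nsmul
      intro x hx
      obtain ⟨i, hi, rfl⟩ := Multiset.mem_map.1 hx
      exact f_le_half (hM i hi)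
    rw [Multiset.card_map, nsmul_eq_mul, hsum] at hle
    have h2 : dy 1 = 1/2 := by norm_num [dy]
    rw [h2] at hle
    have : (1 + 2 * p : ℚ) ≤ Multiset.card M := by linarith
    exact_mod_cast this
  | succ n hn ih =>
    intro p M hM hsum
    classical
    set M' := M.filter (fun i => 2 ≤ i) with hM'def
    set M1 := M.filter (fun i => ¬ 2 ≤ i) with hM1def
    have hsplit : M' + M1 = M := Multiset.filter_add_not _ M
    set c := Multiset.card M1 with hc
    have hM1rep : M1 = Multiset.replicate c 1 := by
      apply Multiset.eq_replicate_card.2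
      intro b hb
      rw [hM1def, Multiset.mem_filter] at hb
      have h1 : 1 ≤ b := hM b hb.1
      omega
    have hM1sum : ((M1.map dy).sum) = c * (1/2) := by
      rw [hM1rep, Multiset.map_replicate, Multiset.sum_replicate, nsmul_eq_mul]
      norm_num [dy]
    set s' := ((M'.map dy).sum) with hs'
    have hsum' : s' + c * (1/2) = p + 1 - dy n * 2⁻¹ := by
      rw [← dy_succ, ← hsum, ← hsplit, Multiset.map_add, Multiset.sum_add, hM1sum]
    set M'' := M'.map (fun i => i - 1) with hM''
    have hM''elts : ∀ i ∈ M'', 1 ≤ i := by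
      intro i hi
      obtain ⟨j, hj, rfl⟩ := Multiset.mem_map.1 hi
      rw [hM'def, Multiset.mem_filter] at hj
      omega
    have hM''sum : ((M''.map dy).sum) = 2 * s' := by
      rw [hM'', Multiset.map_map, hs', ← Multiset.sum_map_mul_left]
      apply congrArg
      apply Multiset.map_congr rfl
      intro j hj
      rw [hM'def, Multiset.mem_filter] at hj
      have h2 : 2 ≤ j := hj.2
      simp only [Function.comp_apply]
      obtain ⟨j', rfl⟩ : ∃ j', j = j' + 1 := ⟨j - 1, by omega⟩
      rw [Nat.add_sub_cancel, dy_succ]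
      ring
    have hs'nonneg : 0 ≤ s' := by
      apply Multiset.sum_nonneg
      intro x hx
      obtain ⟨i, hi, rfl⟩ := Multiset.mem_map.1 hx
      exact (f_pos i).le
    have hpown : (0:ℚ) < dy n := f_pos n
    have hpown1 : dy n ≤ 1/2 := f_le_half hn
    have hcle : c ≤ 2 * p + 1 := by
      by_contra hcon
      have : (2 * p + 2 : ℚ) ≤ c := by
        have : 2 * p + 2 ≤ c := by omega
        exact_mod_cast this
      nlinarith
    set p' := 2 * p + 1 - c with hp'
    have hcast : ((p' : ℕ) : ℚ) = 2 * p + 1 - c := by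
      rw [hp']; push_cast [hcle]; ring
    have hM''eq : ((M''.map dy).sum) = p' + 1 - dy n := by
      rw [hM''sum, hcast]
      linarith
    have hkey := ih p' M'' hM''elts hM''eq
    rw [hM'', Multiset.card_map] at hkey
    have hcards : Multiset.card M' + c = Multiset.card M := by
      rw [← hsplit, Multiset.card_add]
    omega

private lemma mem_rep {x : ℚ} (hx : x ∈ genSubmonoid) :
    ∃ M : Multiset ℕ, (∀ i ∈ M, 1 ≤ i) ∧
      x = Multiset.card M + (M.map dy).sum := by
  induction hx using AddSubmonoid.closure_induction with
  | mem x hx =>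
    obtain ⟨i, hi, rfl⟩ := hx
    exact ⟨{i}, by simpa using hi, by simp [dy]⟩
  | zero => exact ⟨0, by simp, by simp⟩
  | add x y hx hy ihx ihy =>
    obtain ⟨M, hM, hMx⟩ := ihx
    obtain ⟨N, hN, hNy⟩ := ihy
    refine ⟨M + N, ?_, ?_⟩
    · intro i hi
      rcases Multiset.mem_add.1 hi with h | h
      · exact hM i h
      · exact hN i h
    · rw [hMx, hNy, Multiset.card_add, Multiset.map_add, Multiset.sum_add]
      push_cast
      ring

/-- `n` is the least natural number `m` such that `m + 2⁻¹ + ⋯ + 2⁻ⁿ` belongs to the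
submonoid generated by the numbers `1 + 2^(-i)`, `i ≥ 1`. -/
theorem smallest_integer (n : ℕ) :
    ((n : ℚ) + ∑ i ∈ Finset.Icc 1 n, (2 : ℚ) ^ (-(i : ℤ)) ∈ genSubmonoid) ∧
    (∀ m : ℕ, (m : ℚ) + ∑ i ∈ Finset.Icc 1 n, (2 : ℚ) ^ (-(i : ℤ)) ∈ genSubmonoid →
      n ≤ m) := by
  have hsum_eq : ∑ i ∈ Finset.Icc 1 n, (2 : ℚ) ^ (-(i : ℤ)) = 1 - dy n := by
    rw [← geom_sum]
    exact Finset.sum_congr rfl (fun i _ => rfl)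
  constructor
  · have hmem : ∑ i ∈ Finset.Icc 1 n, ((1 : ℚ) + 2 ^ (-(i : ℤ))) ∈ genSubmonoid := by
      apply AddSubmonoid.sum_mem
      intro i hi
      exact AddSubmonoid.subset_closure ⟨i, (Finset.mem_Icc.1 hi).1, rfl⟩
    have heq : ∑ i ∈ Finset.Icc 1 n, ((1 : ℚ) + 2 ^ (-(i : ℤ)))
        = (n : ℚ) + ∑ i ∈ Finset.Icc 1 n, (2 : ℚ) ^ (-(i : ℤ)) := by
      rw [Finset.sum_add_distrib, Finset.sum_const, Nat.card_Icc]
      simp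
    rwa [heq] at hmem
  · intro m hm
    rcases Nat.eq_zero_or_pos n with rfl | hn
    · exact Nat.zero_le m
    rw [hsum_eq] at hm
    obtain ⟨M, hM, hMeq⟩ := mem_rep hm
    set k := Multiset.card M with hk
    set t := (M.map dy).sum with ht
    have htpos : 0 ≤ t := by
      apply Multiset.sum_nonneg
      intro x hx
      obtain ⟨i, hi, rfl⟩ := Multiset.mem_map.1 hx
      exact (f_pos i).le
    have hpown : (0:ℚ) < dy n := f_pos n
    have hpown1 : dy n ≤ 1/2 := f_le_half hn
    have hkle : k ≤ m := by
      by_contra hcon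
      have : (m + 1 : ℚ) ≤ k := by
        have : m + 1 ≤ k := by omega
        exact_mod_cast this
      nlinarith
    set p := m - k with hp
    have hcast : ((p : ℕ) : ℚ) = m - k := by rw [hp]; push_cast [hkle]; ring
    have hteq : t = p + 1 - dy n := by
      rw [hcast]; linarith
    have := key n hn p M hM hteq
    omega
end
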